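/- arXiv:1012.2071 — 5 statements merged into one kernel-verified Lean document; each statement's English description precedes it below -/
import Mathlib

section
/- Let n be a positive integer and Θ a real n×1 matrix (a column of n real numbers). Then β_×(Θ) ≥ β(Θ) ≥ (n·β_×(Θ) − 1) / (n(n−1)·β_×(Θ) + n² − n + 1), where if β_×(Θ) = +∞ the lower bound is interpreted as 1/(n(n−1)) when n ≥ 2 and as +∞ when n = 1. -/
open MeasureTheory Filter Matrix

noncomputable section

/-- Geometric mean of the absolute values of the coordinates: Π(z). -/
def Pigeo {k : ℕ} (z : Fin k → ℝ) : ℝ := (∏ i, |z i|) ^ ((1:ℝ)/k)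

/-- Geometric mean of `max 1 |z i|`: Π'(z). -/
def Pigeo' {k : ℕ} (z : Fin k → ℝ) : ℝ := (∏ i, max 1 |z i|) ^ ((1:ℝ)/k)

/-- Coordinatewise cast of an integer vector to a real vector. -/
def ivec {k : ℕ} (x : Fin k → ℤ) : Fin k → ℝ := fun i => (x i : ℝ)

/-- The constant Δ_d = (2^{d-1}√d)⁻¹ · vol_{d-1}{x ∈ [-1,1]^d : x₁+⋯+x_d = 0}. -/
def Delta (d : ℕ) : ℝ :=
  ((2:ℝ) ^ (d - 1) * Real.sqrt d)⁻¹ *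
    (μH[(d:ℝ) - 1] {x : EuclideanSpace ℝ (Fin d) | (∀ i, |x i| ≤ 1) ∧ ∑ i, x i = 0}).toReal

/-- There are infinitely many pairs x ∈ ℤ^m \ {0}, y ∈ ℤ^n with Π(Θx − y) ≤ Π'(x)^{−γ}. -/
def MultApprox (n m : ℕ) (Θ : Matrix (Fin n) (Fin m) ℝ) (γ : ℝ) : Prop :=
  {p : (Fin m → ℤ) × (Fin n → ℤ) | p.1 ≠ 0 ∧
    Pigeo (Θ.mulVec (ivec p.1) - ivec p.2) ≤ Pigeo' (ivec p.1) ^ (-γ)}.Infinite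

/-- The multiplicative Diophantine exponent β_×(Θ), as an extended real number. -/
def mbeta (n m : ℕ) (Θ : Matrix (Fin n) (Fin m) ℝ) : EReal :=
  sSup {x : EReal | ∃ γ : ℝ, x = (γ : EReal) ∧ MultApprox n m Θ γ}

/-- There are infinitely many pairs x ∈ ℤ^m, y ∈ ℤ^n with |Θx − y|_∞ ≤ |x|_∞^{−γ}. -/
def OrdApprox (n m : ℕ) (Θ : Matrix (Fin n) (Fin m) ℝ) (γ : ℝ) : Prop :=
  {p : (Fin m → ℤ) × (Fin n → ℤ) |
    ‖Θ.mulVec (ivec p.1) - ivec p.2‖ ≤ ‖ivec p.1‖ ^ (-γ)}.Infinite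

/-- The ordinary Diophantine exponent β(Θ), as an extended real number. -/
def obeta (n m : ℕ) (Θ : Matrix (Fin n) (Fin m) ℝ) : EReal :=
  sSup {x : EReal | ∃ γ : ℝ, x = (γ : EReal) ∧ OrdApprox n m Θ γ}

def sv (t : ℤ) : Fin 1 → ℤ := fun _ => t

lemma sv_ne_zero {t : ℤ} (ht : t ≠ 0) : sv t ≠ 0 := by
  intro h
  exact ht (congrFun h 0)

lemma mulVec_sv {n : ℕ} (Θ : Matrix (Fin n) (Fin 1) ℝ) (x : Fin 1 → ℤ) (i : Fin n) :
    Θ.mulVec (ivec x) i = Θ i 0 * (x 0 : ℝ) := by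
  simp [Matrix.mulVec, dotProduct, ivec, Fin.sum_univ_one]

lemma norm_fin_one (v : Fin 1 → ℝ) : ‖v‖ = |v 0| := by
  have hv : v = fun _ => v 0 := funext fun i => by rw [Subsingleton.elim i 0]
  rw [hv, pi_norm_const]
  exact Real.norm_eq_abs _

lemma pigeo_nonneg {n : ℕ} (z : Fin n → ℝ) : 0 ≤ Pigeo z :=
  Real.rpow_nonneg (Finset.prod_nonneg fun i _ => abs_nonneg _) _

lemma pigeo'_one_le {n : ℕ} (z : Fin n → ℝ) : 1 ≤ Pigeo' z := by
  apply Real.one_le_rpow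
  · calc (1:ℝ) = ∏ _i : Fin n, 1 := by simp
      _ ≤ ∏ i, max 1 |z i| :=
        Finset.prod_le_prod (fun i _ => zero_le_one) (fun i _ => le_max_left _ _)
  · positivity

lemma pigeo'_pos {n : ℕ} (z : Fin n → ℝ) : 0 < Pigeo' z :=
  lt_of_lt_of_le one_pos (pigeo'_one_le z)

lemma abs_int_one_le {t : ℤ} (ht : t ≠ 0) : (1:ℝ) ≤ |(t:ℝ)| := by
  have : (1:ℤ) ≤ |t| := Int.one_le_abs ht
  calc (1:ℝ) ≤ ((|t| : ℤ) : ℝ) := by exact_mod_cast this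
  _ = |(t:ℝ)| := by push_cast; ring

lemma pigeo'_sv {x : Fin 1 → ℤ} (hx : x ≠ 0) : Pigeo' (ivec x) = |(x 0 : ℝ)| := by
  have hx0 : x 0 ≠ 0 := fun h => hx (funext fun i => by rw [Subsingleton.elim i 0]; exact h)
  have h1 : (1:ℝ) ≤ |(x 0 : ℝ)| := abs_int_one_le hx0
  unfold Pigeo'
  rw [Fin.prod_univ_one]
  show (max 1 |ivec x 0|) ^ ((1:ℝ)/((1:ℕ):ℝ)) = _
  simp only [ivec]
  rw [max_eq_right h1]
  norm_num

lemma pigeo_fin_one (z : Fin 1 → ℝ) : Pigeo z = |z 0| := by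
  unfold Pigeo
  rw [Fin.prod_univ_one]
  show |z 0| ^ ((1:ℝ)/((1:ℕ):ℝ)) = _
  norm_num

lemma pigeo_le_norm {n : ℕ} (hn : 0 < n) (z : Fin n → ℝ) : Pigeo z ≤ ‖z‖ := by
  have h1 : ∏ i, |z i| ≤ ‖z‖ ^ n := by
    calc ∏ i, |z i| ≤ ∏ _i : Fin n, ‖z‖ := by
          apply Finset.prod_le_prod (fun i _ => abs_nonneg _)
          intro i _
          rw [← Real.norm_eq_abs]
          exact norm_le_pi_norm z i
      _ = ‖z‖ ^ n := by rw [Finset.prod_const, Finset.card_univ, Fintype.card_fin]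
  have hnz : (0:ℝ) ≤ ‖z‖ := norm_nonneg z
  calc Pigeo z ≤ (‖z‖ ^ n) ^ ((1:ℝ)/n) := by
        apply Real.rpow_le_rpow (Finset.prod_nonneg fun i _ => abs_nonneg _) h1 (by positivity)
    _ = ‖z‖ := by
        rw [← Real.rpow_natCast ‖z‖ n, ← Real.rpow_mul hnz]
        rw [mul_one_div, div_self (by exact_mod_cast hn.ne' : (n:ℝ) ≠ 0), Real.rpow_one]

lemma prod_le_of_pigeo {n : ℕ} {z : Fin n → ℝ} {B : ℝ} (hn : 0 < n) (hB : 0 ≤ B)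
    (h : Pigeo z ≤ B) : ∏ i, |z i| ≤ B ^ n := by
  have h2 : (Pigeo z) ^ n ≤ B ^ n := pow_le_pow_left₀ (pigeo_nonneg z) h n
  calc ∏ i, |z i| = (Pigeo z) ^ n := by
        unfold Pigeo
        rw [← Real.rpow_natCast ((∏ i, |z i|) ^ ((1:ℝ)/n)) n,
          ← Real.rpow_mul (Finset.prod_nonneg fun i _ => abs_nonneg _)]
        rw [one_div_mul_cancel (by exact_mod_cast hn.ne' : (n:ℝ) ≠ 0), Real.rpow_one]
    _ ≤ B ^ n := h2

variable {n : ℕ} {Θ : Matrix (Fin n) (Fin 1) ℝ}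

lemma le_obeta {γ : ℝ} (h : OrdApprox n 1 Θ γ) : (γ:EReal) ≤ obeta n 1 Θ :=
  le_sSup ⟨γ, rfl, h⟩

lemma le_mbeta {γ : ℝ} (h : MultApprox n 1 Θ γ) : (γ:EReal) ≤ mbeta n 1 Θ :=
  le_sSup ⟨γ, rfl, h⟩

lemma multApprox_mono {γ γ' : ℝ} (h : γ ≤ γ') (H : MultApprox n 1 Θ γ') :
    MultApprox n 1 Θ γ := by
  apply H.mono
  rintro p ⟨hp1, hp2⟩
  refine ⟨hp1, hp2.trans ?_⟩
  exact Real.rpow_le_rpow_of_exponent_le (pigeo'_one_le _) (neg_le_neg h)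

lemma multApprox_of_coe_lt {γ : ℝ} (h : (γ:EReal) < mbeta n 1 Θ) : MultApprox n 1 Θ γ := by
  obtain ⟨x, ⟨γ', rfl, H⟩, hlt⟩ := lt_sSup_iff.1 h
  exact multApprox_mono (le_of_lt (by exact_mod_cast hlt)) H

lemma ereal_le_of_forall_lt {c : ℝ} {x : EReal} (h : ∀ r : ℝ, r < c → (r:EReal) ≤ x) :
    (c:EReal) ≤ x := by
  by_contra hc
  push_neg at hc
  obtain ⟨r, hxr, hrc⟩ := EReal.exists_between_coe_real hc
  exact absurd (h r (by exact_mod_cast hrc)) (not_le.2 hxr)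

lemma obeta_eq_top (h : ∀ γ : ℝ, OrdApprox n 1 Θ γ) : obeta n 1 Θ = ⊤ := by
  by_contra hne
  obtain ⟨r, hxr, -⟩ := EReal.exists_between_coe_real (lt_top_iff_ne_top.2 hne)
  exact absurd (le_obeta (h r)) (not_le.2 hxr)

lemma mbeta_eq_top (h : ∀ γ : ℝ, MultApprox n 1 Θ γ) : mbeta n 1 Θ = ⊤ := by
  by_contra hne
  obtain ⟨r, hxr, -⟩ := EReal.exists_between_coe_real (lt_top_iff_ne_top.2 hne)
  exact absurd (le_mbeta (h r)) (not_le.2 hxr)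

/-- the round-off pairs used for trivial exponents -/
def rpair (Θ : Matrix (Fin n) (Fin 1) ℝ) (m : ℕ) : (Fin 1 → ℤ) × (Fin n → ℤ) :=
  (sv ((m:ℤ)+1), fun i => round (Θ i 0 * ((m:ℤ)+1)))

lemma rpair_injective : Function.Injective (rpair Θ) := by
  intro a b hab
  have h1 : ((a:ℤ)+1) = ((b:ℤ)+1) := congrFun (congrArg Prod.fst hab) 0
  omega

lemma rpair_fst_ne_zero (m : ℕ) : (rpair Θ m).1 ≠ 0 :=
  sv_ne_zero (t := (m:ℤ)+1) (by omega)

lemma rpair_coord (m : ℕ) (i : Fin n) :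
    |(Θ.mulVec (ivec (rpair Θ m).1) - ivec (rpair Θ m).2) i| ≤ 1/2 := by
  have : (Θ.mulVec (ivec (rpair Θ m).1) - ivec (rpair Θ m).2) i
      = Θ i 0 * (((m:ℤ)+1 : ℤ):ℝ) - round (Θ i 0 * (((m:ℤ)+1 : ℤ):ℝ)) := by
    rw [Pi.sub_apply, mulVec_sv]
    simp [rpair, ivec, sv]
  rw [this]
  exact abs_sub_round _

lemma ordApprox_of_nonpos {γ : ℝ} (hγ : γ ≤ 0) : OrdApprox n 1 Θ γ := by
  apply Set.infinite_of_injective_forall_mem (f := rpair Θ) rpair_injective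
  intro m
  show ‖_‖ ≤ _
  have hb : (1:ℝ) ≤ ‖ivec (rpair Θ m).1‖ ^ (-γ) := by
    apply Real.one_le_rpow _ (by linarith)
    rw [norm_fin_one]
    exact abs_int_one_le (show ((m:ℤ)+1) ≠ 0 by omega)
  refine le_trans ?_ hb
  apply (pi_norm_le_iff_of_nonneg zero_le_one).2
  intro i
  rw [Real.norm_eq_abs]
  exact le_trans (rpair_coord m i) (by norm_num)

lemma multApprox_of_nonpos (hn : 0 < n) {γ : ℝ} (hγ : γ ≤ 0) : MultApprox n 1 Θ γ := by
  apply Set.infinite_of_injective_forall_mem (f := rpair Θ) rpair_injective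
  intro m
  refine ⟨rpair_fst_ne_zero m, ?_⟩
  have hb : (1:ℝ) ≤ Pigeo' (ivec (rpair Θ m).1) ^ (-γ) :=
    Real.one_le_rpow (pigeo'_one_le _) (by linarith)
  refine le_trans ?_ hb
  apply Real.rpow_le_one (Finset.prod_nonneg fun i _ => abs_nonneg _) _ (by positivity)
  apply Finset.prod_le_one (fun i _ => abs_nonneg _)
  intro i _
  exact le_trans (rpair_coord m i) (by norm_num)

lemma mbeta_nonneg (hn : 0 < n) : (0:EReal) ≤ mbeta n 1 Θ := by
  have := le_mbeta (Θ := Θ) (multApprox_of_nonpos hn (le_refl (0:ℝ)))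
  exact_mod_cast this

lemma obeta_nonneg : (0:EReal) ≤ obeta n 1 Θ := by
  have := le_obeta (Θ := Θ) (ordApprox_of_nonpos (le_refl (0:ℝ)))
  exact_mod_cast this

lemma ord_to_mult (hn : 0 < n) {γ : ℝ} (H : OrdApprox n 1 Θ γ) : MultApprox n 1 Θ γ := by
  classical
  set K : Set ((Fin 1 → ℤ) × (Fin n → ℤ)) :=
    {p | p.1 = 0 ∧ ∀ i, |p.2 i| ≤ 1} with hK
  have hKfin : K.Finite := by
    apply Set.Finite.subset (Set.Finite.prod (Set.finite_singleton (0 : Fin 1 → ℤ))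
      (Set.Finite.pi fun i : Fin n => Set.finite_Icc (-1:ℤ) 1))
    rintro p ⟨h1, h2⟩
    exact ⟨h1, fun i _ => abs_le.1 (h2 i)⟩
  apply Set.Infinite.mono _ (H.diff hKfin)
  rintro p ⟨hp, hpK⟩
  have hp1 : p.1 ≠ 0 := by
    intro h0
    apply hpK
    have hb : ‖ivec p.1‖ ^ (-γ) ≤ 1 := by
      rw [h0]
      have : ‖ivec (0 : Fin 1 → ℤ)‖ = 0 := by
        rw [norm_fin_one]; simp [ivec]
      rw [this]
      rcases eq_or_ne γ 0 with h | h
      · simp [h]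
      · rw [Real.zero_rpow (by simpa using h)]; norm_num
    refine ⟨h0, fun i => ?_⟩
    have hc : |(Θ.mulVec (ivec p.1) - ivec p.2) i| ≤ 1 := by
      calc |(Θ.mulVec (ivec p.1) - ivec p.2) i| = ‖(Θ.mulVec (ivec p.1) - ivec p.2) i‖ :=
            (Real.norm_eq_abs _).symm
        _ ≤ ‖Θ.mulVec (ivec p.1) - ivec p.2‖ := norm_le_pi_norm _ i
        _ ≤ 1 := le_trans hp hb
    have : |(Θ.mulVec (ivec p.1) - ivec p.2) i| = |(0:ℝ) - (p.2 i : ℝ)| := by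
      rw [Pi.sub_apply, mulVec_sv, h0]
      simp [ivec]
    rw [this] at hc
    simp only [zero_sub, abs_neg] at hc
    exact_mod_cast (by push_cast; exact hc : |((p.2 i : ℤ):ℝ)| ≤ 1)
  refine ⟨hp1, ?_⟩
  calc Pigeo (Θ.mulVec (ivec p.1) - ivec p.2) ≤ ‖Θ.mulVec (ivec p.1) - ivec p.2‖ :=
        pigeo_le_norm hn _
    _ ≤ ‖ivec p.1‖ ^ (-γ) := hp
    _ = Pigeo' (ivec p.1) ^ (-γ) := by rw [norm_fin_one, pigeo'_sv hp1]; rfl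

lemma obeta_le_mbeta (hn : 0 < n) : obeta n 1 Θ ≤ mbeta n 1 Θ := by
  apply sSup_le
  rintro x ⟨γ, rfl, H⟩
  exact le_mbeta (ord_to_mult hn H)

lemma mult_to_ord_one {Θ : Matrix (Fin 1) (Fin 1) ℝ} {γ : ℝ} (H : MultApprox 1 1 Θ γ) :
    OrdApprox 1 1 Θ γ := by
  apply H.mono
  rintro p ⟨hp1, hp2⟩
  show ‖_‖ ≤ _
  rw [norm_fin_one, norm_fin_one, ← pigeo_fin_one]
  calc Pigeo (Θ.mulVec (ivec p.1) - ivec p.2) ≤ Pigeo' (ivec p.1) ^ (-γ) := hp2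
    _ = |ivec p.1 0| ^ (-γ) := by rw [pigeo'_sv hp1]; rfl

section Pigeonhole

lemma floor_close {Q : ℕ} (hQ : 1 ≤ Q) {a b : ℝ} (h : ⌊a * Q⌋ = ⌊b * Q⌋) :
    |a - b| ≤ 1/Q := by
  have hQ0 : (0:ℝ) < Q := by exact_mod_cast hQ
  have h1 : |a * Q - b * Q| < 1 := Int.abs_sub_lt_one_of_floor_eq_floor h
  have h2 : |a - b| * Q < 1 := by
    have e1 : |a - b| * Q = |a * Q - b * Q| := by
      rw [show |a - b| * (Q:ℝ) = |a - b| * |(Q:ℝ)| by rw [abs_of_pos hQ0],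
        ← abs_mul, sub_mul]
    rw [e1]
    exact h1
  rw [le_div_iff₀ hQ0]
  exact le_of_lt h2

lemma dirichlet_box {ι : Type} [Fintype ι] (α : ι → ℝ) {Q : ℕ} (hQ : 1 ≤ Q) :
    ∃ k : ℕ, 1 ≤ k ∧ k ≤ Q ^ (Fintype.card ι) ∧
      ∀ j, ∃ z : ℤ, |α j * k - z| ≤ 1/Q := by
  classical
  have hQ0 : (0:ℝ) < Q := by exact_mod_cast hQ
  set N := Q ^ (Fintype.card ι) with hN
  have key : ∀ a b : Fin (N+1), (a:ℕ) < (b:ℕ) →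
      (∀ j, ⌊Int.fract (α j * a) * Q⌋ = ⌊Int.fract (α j * b) * Q⌋) →
      ∃ k : ℕ, 1 ≤ k ∧ k ≤ N ∧ ∀ j, ∃ z : ℤ, |α j * k - z| ≤ 1/Q := by
    intro a b hab heq
    refine ⟨(b:ℕ) - (a:ℕ), by omega, by have := b.isLt; omega, ?_⟩
    intro j
    refine ⟨⌊α j * b⌋ - ⌊α j * a⌋, ?_⟩
    have hcast : ((((b:ℕ) - (a:ℕ)) : ℕ) : ℝ) = ((b:ℕ):ℝ) - ((a:ℕ):ℝ) := by
      push_cast [Nat.cast_sub hab.le]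
      ring
    have hval : α j * (((b:ℕ) - (a:ℕ) : ℕ) : ℝ) - ((⌊α j * b⌋ - ⌊α j * a⌋ : ℤ) : ℝ)
        = Int.fract (α j * b) - Int.fract (α j * a) := by
      rw [hcast]
      unfold Int.fract
      push_cast
      ring
    rw [hval]
    exact abs_sub_comm (Int.fract (α j * (a:ℕ))) (Int.fract (α j * (b:ℕ))) ▸
      floor_close hQ (heq j)
  -- the pigeonhole map
  have hcard : Fintype.card (ι → Fin Q) < Fintype.card (Fin (N+1)) := by
    rw [Fintype.card_fun, Fintype.card_fin, Fintype.card_fin]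
    omega
  have hfr : ∀ (t : Fin (N+1)) (j : ι), (⌊Int.fract (α j * t) * Q⌋).toNat < Q := by
    intro t j
    have h0 : 0 ≤ ⌊Int.fract (α j * t) * Q⌋ :=
      Int.floor_nonneg.2 (mul_nonneg (Int.fract_nonneg _) (le_of_lt hQ0))
    have h1 : ⌊Int.fract (α j * t) * Q⌋ < (Q:ℤ) := by
      apply Int.floor_lt.2
      calc Int.fract (α j * t) * Q < 1 * Q :=
            mul_lt_mul_of_pos_right (Int.fract_lt_one _) hQ0
        _ = ((Q:ℤ):ℝ) := by push_cast; ring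
    omega
  obtain ⟨a, b, hab, heq⟩ := Fintype.exists_ne_map_eq_of_card_lt
    (fun t : Fin (N+1) => fun j : ι => (⟨(⌊Int.fract (α j * t) * Q⌋).toNat, hfr t j⟩ : Fin Q))
    hcard
  have heq' : ∀ j, ⌊Int.fract (α j * a) * Q⌋ = ⌊Int.fract (α j * b) * Q⌋ := by
    intro j
    have := congrFun heq j
    have hv := congrArg Fin.val this
    simp only at hv
    have h0a : 0 ≤ ⌊Int.fract (α j * a) * Q⌋ :=
      Int.floor_nonneg.2 (mul_nonneg (Int.fract_nonneg _) (le_of_lt hQ0))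
    have h0b : 0 ≤ ⌊Int.fract (α j * b) * Q⌋ :=
      Int.floor_nonneg.2 (mul_nonneg (Int.fract_nonneg _) (le_of_lt hQ0))
    omega
  rcases Ne.lt_or_gt (fun h : (a:ℕ) = (b:ℕ) => hab (Fin.ext h)) with h | h
  · exact key a b h heq'
  · exact key b a h (fun j => (heq' j).symm)

end Pigeonhole

section Exact

variable {n : ℕ} {Θ : Matrix (Fin n) (Fin 1) ℝ}

def ExactSol (Θ : Matrix (Fin n) (Fin 1) ℝ) : Prop :=
  ∃ t : ℤ, t ≠ 0 ∧ ∀ i, Θ i 0 * (t:ℝ) = ((round (Θ i 0 * (t:ℝ)) : ℤ) : ℝ)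

lemma obeta_top_of_exact (h : ExactSol Θ) : obeta n 1 Θ = ⊤ := by
  obtain ⟨t, ht, hex⟩ := h
  apply obeta_eq_top
  intro γ
  refine Set.infinite_of_injective_forall_mem
    (f := fun m : ℕ => (sv (((m:ℤ)+1) * t), fun i => ((m:ℤ)+1) * round (Θ i 0 * (t:ℝ)))) ?_ ?_
  · intro a b hab
    have h1 : ((a:ℤ)+1) * t = ((b:ℤ)+1) * t := congrFun (congrArg Prod.fst hab) 0
    have := mul_right_cancel₀ ht h1
    omega
  · intro m
    show ‖_‖ ≤ _
    have hzero : Θ.mulVec (ivec (sv (((m:ℤ)+1) * t))) -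
        ivec (fun i => ((m:ℤ)+1) * round (Θ i 0 * (t:ℝ))) = 0 := by
      funext i
      rw [Pi.sub_apply, mulVec_sv]
      show Θ i 0 * ((((m:ℤ)+1) * t : ℤ) : ℝ) - ((((m:ℤ)+1) * round (Θ i 0 * (t:ℝ)) : ℤ) : ℝ) = 0
      push_cast
      rw [← hex i]
      push_cast
      ring
    rw [hzero, norm_zero]
    exact Real.rpow_nonneg (norm_nonneg _) _

lemma round_min (v : ℝ) (m : ℤ) : |v - round v| ≤ |v - m| := by
  by_cases h : m = round v
  · rw [h]
  · have h1 : (1:ℝ) ≤ |((m:ℝ)) - ((round v : ℤ):ℝ)| := by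
      have : (1:ℤ) ≤ |m - round v| := Int.one_le_abs (sub_ne_zero.2 h)
      calc (1:ℝ) ≤ ((|m - round v| : ℤ) : ℝ) := by exact_mod_cast this
        _ = |(m:ℝ) - ((round v : ℤ):ℝ)| := by push_cast; ring_nf
    have h2 : |v - round v| ≤ 1/2 := abs_sub_round v
    have h3 : |(m:ℝ) - round v| ≤ |(m:ℝ) - v| + |v - round v| := abs_sub_le _ _ _
    have h4 : |(m:ℝ) - v| = |v - m| := abs_sub_comm _ _
    linarith

lemma ordApprox_one_div_n (hn : 0 < n) (hne : ¬ ExactSol Θ) : OrdApprox n 1 Θ (1/(n:ℝ)) := by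
  classical
  by_contra hfin0
  set S := {p : (Fin 1 → ℤ) × (Fin n → ℤ) |
    ‖Θ.mulVec (ivec p.1) - ivec p.2‖ ≤ ‖ivec p.1‖ ^ (-(1/(n:ℝ)))} with hS
  have hfin : S.Finite := Set.not_infinite.1 hfin0
  have hn0 : ((n:ℝ)) ≠ 0 := by exact_mod_cast hn.ne'
  -- production of solutions
  have produce : ∀ N : ℕ, 1 ≤ N → ∃ p : (Fin 1 → ℤ) × (Fin n → ℤ),
      p ∈ S ∧ p.1 ≠ 0 ∧ ‖Θ.mulVec (ivec p.1) - ivec p.2‖ ≤ 1/N := by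
    intro N hN
    obtain ⟨k, hk1, hkN, hz⟩ := dirichlet_box (ι := Fin n) (fun i => Θ i 0) hN
    choose z hzb using hz
    rw [Fintype.card_fin] at hkN
    have hQ0 : (0:ℝ) < N := by exact_mod_cast hN
    have hk0 : (1:ℝ) ≤ (k:ℝ) := by exact_mod_cast hk1
    refine ⟨(sv (k:ℤ), z), ?_, sv_ne_zero (t := (k:ℤ)) (by omega), ?_⟩
    · show ‖_‖ ≤ _
      have hnorm : ‖ivec (sv (k:ℤ))‖ = (k:ℝ) := by
        rw [norm_fin_one]
        show |((k:ℤ):ℝ)| = (k:ℝ)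
        rw [abs_of_pos (by exact_mod_cast hk1)]
        push_cast; ring
      rw [hnorm]
      have hb : (1:ℝ)/N ≤ (k:ℝ) ^ (-(1/(n:ℝ))) := by
        have hkpow : (k:ℝ) ^ ((1:ℝ)/n) ≤ (N:ℝ) := by
          have h1 : (k:ℝ) ≤ ((N:ℝ))^(n:ℕ) := by exact_mod_cast hkN
          calc (k:ℝ) ^ ((1:ℝ)/n) ≤ (((N:ℝ))^(n:ℕ)) ^ ((1:ℝ)/n) :=
                Real.rpow_le_rpow (by positivity) h1 (by positivity)
            _ = (N:ℝ) := by
                rw [← Real.rpow_natCast (N:ℝ) n, ← Real.rpow_mul (le_of_lt hQ0)]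
                rw [mul_one_div, div_self hn0, Real.rpow_one]
        have hkp : (0:ℝ) < (k:ℝ) ^ ((1:ℝ)/n) := Real.rpow_pos_of_pos (by linarith) _
        rw [Real.rpow_neg (by linarith), ← one_div]
        exact one_div_le_one_div_of_le hkp hkpow
      refine le_trans ?_ hb
      apply (pi_norm_le_iff_of_nonneg (by positivity)).2
      intro i
      rw [Real.norm_eq_abs, Pi.sub_apply, mulVec_sv]
      have : Θ i 0 * ((sv (k:ℤ)) 0 : ℝ) - ivec z i = Θ i 0 * (k:ℕ) - (z i : ℝ) := by
        simp [sv, ivec]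
      rw [this]
      exact hzb i
    · apply (pi_norm_le_iff_of_nonneg (by positivity)).2
      intro i
      rw [Real.norm_eq_abs, Pi.sub_apply, mulVec_sv]
      have : Θ i 0 * ((sv (k:ℤ)) 0 : ℝ) - ivec z i = Θ i 0 * (k:ℕ) - (z i : ℝ) := by
        simp [sv, ivec]
      rw [this]
      exact hzb i
  -- finite set: minimal positive error
  set F := (hfin.toFinset.filter (fun p => p.1 ≠ 0))
  have hFne : F.Nonempty := by
    obtain ⟨p, hpS, hp1, -⟩ := produce 1 le_rfl
    exact ⟨p, Finset.mem_filter.2 ⟨hfin.mem_toFinset.2 hpS, hp1⟩⟩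
  obtain ⟨q, hqF, hqmin⟩ := Finset.exists_min_image F
    (fun p => ‖Θ.mulVec (ivec p.1) - ivec p.2‖) hFne
  have hq1 : q.1 ≠ 0 := (Finset.mem_filter.1 hqF).2
  have hqpos : 0 < ‖Θ.mulVec (ivec q.1) - ivec q.2‖ := by
    rcases (norm_nonneg (Θ.mulVec (ivec q.1) - ivec q.2)).lt_or_eq with h | h
    · exact h
    · exfalso
      apply hne
      have hz : Θ.mulVec (ivec q.1) - ivec q.2 = 0 := by
        rw [← norm_eq_zero]; exact h.symm
      refine ⟨q.1 0, fun h0 => hq1 (funext fun i => by rw [Subsingleton.elim i 0]; exact h0), ?_⟩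
      intro i
      have hi : Θ i 0 * ((q.1 0 : ℤ):ℝ) = (q.2 i : ℝ) := by
        have := congrFun hz i
        rw [Pi.sub_apply, mulVec_sv] at this
        have := sub_eq_zero.1 this
        exact this
      rw [hi]
      norm_cast
      rw [round_intCast]
  obtain ⟨N, hNgt⟩ := exists_nat_gt (1 / ‖Θ.mulVec (ivec q.1) - ivec q.2‖)
  have hN1 : 1 ≤ N + 1 := by omega
  obtain ⟨p, hpS, hp1, hperr⟩ := produce (N+1) hN1
  have hpF : p ∈ F := Finset.mem_filter.2 ⟨hfin.mem_toFinset.2 hpS, hp1⟩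
  have hmin := hqmin p hpF
  have hNp : (0:ℝ) < N + 1 := by positivity
  have : (1:ℝ)/(N+1) < ‖Θ.mulVec (ivec q.1) - ivec q.2‖ := by
    rw [div_lt_iff₀ hNp]
    have h2 : 1 / ‖Θ.mulVec (ivec q.1) - ivec q.2‖ < N + 1 := by
      calc 1 / ‖Θ.mulVec (ivec q.1) - ivec q.2‖ < N := hNgt
        _ ≤ N + 1 := by linarith
    calc (1:ℝ) = ‖Θ.mulVec (ivec q.1) - ivec q.2‖ * (1 / ‖Θ.mulVec (ivec q.1) - ivec q.2‖) := by
          field_simp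
      _ < ‖Θ.mulVec (ivec q.1) - ivec q.2‖ * (N+1) := by
          apply mul_lt_mul_of_pos_left h2 hqpos
  have hcast : ((N+1 : ℕ):ℝ) = ((N:ℝ)+1) := by push_cast; ring
  rw [hcast] at hperr
  linarith

end Exact

section Transfer

variable {n : ℕ} {Θ : Matrix (Fin n) (Fin 1) ℝ}

lemma mbeta_top_of_rat (hn : 0 < n) (i : Fin n) (q : ℚ) (hq : Θ i 0 = (q:ℝ)) :
    mbeta n 1 Θ = ⊤ := by
  apply mbeta_eq_top
  intro γ
  refine Set.infinite_of_injective_forall_mem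
    (f := fun m : ℕ => (sv (((m:ℤ)+1) * (q.den:ℤ)),
      fun j => if j = i then ((m:ℤ)+1) * q.num else round (Θ j 0 * ((((m:ℤ)+1) * (q.den:ℤ) : ℤ):ℝ)))) ?_ ?_
  · intro a b hab
    have h1 : ((a:ℤ)+1) * (q.den:ℤ) = ((b:ℤ)+1) * (q.den:ℤ) :=
      congrFun (congrArg Prod.fst hab) 0
    have hd : (q.den:ℤ) ≠ 0 := by
      have := q.den_pos
      omega
    have := mul_right_cancel₀ hd h1
    omega
  · intro m
    refine ⟨sv_ne_zero (t := ((m:ℤ)+1) * (q.den:ℤ)) ?_, ?_⟩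
    · exact mul_ne_zero (by omega) (by exact_mod_cast q.den_pos.ne')
    · have hzero : ∏ j, |(Θ.mulVec (ivec (sv (((m:ℤ)+1) * (q.den:ℤ)))) -
          ivec fun j => if j = i then ((m:ℤ)+1) * q.num
            else round (Θ j 0 * ((((m:ℤ)+1) * (q.den:ℤ) : ℤ):ℝ))) j| = 0 := by
        apply Finset.prod_eq_zero (Finset.mem_univ i)
        rw [abs_eq_zero, Pi.sub_apply, mulVec_sv]
        show Θ i 0 * (((((m:ℤ)+1) * (q.den:ℤ)) : ℤ):ℝ) -
          ((if i = i then ((m:ℤ)+1) * q.num else _ : ℤ) : ℝ) = 0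
        rw [if_pos rfl, hq]
        have hden : ((q.den:ℤ):ℝ) ≠ 0 := by
          have := q.den_pos
          positivity
        have hqq : (q:ℝ) = ((q.num:ℝ))/((q.den:ℤ):ℝ) := by
          rw [Rat.cast_def]; norm_num
        rw [hqq]
        field_simp
        push_cast
        ring
      unfold Pigeo
      rw [hzero, Real.zero_rpow (one_div_ne_zero (by exact_mod_cast hn.ne' : (n:ℝ) ≠ 0))]
      exact Real.rpow_nonneg (le_of_lt (pigeo'_pos _)) _

lemma irrational_of_mbeta_ne_top (hn : 0 < n) (h : mbeta n 1 Θ ≠ ⊤) :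
    ∀ i, Irrational (Θ i 0) := by
  intro i
  by_contra hirr
  unfold Irrational at hirr
  rw [Set.not_notMem] at hirr
  obtain ⟨q, hq⟩ := hirr
  exact h (mbeta_top_of_rat hn i q hq.symm)

lemma fiber_finite (hn : 0 < n) (hirr : ∀ i, Irrational (Θ i 0)) (t : ℤ) (ht : t ≠ 0)
    (c : ℝ) : {y : Fin n → ℤ | ∏ i, |Θ i 0 * (t:ℝ) - (y i : ℝ)| ≤ c}.Finite := by
  classical
  set d : Fin n → ℝ := fun j => |Θ j 0 * (t:ℝ) - round (Θ j 0 * (t:ℝ))| with hd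
  have hdpos : ∀ j, 0 < d j := by
    intro j
    rw [hd]
    simp only [abs_pos, sub_ne_zero]
    exact ((hirr j).intCast_mul ht).ne_int _ ∘ (by
      intro h
      rw [mul_comm] at h
      exact h)
  set D : Fin n → ℝ := fun i => ∏ j ∈ Finset.univ.erase i, d j with hD
  have hDpos : ∀ i, 0 < D i := fun i => Finset.prod_pos fun j _ => hdpos j
  set R : Fin n → ℝ := fun i => |Θ i 0 * (t:ℝ)| + max c 0 / D i with hR
  apply Set.Finite.subset (Set.Finite.pi fun i : Fin n => Set.finite_Icc (-⌈R i⌉) ⌈R i⌉)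
  intro y hy
  simp only [Set.mem_setOf_eq] at hy
  intro i _
  have hLb : |Θ i 0 * (t:ℝ) - (y i : ℝ)| ≤ max c 0 / D i := by
    rw [le_div_iff₀ (hDpos i)]
    calc |Θ i 0 * (t:ℝ) - (y i : ℝ)| * D i
        ≤ |Θ i 0 * (t:ℝ) - (y i : ℝ)| * ∏ j ∈ Finset.univ.erase i, |Θ j 0 * (t:ℝ) - (y j : ℝ)| := by
          apply mul_le_mul_of_nonneg_left _ (abs_nonneg _)
          apply Finset.prod_le_prod (fun j _ => le_of_lt (hdpos j))
          intro j _
          exact round_min _ _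
      _ = ∏ j, |Θ j 0 * (t:ℝ) - (y j : ℝ)| :=
          Finset.mul_prod_erase Finset.univ (fun j => |Θ j 0 * (t:ℝ) - (y j : ℝ)|)
            (Finset.mem_univ i)
      _ ≤ c := hy
      _ ≤ max c 0 := le_max_left _ _
  have hyb : |(y i : ℝ)| ≤ R i := by
    have h1 : |(y i : ℝ)| - |Θ i 0 * (t:ℝ)| ≤ |Θ i 0 * (t:ℝ) - (y i : ℝ)| := by
      calc |(y i : ℝ)| - |Θ i 0 * (t:ℝ)| ≤ |(y i : ℝ) - Θ i 0 * (t:ℝ)| := abs_sub_abs_le_abs_sub _ _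
        _ = |Θ i 0 * (t:ℝ) - (y i : ℝ)| := abs_sub_comm _ _
    rw [hR]
    simp only
    linarith
  have : |y i| ≤ ⌈R i⌉ := by
    have h2 : (|y i| : ℝ) ≤ ((⌈R i⌉ : ℤ) : ℝ) := by
      calc (|y i| : ℝ) = |(y i : ℝ)| := by push_cast; ring
        _ ≤ R i := hyb
        _ ≤ ((⌈R i⌉ : ℤ) : ℝ) := Int.le_ceil _
    exact_mod_cast h2
  simp only [Set.mem_Icc]
  constructor
  · linarith [neg_abs_le (y i)]
  · linarith [le_abs_self (y i)]

lemma exists_large_t (hn : 0 < n) (hirr : ∀ i, Irrational (Θ i 0)) {γ : ℝ}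
    (H : MultApprox n 1 Θ γ) (T0 : ℝ) :
    ∃ p : (Fin 1 → ℤ) × (Fin n → ℤ), (p.1 ≠ 0 ∧
      Pigeo (Θ.mulVec (ivec p.1) - ivec p.2) ≤ Pigeo' (ivec p.1) ^ (-γ)) ∧
      T0 ≤ |((p.1 0 : ℤ) : ℝ)| := by
  classical
  by_contra hcon
  push_neg at hcon
  set C : ℝ := max T0 1 ^ |γ| with hC
  have hC0 : 0 ≤ C := by positivity
  have hsub : {p : (Fin 1 → ℤ) × (Fin n → ℤ) | p.1 ≠ 0 ∧
      Pigeo (Θ.mulVec (ivec p.1) - ivec p.2) ≤ Pigeo' (ivec p.1) ^ (-γ)} ⊆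
      ⋃ t ∈ (Set.Icc (-⌈T0⌉) ⌈T0⌉ \ {0} : Set ℤ),
        {p : (Fin 1 → ℤ) × (Fin n → ℤ) | p.1 = sv t ∧
          ∏ i, |Θ i 0 * (t:ℝ) - (p.2 i : ℝ)| ≤ C ^ n} := by
    rintro p ⟨hp1, hp2⟩
    set t := p.1 0 with htdef
    have hpt : p.1 = sv t := funext fun j => by rw [Subsingleton.elim j 0]; rfl
    have ht0 : t ≠ 0 := fun h => hp1 (by rw [hpt, h]; funext j; rfl)
    have htlt : |((t:ℤ):ℝ)| < T0 := hcon p ⟨hp1, hp2⟩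
    have htmem : t ∈ (Set.Icc (-⌈T0⌉) ⌈T0⌉ \ {0} : Set ℤ) := by
      refine ⟨?_, ht0⟩
      have h1 : (|t| : ℝ) ≤ ((⌈T0⌉:ℤ):ℝ) := by
        calc (|t| : ℝ) = |((t:ℤ):ℝ)| := by push_cast; ring
          _ ≤ T0 := le_of_lt htlt
          _ ≤ _ := Int.le_ceil _
      have : |t| ≤ ⌈T0⌉ := by exact_mod_cast h1
      rw [Set.mem_Icc]
      exact abs_le.1 this
    apply Set.mem_biUnion htmem
    refine ⟨hpt, ?_⟩
    have habs : (1:ℝ) ≤ |((t:ℤ):ℝ)| := abs_int_one_le ht0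
    have hbound : Pigeo' (ivec p.1) ^ (-γ) ≤ C := by
      rw [pigeo'_sv hp1, ← htdef]
      calc |((t:ℤ):ℝ)| ^ (-γ) ≤ |((t:ℤ):ℝ)| ^ |γ| :=
            Real.rpow_le_rpow_of_exponent_le habs (neg_le_abs γ)
        _ ≤ max T0 1 ^ |γ| := by
            apply Real.rpow_le_rpow (by positivity) _ (abs_nonneg γ)
            rcases le_or_gt |((t:ℤ):ℝ)| T0 with h | h
            · exact le_trans h (le_max_left _ _)
            · linarith [le_max_left T0 (1:ℝ)]
    have hprod := prod_le_of_pigeo hn hC0 (hp2.trans hbound)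
    have heq : ∀ i, (Θ.mulVec (ivec p.1) - ivec p.2) i = Θ i 0 * ((t:ℤ):ℝ) - (p.2 i : ℝ) := by
      intro i
      rw [Pi.sub_apply, mulVec_sv, htdef]
      rfl
    calc ∏ i, |Θ i 0 * ((t:ℤ):ℝ) - (p.2 i : ℝ)|
        = ∏ i, |(Θ.mulVec (ivec p.1) - ivec p.2) i| := by
          apply Finset.prod_congr rfl
          intro i _
          rw [heq i]
      _ ≤ C ^ n := hprod
  have hfin : (⋃ t ∈ (Set.Icc (-⌈T0⌉) ⌈T0⌉ \ {0} : Set ℤ),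
      {p : (Fin 1 → ℤ) × (Fin n → ℤ) | p.1 = sv t ∧
        ∏ i, |Θ i 0 * (t:ℝ) - (p.2 i : ℝ)| ≤ C ^ n}).Finite := by
    apply Set.Finite.biUnion ((Set.finite_Icc _ _).subset Set.diff_subset)
    intro t htmem
    have ht0 : t ≠ 0 := htmem.2
    apply Set.Finite.subset (Set.Finite.prod (Set.finite_singleton (sv t))
      (fiber_finite hn hirr t ht0 (C ^ n)))
    rintro p ⟨h1, h2⟩
    exact ⟨h1, h2⟩
  exact H (hfin.subset hsub)

end Transfer

section Main

variable {n : ℕ} {Θ : Matrix (Fin n) (Fin 1) ℝ}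

lemma transfer (hn2 : 2 ≤ n) (hirr : ∀ i, Irrational (Θ i 0)) {γ r : ℝ}
    (hγ : 0 < γ) (hr : 0 < r) (hrg : r * (((n:ℝ) - 1) * γ + n) < γ)
    (H : MultApprox n 1 Θ γ) : OrdApprox n 1 Θ r := by
  classical
  have hn : 0 < n := by omega
  have hn1 : 1 ≤ n := by omega
  have hnR : (2:ℝ) ≤ (n:ℝ) := by exact_mod_cast hn2
  have hnpos : (0:ℝ) < (n:ℝ) := by linarith
  have hn0 : (n:ℝ) ≠ 0 := hnpos.ne'
  by_contra hfin0
  set S := {p : (Fin 1 → ℤ) × (Fin n → ℤ) |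
    ‖Θ.mulVec (ivec p.1) - ivec p.2‖ ≤ ‖ivec p.1‖ ^ (-r)} with hS
  have hfin : S.Finite := Set.not_infinite.1 hfin0
  obtain ⟨X0, hX0'⟩ := (hfin.image (fun p => |((p.1 0 : ℤ):ℝ)|)).bddAbove
  have hX0 : ∀ p ∈ S, |((p.1 0 : ℤ):ℝ)| ≤ X0 := fun p hp =>
    hX0' (Set.mem_image_of_mem _ hp)
  -- constants
  set A : ℝ := 2 ^ (n-1) with hA
  have hA1 : (1:ℝ) ≤ A := one_le_pow₀ one_le_two
  have hA0 : (0:ℝ) < A := by linarith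
  set c : ℝ := (γ - r * (((n:ℝ) - 1) * γ + n))/n with hc
  have hcpos : 0 < c := div_pos (by linarith) hnpos
  set e : ℝ := γ * ((n:ℝ) - 1)/n + 1 with he
  have hepos : 0 < e := by
    have h9 : (0:ℝ) ≤ (n:ℝ) - 1 := by linarith
    have : 0 ≤ γ * ((n:ℝ) - 1)/n := div_nonneg (mul_nonneg hγ.le h9) hnpos.le
    rw [he]
    linarith
  set T1 : ℝ := (A ^ ((1:ℝ) + r)) ^ ((1:ℝ)/c) with hT1
  have hT11 : 1 ≤ T1 :=
    Real.one_le_rpow (Real.one_le_rpow hA1 (by linarith)) (by positivity)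
  -- get a multiplicative solution with large t
  obtain ⟨p, ⟨hp1, hp2⟩, hTle⟩ := exists_large_t hn hirr H (max T1 (X0 + 1))
  set t0 : ℤ := p.1 0 with ht0
  set t1 : ℤ := |t0| with ht1
  set T : ℝ := ((t1 : ℤ):ℝ) with hT
  have hTabs : T = |((t0:ℤ):ℝ)| := by
    rw [hT, ht1]
    push_cast
    ring
  have hT1le : T1 ≤ T := le_trans (le_max_left _ _) (hTabs ▸ hTle)
  have hX0T : X0 + 1 ≤ T := le_trans (le_max_right _ _) (hTabs ▸ hTle)
  have hTge1 : 1 ≤ T := le_trans hT11 hT1le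
  have hT0 : 0 < T := by linarith
  set y1 : Fin n → ℤ := fun i => if 0 ≤ t0 then p.2 i else -(p.2 i) with hy1
  have habsL : ∀ i, |Θ i 0 * T - ((y1 i : ℤ):ℝ)| = |Θ i 0 * ((t0:ℤ):ℝ) - ((p.2 i : ℤ):ℝ)| := by
    intro i
    by_cases h : 0 ≤ t0
    · have e1 : t1 = t0 := abs_of_nonneg h
      rw [hy1]
      simp only [if_pos h]
      rw [hT, e1]
    · have e1 : t1 = -t0 := abs_of_neg (by omega)
      rw [hy1]
      simp only [if_neg h]
      rw [hT, e1]
      push_cast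
      rw [show Θ i 0 * (-(t0:ℝ)) - (-((p.2 i:ℤ):ℝ)) = -(Θ i 0 * (t0:ℝ) - ((p.2 i:ℤ):ℝ)) by ring]
      rw [abs_neg]
  have hprod : ∏ i, |Θ i 0 * T - ((y1 i : ℤ):ℝ)| ≤ (T ^ (-γ)) ^ n := by
    have hb : Pigeo (Θ.mulVec (ivec p.1) - ivec p.2) ≤ T ^ (-γ) := by
      rw [hTabs]
      calc Pigeo (Θ.mulVec (ivec p.1) - ivec p.2) ≤ Pigeo' (ivec p.1) ^ (-γ) := hp2
        _ = |((t0:ℤ):ℝ)| ^ (-γ) := by rw [pigeo'_sv hp1]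
    have := prod_le_of_pigeo hn (Real.rpow_nonneg hT0.le _) hb
    calc ∏ i, |Θ i 0 * T - ((y1 i : ℤ):ℝ)|
        = ∏ i, |(Θ.mulVec (ivec p.1) - ivec p.2) i| := by
          apply Finset.prod_congr rfl
          intro i _
          rw [habsL i, Pi.sub_apply, mulVec_sv]
          rfl
      _ ≤ (T ^ (-γ)) ^ n := this
  -- pick the minimal coordinate
  have hne : Nonempty (Fin n) := ⟨⟨0, hn⟩⟩
  obtain ⟨i0, -, hmin⟩ := Finset.exists_min_image Finset.univ
    (fun i => |Θ i 0 * T - ((y1 i : ℤ):ℝ)|) Finset.univ_nonempty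
  have hLi0 : |Θ i0 0 * T - ((y1 i0 : ℤ):ℝ)| ≤ T ^ (-γ) := by
    have hpow : |Θ i0 0 * T - ((y1 i0 : ℤ):ℝ)| ^ n ≤ (T ^ (-γ)) ^ n := by
      calc |Θ i0 0 * T - ((y1 i0 : ℤ):ℝ)| ^ n
          = ∏ _i : Fin n, |Θ i0 0 * T - ((y1 i0 : ℤ):ℝ)| := by
            rw [Finset.prod_const, Finset.card_univ, Fintype.card_fin]
        _ ≤ ∏ i, |Θ i 0 * T - ((y1 i : ℤ):ℝ)| :=
            Finset.prod_le_prod (fun i _ => abs_nonneg _) (fun i _ => hmin i (Finset.mem_univ i))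
        _ ≤ (T ^ (-γ)) ^ n := hprod
    by_contra hcon
    push_neg at hcon
    have := pow_lt_pow_left₀ hcon (Real.rpow_nonneg hT0.le _) (by omega : n ≠ 0)
    linarith
  -- Dirichlet on the other coordinates
  set Q : ℕ := ⌈T ^ (γ/(n:ℝ))⌉₊ with hQ
  have hTgn1 : 1 ≤ T ^ (γ/(n:ℝ)) := Real.one_le_rpow hTge1 (by positivity)
  have hQ1 : 1 ≤ Q := by
    rw [hQ]
    exact_mod_cast Nat.ceil_pos.2 (by linarith)
  have hQD : T ^ (γ/(n:ℝ)) ≤ (Q:ℝ) := Nat.le_ceil _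
  have hQle : (Q:ℝ) ≤ 2 * T ^ (γ/(n:ℝ)) := by
    have := Nat.ceil_lt_add_one (show (0:ℝ) ≤ T ^ (γ/(n:ℝ)) by positivity)
    rw [hQ]
    linarith
  obtain ⟨k, hk1, hkb, hz⟩ := dirichlet_box (ι := {j : Fin n // j ≠ i0})
    (fun j => Θ j.1 0 * T) hQ1
  choose z hzb using hz
  have hcard : Fintype.card {j : Fin n // j ≠ i0} = n - 1 := by
    have h1 : Fintype.card {j : Fin n // j ≠ i0} =
        Fintype.card (Fin n) - Fintype.card {j : Fin n // j = i0} :=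
      Fintype.card_subtype_compl _
    rw [h1, Fintype.card_subtype_eq, Fintype.card_fin]
  rw [hcard] at hkb
  -- the new pair
  set x : Fin 1 → ℤ := sv ((k:ℤ) * t1) with hx
  set w : Fin n → ℤ := fun j => if h : j = i0 then (k:ℤ) * y1 i0 else z ⟨j, h⟩ with hw
  have hk1R : (1:ℝ) ≤ (k:ℝ) := by exact_mod_cast hk1
  have hkQ : (k:ℝ) ≤ ((Q:ℝ))^(n-1 : ℕ) := by exact_mod_cast hkb
  have hkpos : (0:ℝ) < (k:ℝ) := by linarith
  have hxval : (((k:ℤ) * t1 : ℤ):ℝ) = (k:ℝ) * T := by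
    rw [hT]
    push_cast
    ring
  have hxnorm : ‖ivec x‖ = (k:ℝ) * T := by
    rw [norm_fin_one]
    show |(((k:ℤ) * t1 : ℤ):ℝ)| = (k:ℝ) * T
    rw [hxval, abs_of_pos (mul_pos hkpos hT0)]
  have hQpow : ((Q:ℝ))^(n-1 : ℕ) ≤ A * T ^ (γ * ((n:ℝ)-1)/n) := by
    have hcast : ((n-1 : ℕ):ℝ) = (n:ℝ) - 1 := by
      push_cast [Nat.cast_sub hn1]
      ring
    calc ((Q:ℝ))^(n-1 : ℕ) ≤ (2 * T ^ (γ/(n:ℝ)))^(n-1 : ℕ) :=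
          pow_le_pow_left₀ (by positivity) hQle _
      _ = 2^(n-1:ℕ) * (T ^ (γ/(n:ℝ)))^(n-1 : ℕ) := mul_pow _ _ _
      _ = A * T ^ (γ * ((n:ℝ)-1)/n) := by
          rw [hA, ← Real.rpow_natCast (T ^ (γ/(n:ℝ))) (n-1), ← Real.rpow_mul hT0.le]
          congr 1
          rw [hcast]
          ring
  have hmem_coord : ∀ j, |(Θ.mulVec (ivec x) - ivec w) j| ≤ A * T ^ (-(γ/(n:ℝ))) := by
    intro j
    have hVal : (Θ.mulVec (ivec x) - ivec w) j = Θ j 0 * ((k:ℝ) * T) - ((w j : ℤ):ℝ) := by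
      rw [Pi.sub_apply, mulVec_sv]
      show Θ j 0 * (((k:ℤ) * t1 : ℤ):ℝ) - _ = _
      push_cast
      rfl
    have hexp : γ * ((n:ℝ)-1)/n + (-γ) = -(γ/(n:ℝ)) := by
      field_simp
      ring
    by_cases h : j = i0
    · have hwj : w j = (k:ℤ) * y1 i0 := by
        rw [hw]
        simp only [dif_pos h]
      rw [hVal, hwj, h]
      have e1 : Θ i0 0 * ((k:ℝ) * T) - (((k:ℤ) * y1 i0 : ℤ):ℝ)
          = (k:ℝ) * (Θ i0 0 * T - ((y1 i0 : ℤ):ℝ)) := by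
        push_cast
        ring
      rw [e1, abs_mul, abs_of_nonneg (by positivity : (0:ℝ) ≤ (k:ℝ))]
      calc (k:ℝ) * |Θ i0 0 * T - ((y1 i0 : ℤ):ℝ)|
          ≤ ((Q:ℝ))^(n-1:ℕ) * (T ^ (-γ)) :=
            mul_le_mul hkQ hLi0 (abs_nonneg _) (by positivity)
        _ ≤ (A * T ^ (γ * ((n:ℝ)-1)/n)) * (T ^ (-γ)) :=
            mul_le_mul_of_nonneg_right hQpow (by positivity)
        _ = A * T ^ (-(γ/(n:ℝ))) := by
            rw [mul_assoc, ← Real.rpow_add hT0, hexp]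
    · rw [hVal, hw]
      simp only [dif_neg h]
      have e1 : Θ j 0 * ((k:ℝ) * T) - ((z ⟨j, h⟩ : ℤ):ℝ)
          = Θ j 0 * T * (k:ℕ) - ((z ⟨j, h⟩ : ℤ):ℝ) := by
        push_cast
        ring
      rw [e1]
      calc |Θ j 0 * T * (k:ℕ) - ((z ⟨j, h⟩ : ℤ):ℝ)| ≤ 1/(Q:ℝ) := hzb ⟨j, h⟩
        _ ≤ T ^ (-(γ/(n:ℝ))) := by
            rw [Real.rpow_neg hT0.le, ← one_div]
            exact one_div_le_one_div_of_le (by positivity) hQD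
        _ ≤ A * T ^ (-(γ/(n:ℝ))) := le_mul_of_one_le_left (by positivity) hA1
  have hkey : A * T ^ (-(γ/(n:ℝ))) ≤ ((k:ℝ) * T) ^ (-r) := by
    have hkT : (k:ℝ) * T ≤ A * T ^ e := by
      calc (k:ℝ) * T ≤ ((Q:ℝ))^(n-1:ℕ) * T := mul_le_mul_of_nonneg_right hkQ hT0.le
        _ ≤ (A * T ^ (γ * ((n:ℝ)-1)/n)) * T := mul_le_mul_of_nonneg_right hQpow hT0.le
        _ = A * T ^ e := by
            rw [mul_assoc, he]
            congr 1
            rw [Real.rpow_add hT0, Real.rpow_one]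
    have hkT0 : (0:ℝ) < (k:ℝ) * T := by positivity
    have step1 : (A * T ^ e) ^ (-r) ≤ ((k:ℝ) * T) ^ (-r) :=
      Real.rpow_le_rpow_of_nonpos hkT0 hkT (by linarith)
    have hTc : A ^ ((1:ℝ) + r) ≤ T ^ c := by
      have h1 : T1 ^ c ≤ T ^ c := Real.rpow_le_rpow (by linarith) hT1le hcpos.le
      have h2 : T1 ^ c = A ^ ((1:ℝ) + r) := by
        rw [hT1, ← Real.rpow_mul (Real.rpow_nonneg hA0.le _),
          one_div_mul_cancel hcpos.ne', Real.rpow_one]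
      linarith
    have hrw : (A * T ^ e) ^ (-r) = A ^ (-r) * T ^ (e * (-r)) := by
      rw [Real.mul_rpow hA0.le (Real.rpow_nonneg hT0.le _), ← Real.rpow_mul hT0.le]
    have hexp2 : e * (-r) = c + (-(γ/(n:ℝ))) := by
      rw [he, hc]
      field_simp
      ring
    have main : A * T ^ (-(γ/(n:ℝ))) ≤ A ^ (-r) * T ^ (e * (-r)) := by
      rw [hexp2, Real.rpow_add hT0]
      calc A * T ^ (-(γ/(n:ℝ)))
          = (A ^ (-r) * A ^ ((1:ℝ)+r)) * T ^ (-(γ/(n:ℝ))) := by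
            rw [← Real.rpow_add hA0]
            norm_num
        _ ≤ (A ^ (-r) * T ^ c) * T ^ (-(γ/(n:ℝ))) := by
            apply mul_le_mul_of_nonneg_right _ (by positivity)
            exact mul_le_mul_of_nonneg_left hTc (by positivity)
        _ = A ^ (-r) * (T ^ c * T ^ (-(γ/(n:ℝ)))) := by ring
    calc A * T ^ (-(γ/(n:ℝ))) ≤ A ^ (-r) * T ^ (e * (-r)) := main
      _ = (A * T ^ e) ^ (-r) := hrw.symm
      _ ≤ ((k:ℝ) * T) ^ (-r) := step1
  -- the new pair is a solution
  have hmem : (x, w) ∈ S := by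
    show ‖Θ.mulVec (ivec x) - ivec w‖ ≤ ‖ivec x‖ ^ (-r)
    rw [hxnorm]
    apply (pi_norm_le_iff_of_nonneg (by positivity)).2
    intro j
    rw [Real.norm_eq_abs]
    exact (hmem_coord j).trans hkey
  -- contradiction with boundedness
  have hbig : X0 + 1 ≤ |(((x, w).1 0 : ℤ):ℝ)| := by
    show X0 + 1 ≤ |(((k:ℤ) * t1 : ℤ):ℝ)|
    rw [hxval, abs_of_pos (mul_pos hkpos hT0)]
    calc X0 + 1 ≤ T := hX0T
      _ = 1 * T := by ring
      _ ≤ (k:ℝ) * T := mul_le_mul_of_nonneg_right hk1R hT0.le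
  have := hX0 _ hmem
  linarith

end Main

lemma pick_gamma {N b r : ℝ} (hN : 2 ≤ N) (hb : 0 ≤ b) (hr : 0 < r)
    (hrf : r < (N*b - 1)/(N*(N-1)*b + N^2 - N + 1)) :
    ∃ γ : ℝ, 0 < γ ∧ γ < b ∧ r * ((N-1)*γ + N) < γ := by
  have hD : 0 < N*(N-1)*b + N^2 - N + 1 := by
    nlinarith [mul_nonneg (mul_nonneg (show (0:ℝ) ≤ N by linarith)
      (show (0:ℝ) ≤ N-1 by linarith)) hb, sq_nonneg (N-1)]
  have h1 : r * (N*(N-1)*b + N^2 - N + 1) < N*b - 1 := by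
    have := (lt_div_iff₀ hD).1 hrf
    linarith
  have hden : 0 < 1 - r*(N-1) := by
    nlinarith [mul_lt_mul_of_pos_left h1 (show (0:ℝ) < N-1 by linarith), hD]
  have h2' : r * (N*(N-1)*b + N^2) < N*b := by nlinarith
  have h2 : r * ((N-1)*b + N) < b := by nlinarith
  set γr : ℝ := r*N/(1 - r*(N-1)) with hγr
  have hγr0 : 0 ≤ γr := div_nonneg (mul_nonneg hr.le (by linarith)) hden.le
  have hγrb : γr < b := by
    rw [hγr, div_lt_iff₀ hden]
    nlinarith
  refine ⟨(γr + b)/2, by linarith, by linarith, ?_⟩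
  have hγgt : γr < (γr + b)/2 := by linarith
  have h3 : r*N < ((γr + b)/2) * (1 - r*(N-1)) := by
    rw [hγr] at hγgt
    have := (div_lt_iff₀ hden).1 hγgt
    linarith
  nlinarith


/-- Corollary 4: for m = 1, β_×(Θ) ≥ β(Θ) ≥ (n β_×(Θ) − 1)/(n(n−1) β_×(Θ) + n² − n + 1),
where for β_×(Θ) = +∞ the lower bound is read as 1/(n(n−1)) if n ≥ 2, and as +∞ if n = 1. -/
theorem obeta_between_mbeta (n : ℕ) (hn : 0 < n)
    (Θ : Matrix (Fin n) (Fin 1) ℝ) :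
    mbeta n 1 Θ ≥ obeta n 1 Θ ∧
    (mbeta n 1 Θ ≠ ⊤ →
      obeta n 1 Θ ≥ ((((n : ℝ) * (mbeta n 1 Θ).toReal - 1) /
        ((n : ℝ) * ((n : ℝ) - 1) * (mbeta n 1 Θ).toReal + (n : ℝ)^2 - n + 1) : ℝ) : EReal)) ∧
    (mbeta n 1 Θ = ⊤ → n = 1 → obeta n 1 Θ = ⊤) ∧
    (mbeta n 1 Θ = ⊤ → 2 ≤ n →
      obeta n 1 Θ ≥ (((1 : ℝ) / ((n : ℝ) * ((n : ℝ) - 1)) : ℝ) : EReal)) := by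

  have hn1 : 1 ≤ n := hn
  refine ⟨obeta_le_mbeta hn, ?_, ?_, ?_⟩
  · intro htop
    set b : ℝ := (mbeta n 1 Θ).toReal with hb
    have hne_bot : mbeta n 1 Θ ≠ ⊥ :=
      (lt_of_lt_of_le (by norm_num : (⊥:EReal) < 0) (mbeta_nonneg hn)).ne'
    have hcoe : ((b:ℝ):EReal) = mbeta n 1 Θ := EReal.coe_toReal htop hne_bot
    have hb0 : (0:ℝ) ≤ b := by
      have h0 := mbeta_nonneg hn (Θ := Θ)
      rw [← hcoe] at h0
      exact_mod_cast h0
    rw [ge_iff_le]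
    apply ereal_le_of_forall_lt
    intro r hr
    rcases le_or_gt r 0 with hr0 | hr0
    · calc (r:EReal) ≤ ((0:ℝ):EReal) := by exact_mod_cast hr0
        _ ≤ obeta n 1 Θ := by exact_mod_cast obeta_nonneg
    by_cases hn2 : 2 ≤ n
    · have hirr := irrational_of_mbeta_ne_top hn htop
      obtain ⟨γ, hγ0, hγb, hγr⟩ := pick_gamma (by exact_mod_cast hn2 : (2:ℝ) ≤ (n:ℝ)) hb0 hr0 hr
      have hM : MultApprox n 1 Θ γ := multApprox_of_coe_lt (by
        rw [← hcoe]
        exact_mod_cast hγb)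
      exact le_obeta (transfer hn2 hirr hγ0 hr0 hγr hM)
    · have hn1' : n = 1 := by omega
      subst hn1'
      norm_num at hr
      have hrb : r < b := by linarith
      have hM : MultApprox 1 1 Θ r := multApprox_of_coe_lt (by
        rw [← hcoe]
        exact_mod_cast hrb)
      exact le_obeta (mult_to_ord_one hM)
  · intro htop hn1'
    subst hn1'
    apply obeta_eq_top
    intro γ
    apply mult_to_ord_one
    apply multApprox_of_coe_lt
    rw [htop]
    exact lt_top_iff_ne_top.2 (EReal.coe_ne_top γ)
  · intro htop hn2
    have hnR : (2:ℝ) ≤ (n:ℝ) := by exact_mod_cast hn2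
    by_cases hex : ExactSol Θ
    · rw [ge_iff_le, obeta_top_of_exact hex]
      exact le_top
    · have h2 := le_obeta (ordApprox_one_div_n hn hex)
      rw [ge_iff_le]
      refine le_trans ?_ h2
      have h1n : (1:ℝ)/((n:ℝ)*((n:ℝ)-1)) ≤ 1/(n:ℝ) := by
        apply one_div_le_one_div_of_le (by linarith)
        nlinarith
      exact_mod_cast h1n
end
end

section
/- Let α, β be real numbers and μ > 0. If there are infinitely many positive integers q such that q·‖qα‖·‖qβ‖ ≤ μ, then there are infinitely many positive integers q such that q·‖qα‖·‖qβ‖ ≤ (4/3)^{9/4}·μ^{1/4} and max(‖qα‖, ‖qβ‖) ≤ (4/3)^{5/4}·μ^{1/4}. -/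
noncomputable section

/-- Distance from a real number to the nearest integer. -/
def nint (x : ℝ) : ℝ := |x - (round x : ℤ)|

lemma nint_nonneg (x : ℝ) : 0 ≤ nint x := abs_nonneg _

lemma nint_le_half (x : ℝ) : nint x ≤ 1/2 := abs_sub_round x

lemma nint_zero : nint 0 = 0 := by simp [nint]

lemma nint_le_abs_sub (x : ℝ) (m : ℤ) : nint x ≤ |x - m| := by
  rcases eq_or_ne m (round x) with rfl | hm
  · exact le_of_eq rfl
  · have h1 : (1:ℝ) ≤ |((round x : ℤ) : ℝ) - (m : ℝ)| := by
      have hne : round x - m ≠ 0 := sub_ne_zero.mpr (Ne.symm hm)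
      exact_mod_cast Int.one_le_abs hne
    have h2 : |x - (round x : ℤ)| ≤ 1/2 := abs_sub_round x
    have h3 : |((round x : ℤ) : ℝ) - m| ≤ |((round x : ℤ) : ℝ) - x| + |x - m| := abs_sub_le _ _ _
    have h4 : |((round x : ℤ) : ℝ) - x| = |x - (round x : ℤ)| := abs_sub_comm _ _
    unfold nint
    linarith
  
lemma nint_add_int (x : ℝ) (m : ℤ) : nint (x + m) = nint x := by
  unfold nint
  rw [round_add_intCast]
  have : x + (m:ℝ) - ((round x + m : ℤ) : ℝ) = x - (round x : ℤ) := by push_cast; ring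
  rw [this]

lemma nint_neg_le (x : ℝ) : nint (-x) ≤ nint x := by
  calc nint (-x) ≤ |(-x) - ((-(round x) : ℤ) : ℝ)| := nint_le_abs_sub _ _
    _ = nint x := by
        unfold nint
        rw [show -x - ((-(round x) : ℤ) : ℝ) = -(x - (round x : ℤ)) by push_cast; ring, abs_neg]

lemma nint_neg (x : ℝ) : nint (-x) = nint x := by
  refine le_antisymm (nint_neg_le x) ?_
  have := nint_neg_le (-x)
  rwa [neg_neg] at this

lemma nint_natmul_le (k : ℕ) (x : ℝ) : nint ((k:ℝ) * x) ≤ (k:ℝ) * nint x := by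
  calc nint ((k:ℝ) * x) ≤ |(k:ℝ) * x - ((k * round x : ℤ) : ℝ)| := nint_le_abs_sub _ _
    _ = (k:ℝ) * nint x := by
        unfold nint
        rw [show (k:ℝ) * x - ((k * round x : ℤ) : ℝ) = (k:ℝ) * (x - (round x : ℤ)) by push_cast; ring,
          abs_mul, abs_of_nonneg (by positivity : (0:ℝ) ≤ (k:ℝ))]

lemma nint_natmul_eq (k : ℕ) (x : ℝ) : nint ((k:ℝ) * x) = nint ((k:ℝ) * nint x) := by
  have key : (k:ℝ) * x = (k:ℝ) * (x - (round x : ℤ)) + ((k * round x : ℤ) : ℝ) := by push_cast; ring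
  rw [key, nint_add_int]
  rcases le_or_gt ((round x : ℤ) : ℝ) x with hx | hx
  · have h : nint x = x - (round x : ℤ) := abs_of_nonneg (by linarith)
    rw [h]
  · have h : nint x = -(x - (round x : ℤ)) := abs_of_neg (by linarith)
    rw [h, show (k:ℝ) * -(x - (round x : ℤ)) = -((k:ℝ) * (x - (round x : ℤ))) by ring, nint_neg]

set_option maxHeartbeats 1000000 in
lemma step (α β δ : ℝ) (hδ0 : 0 < δ) (hδ : δ < 1/2) (q : ℕ) (hq : 0 < q)
    (hprod : (q : ℝ) * nint (q * α) * nint (q * β) ≤ (3/4)^5 * δ^4)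
    (hba : nint ((q:ℝ) * β) ≤ nint ((q:ℝ) * α)) :
    ∃ p : ℕ, q ≤ p ∧ 0 < p ∧
      (p : ℝ) * nint (p * α) * nint (p * β) ≤ (4/3) * δ ∧
      nint ((p:ℝ) * α) ≤ δ ∧ nint ((p:ℝ) * β) ≤ δ := by
  set a := nint ((q:ℝ) * α) with ha
  set b := nint ((q:ℝ) * β) with hb
  have ha0 : 0 ≤ a := nint_nonneg _
  have hb0 : 0 ≤ b := nint_nonneg _
  have hq1 : (1:ℝ) ≤ (q:ℝ) := by exact_mod_cast hq
  by_cases hcase : a ≤ δ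
  · refine ⟨q, le_refl _, hq, ?_, hcase, le_trans hba hcase⟩
    have h3 : δ^3 ≤ (1/2)^3 := pow_le_pow_left₀ hδ0.le hδ.le 3
    nlinarith [hprod]
  · push_neg at hcase
    -- δ < a
    have hqb : (q:ℝ) * b ≤ (3/4)^5 * δ^3 := by
      rw [show (3/4:ℝ)^5 * δ^3 = ((3/4)^5 * δ^4)/δ by field_simp, le_div_iff₀ hδ0]
      calc (q:ℝ) * b * δ ≤ (q:ℝ) * b * a := by
            apply mul_le_mul_of_nonneg_left hcase.le
            exact mul_nonneg (Nat.cast_nonneg q) hb0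
        _ = (q:ℝ) * a * b := by ring
        _ ≤ (3/4)^5 * δ^4 := hprod
    -- Dirichlet setup
    set M : ℕ := ⌈1/δ⌉₊ - 1 with hM
    have h2δ : (2:ℝ) < 1/δ := by rw [lt_div_iff₀ hδ0]; linarith
    have hceil : 2 < ⌈1/δ⌉₊ := Nat.lt_ceil.mpr (by exact_mod_cast h2δ)
    have hM0 : 0 < M := by omega
    have hMsucc : M + 1 = ⌈1/δ⌉₊ := by omega
    have hMδ : 1/((M:ℝ)+1) ≤ δ := by
      have h1 : (1:ℝ)/δ ≤ (M:ℝ)+1 := by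
        have := Nat.le_ceil (1/δ)
        rw [← hMsucc] at this
        push_cast at this
        linarith
      rw [div_le_iff₀ (by positivity)]
      rw [div_le_iff₀ hδ0] at h1
      linarith
    have hMlt : (M:ℝ) < 1/δ := by
      have h1 : (⌈1/δ⌉₊ : ℝ) < 1/δ + 1 := Nat.ceil_lt_add_one (by positivity)
      have h2 : (M:ℝ) = (⌈1/δ⌉₊ : ℝ) - 1 := by
        rw [← hMsucc]; push_cast; ring
      linarith
    obtain ⟨j, k, hk0, hkM, hjk⟩ := Real.exists_int_int_abs_mul_sub_le a hM0
    set m : ℕ := k.toNat with hm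
    have hm0 : 0 < m := by omega
    have hmk : ((m:ℕ):ℝ) = (k:ℝ) := by
      rw [hm]; exact_mod_cast Int.toNat_of_nonneg hk0.le
    have hmM : (m:ℝ) ≤ (M:ℝ) := by
      rw [hmk]; exact_mod_cast hkM
    refine ⟨m * q, Nat.le_mul_of_pos_left q hm0, Nat.mul_pos hm0 hq, ?_, ?_, ?_⟩
    case _ =>
      -- the key bounds first
      have hcastα : ((m*q : ℕ):ℝ) * α = (m:ℝ) * ((q:ℝ) * α) := by push_cast; ring
      have hcastβ : ((m*q : ℕ):ℝ) * β = (m:ℝ) * ((q:ℝ) * β) := by push_cast; ring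
      have hpa : nint (((m*q : ℕ):ℝ) * α) ≤ δ := by
        rw [hcastα, nint_natmul_eq m ((q:ℝ)*α), ← ha]
        calc nint ((m:ℝ) * a) ≤ |(m:ℝ) * a - (j:ℝ)| := nint_le_abs_sub _ j
          _ = |(k:ℝ) * a - (j:ℝ)| := by rw [hmk]
          _ ≤ 1/((M:ℝ)+1) := hjk
          _ ≤ δ := hMδ
      have hpb : nint (((m*q : ℕ):ℝ) * β) ≤ (m:ℝ) * b := by
        rw [hcastβ, hb]; exact nint_natmul_le m ((q:ℝ)*β)
      have hA0 : 0 ≤ nint (((m*q : ℕ):ℝ) * α) := nint_nonneg _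
      have hB0 : 0 ≤ nint (((m*q : ℕ):ℝ) * β) := nint_nonneg _
      calc ((m*q : ℕ):ℝ) * nint (((m*q : ℕ):ℝ) * α) * nint (((m*q : ℕ):ℝ) * β)
          ≤ ((m*q : ℕ):ℝ) * δ * ((m:ℝ) * b) := by
            apply mul_le_mul _ hpb hB0 (by positivity)
            exact mul_le_mul_of_nonneg_left hpa (Nat.cast_nonneg _)
        _ = (m:ℝ)^2 * ((q:ℝ) * b) * δ := by push_cast; ring
        _ ≤ (1/δ)^2 * ((3/4)^5 * δ^3) * δ := by
            apply mul_le_mul_of_nonneg_right _ hδ0.le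
            apply mul_le_mul _ hqb (mul_nonneg (Nat.cast_nonneg q) hb0) (by positivity)
            apply pow_le_pow_left₀ (Nat.cast_nonneg m) (le_of_lt (lt_of_le_of_lt hmM hMlt))
        _ = (3/4)^5 * δ^2 := by field_simp
        _ ≤ (4/3) * δ := by nlinarith
    case _ =>
      have hcastα : ((m*q : ℕ):ℝ) * α = (m:ℝ) * ((q:ℝ) * α) := by push_cast; ring
      rw [hcastα, nint_natmul_eq m ((q:ℝ)*α), ← ha]
      calc nint ((m:ℝ) * a) ≤ |(m:ℝ) * a - (j:ℝ)| := nint_le_abs_sub _ j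
        _ = |(k:ℝ) * a - (j:ℝ)| := by rw [hmk]
        _ ≤ 1/((M:ℝ)+1) := hjk
        _ ≤ δ := hMδ
    case _ =>
      have hcastβ : ((m*q : ℕ):ℝ) * β = (m:ℝ) * ((q:ℝ) * β) := by push_cast; ring
      calc nint (((m*q : ℕ):ℝ) * β) ≤ (m:ℝ) * b := by
            rw [hcastβ, hb]; exact nint_natmul_le m ((q:ℝ)*β)
        _ ≤ (M:ℝ) * ((q:ℝ) * b) := by
            apply mul_le_mul hmM _ hb0 (Nat.cast_nonneg M)
            nlinarith
        _ ≤ (1/δ) * ((3/4)^5 * δ^3) := by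
            apply mul_le_mul hMlt.le hqb (mul_nonneg (Nat.cast_nonneg q) hb0) (by positivity)
        _ = (3/4)^5 * δ^2 := by
            have hδne : δ ≠ 0 := ne_of_gt hδ0
            field_simp
        _ ≤ δ := by nlinarith

/-- Corollary 5: quantitative statement towards the Littlewood conjecture. -/
theorem littlewood_supnorm (α β μ : ℝ) (hμ : 0 < μ)
    (h : {q : ℕ | 0 < q ∧ (q : ℝ) * nint (q * α) * nint (q * β) ≤ μ}.Infinite) :
    {q : ℕ | 0 < q ∧
      (q : ℝ) * nint (q * α) * nint (q * β) ≤ ((4:ℝ)/3) ^ ((9:ℝ)/4) * μ ^ ((1:ℝ)/4) ∧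
      max (nint (q * α)) (nint (q * β)) ≤ ((4:ℝ)/3) ^ ((5:ℝ)/4) * μ ^ ((1:ℝ)/4)}.Infinite := by
  set B2 : ℝ := ((4:ℝ)/3) ^ ((5:ℝ)/4) * μ ^ ((1:ℝ)/4) with hB2def
  have hB2pos : 0 < B2 := by rw [hB2def]; positivity
  have hB1eq : ((4:ℝ)/3) ^ ((9:ℝ)/4) * μ ^ ((1:ℝ)/4) = (4/3) * B2 := by
    rw [hB2def, show (9:ℝ)/4 = 1 + (5:ℝ)/4 by norm_num,
      Real.rpow_add (by norm_num : (0:ℝ) < 4/3), Real.rpow_one]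
    ring
  have hB2B1 : B2 ≤ ((4:ℝ)/3) ^ ((9:ℝ)/4) * μ ^ ((1:ℝ)/4) := by
    rw [hB2def]
    exact mul_le_mul_of_nonneg_right
      (Real.rpow_le_rpow_of_exponent_le (by norm_num) (by norm_num))
      (Real.rpow_nonneg hμ.le _)
  have hμeq : μ = (3/4)^5 * B2^4 := by
    have e1 : (((4:ℝ)/3) ^ ((5:ℝ)/4))^(4:ℕ) = ((4:ℝ)/3)^(5:ℕ) := by
      rw [← Real.rpow_natCast (((4:ℝ)/3) ^ ((5:ℝ)/4)) 4,
        ← Real.rpow_mul (by norm_num : (0:ℝ) ≤ 4/3),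
        show ((5:ℝ)/4) * ((4:ℕ):ℝ) = ((5:ℕ):ℝ) by norm_num, Real.rpow_natCast]
    have e2 : (μ ^ ((1:ℝ)/4))^(4:ℕ) = μ := by
      rw [← Real.rpow_natCast (μ ^ ((1:ℝ)/4)) 4, ← Real.rpow_mul hμ.le]
      norm_num
    rw [hB2def, mul_pow, e1, e2, ← mul_assoc,
      show ((3:ℝ)/4)^5 * ((4:ℝ)/3)^(5:ℕ) = 1 by norm_num, one_mul]
  apply Set.infinite_of_forall_exists_gt
  intro N
  by_cases hbig : (1:ℝ)/2 ≤ B2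
  · -- large μ : conclusion holds unconditionally via Dirichlet on α
    by_cases hrat : ∃ k : ℕ, 0 < k ∧ nint ((k:ℝ) * α) = 0
    · obtain ⟨k, hk0, hka⟩ := hrat
      have h0 : nint (((k*(N+1) : ℕ):ℝ) * α) = 0 := by
        rw [show ((k*(N+1) : ℕ):ℝ) * α = (((N+1:ℕ)):ℝ) * ((k:ℝ) * α) by push_cast; ring,
          nint_natmul_eq, hka, mul_zero, nint_zero]
      refine ⟨k*(N+1), ⟨Nat.mul_pos hk0 N.succ_pos, ?_, ?_⟩, ?_⟩
      · rw [h0, mul_zero, zero_mul]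
        positivity
      · rw [h0]
        exact max_le hB2pos.le (le_trans (nint_le_half _) hbig)
      · calc N < N + 1 := Nat.lt_succ_self _
          _ ≤ k * (N+1) := Nat.le_mul_of_pos_left _ hk0
    · push_neg at hrat
      -- ε : positive lower bound for nint (k α), 1 ≤ k ≤ N
      set T : Finset ℝ := insert (1:ℝ) ((Finset.Icc 1 N).image fun k : ℕ => nint ((k:ℝ) * α))
        with hT
      have hTne : T.Nonempty := ⟨1, Finset.mem_insert_self _ _⟩
      set ε : ℝ := T.min' hTne with hε
      have hε0 : 0 < ε := by
        rw [hε]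
        rcases Finset.mem_insert.mp (T.min'_mem hTne) with h1 | h1
        · rw [h1]; norm_num
        · obtain ⟨k, hkmem, hkeq⟩ := Finset.mem_image.mp h1
          rw [← hkeq]
          exact lt_of_le_of_ne (nint_nonneg _)
            (Ne.symm (hrat k (Finset.mem_Icc.mp hkmem).1))
      have hεle : ∀ k : ℕ, 1 ≤ k → k ≤ N → ε ≤ nint ((k:ℝ) * α) := fun k h1 h2 =>
        Finset.min'_le T _ (Finset.mem_insert_of_mem
          (Finset.mem_image_of_mem _ (Finset.mem_Icc.mpr ⟨h1, h2⟩)))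
      set n : ℕ := ⌈1/ε⌉₊ + 1 with hn
      have hn0 : 0 < n := by omega
      have hn1 : 1/((n:ℝ)+1) < ε := by
        have hc := Nat.le_ceil (1/ε)
        have h2 : (1:ℝ)/ε < (n:ℝ)+1 := by rw [hn]; push_cast; linarith
        rw [div_lt_iff₀ (by positivity)]
        rw [div_lt_iff₀ hε0] at h2
        linarith
      obtain ⟨j, k, hk0, hkn, hjk⟩ := Real.exists_int_int_abs_mul_sub_le α hn0
      set q : ℕ := k.toNat with hq
      have hq0 : 0 < q := by omega
      have hqk : ((q:ℕ):ℝ) = (k:ℝ) := by rw [hq]; exact_mod_cast Int.toNat_of_nonneg hk0.le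
      have hqn : ((q:ℕ):ℝ) ≤ (n:ℝ) := by rw [hqk]; exact_mod_cast hkn
      have hqa : nint ((q:ℝ) * α) ≤ 1/((n:ℝ)+1) := by
        calc nint ((q:ℝ) * α) ≤ |(q:ℝ) * α - (j:ℝ)| := nint_le_abs_sub _ j
          _ = |(k:ℝ) * α - (j:ℝ)| := by rw [hqk]
          _ ≤ 1/((n:ℝ)+1) := hjk
      have hqN : N < q := by
        by_contra hle
        push_neg at hle
        have := hεle q hq0 hle
        linarith
      have h1 : (q:ℝ) * nint ((q:ℝ) * α) ≤ 1 := by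
        calc (q:ℝ) * nint ((q:ℝ) * α) ≤ (n:ℝ) * (1/((n:ℝ)+1)) :=
              mul_le_mul hqn hqa (nint_nonneg _) (Nat.cast_nonneg n)
          _ ≤ 1 := by
              rw [mul_one_div, div_le_one (by positivity)]
              linarith
      refine ⟨q, ⟨hq0, ?_, ?_⟩, hqN⟩
      · calc (q:ℝ) * nint ((q:ℝ) * α) * nint ((q:ℝ) * β) ≤ 1 * (1/2) :=
              mul_le_mul h1 (nint_le_half _) (nint_nonneg _) zero_le_one
          _ ≤ ((4:ℝ)/3) ^ ((9:ℝ)/4) * μ ^ ((1:ℝ)/4) := by linarith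
      · exact max_le (le_trans (nint_le_half _) hbig) (le_trans (nint_le_half _) hbig)
  · -- small μ : use the reduction step on elements of the hypothesis set
    push_neg at hbig
    obtain ⟨q, hqS, hqN⟩ := h.exists_gt N
    obtain ⟨hq0, hqprod⟩ := hqS
    have hprod' : (q:ℝ) * nint ((q:ℝ) * α) * nint ((q:ℝ) * β) ≤ (3/4)^5 * B2^4 :=
      hqprod.trans_eq hμeq
    rcases le_total (nint ((q:ℝ) * β)) (nint ((q:ℝ) * α)) with hba | hab
    · obtain ⟨p, hpq, hp0, hD1, hD2, hD3⟩ := step α β B2 hB2pos hbig q hq0 hprod' hba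
      refine ⟨p, ⟨hp0, ?_, max_le hD2 hD3⟩, lt_of_lt_of_le hqN hpq⟩
      rw [hB1eq]
      exact hD1
    · have hprod'' : (q:ℝ) * nint ((q:ℝ) * β) * nint ((q:ℝ) * α) ≤ (3/4)^5 * B2^4 := by
        rw [mul_right_comm]
        exact hprod'
      obtain ⟨p, hpq, hp0, hD1, hD2, hD3⟩ := step β α B2 hB2pos hbig q hq0 hprod'' hab
      refine ⟨p, ⟨hp0, ?_, max_le hD3 hD2⟩, lt_of_lt_of_le hqN hpq⟩
      rw [hB1eq, mul_right_comm]
      exact hD1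
end
end

section
/- Let M ⊂ ℝ^k be a convex k-dimensional body symmetric about the origin, let e be a unit vector in ℝ^k, and let h = sup{ 2⟨e, x⟩ : x ∈ M } be the thickness of M with respect to e. Then vol_k(M) ≤ h · vol_{k−1}(M ∩ e^⊥), where e^⊥ = { x ∈ ℝ^k : ⟨e, x⟩ = 0 }. -/
open MeasureTheory Set Pointwise
open scoped ENNReal NNReal

noncomputable section

/-- 1-D sumset inequality: `vol A + vol B ≤ vol (A + B)` for nonempty measurable sets. -/
lemma vol_add_vol_le_vol_sumset {A B : Set ℝ} (hA : MeasurableSet A) (hB : MeasurableSet B)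
    (hAne : A.Nonempty) (hBne : B.Nonempty) :
    volume A + volume B ≤ volume (A + B) := by
  obtain ⟨a0, ha0⟩ := hAne
  obtain ⟨b0, hb0⟩ := hBne
  -- translate bound
  have htrans : ∀ b ∈ B, volume A ≤ volume (A + B) := by
    intro b hb
    have hsub : (fun x : ℝ => x + (-b)) ⁻¹' A ⊆ A + B := by
      intro x hx
      have : x = (x - b) + b := by ring
      rw [this]
      exact Set.add_mem_add hx hb
    calc volume A = volume ((fun x : ℝ => x + (-b)) ⁻¹' A) :=
          (measure_preimage_add_right volume (-b) A).symm
      _ ≤ volume (A + B) := measure_mono hsub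
  have htrans' : ∀ a ∈ A, volume B ≤ volume (A + B) := by
    intro a ha
    have hsub : (fun x : ℝ => x + (-a)) ⁻¹' B ⊆ A + B := by
      intro x hx
      have : x = a + (x - a) := by ring
      rw [this]
      exact Set.add_mem_add ha hx
    calc volume B = volume ((fun x : ℝ => x + (-a)) ⁻¹' B) :=
          (measure_preimage_add_right volume (-a) B).symm
      _ ≤ volume (A + B) := measure_mono hsub
  rcases eq_or_ne (volume A) ∞ with hAinf | hAfin
  · have := htrans b0 hb0; rw [hAinf] at this; simp [top_le_iff.mp this]
  rcases eq_or_ne (volume B) ∞ with hBinf | hBfin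
  · have := htrans' a0 ha0; rw [hBinf] at this; simp [top_le_iff.mp this]
  -- finite case, ε-approximation by compacts
  refine ENNReal.le_of_forall_pos_le_add fun ε hε hfin => ?_
  have hε2 : (ε : ℝ≥0∞) / 2 ≠ 0 := by
    simp [ENNReal.div_eq_top, (ENNReal.coe_pos.2 hε).ne']
  obtain ⟨K, hKA, hKc, hKm⟩ := hA.exists_isCompact_lt_add hAfin hε2
  obtain ⟨L, hLB, hLc, hLm⟩ := hB.exists_isCompact_lt_add hBfin hε2
  -- make them nonempty
  set K' : Set ℝ := K ∪ {a0} with hK'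
  set L' : Set ℝ := L ∪ {b0} with hL'
  have hK'c : IsCompact K' := hKc.union isCompact_singleton
  have hL'c : IsCompact L' := hLc.union isCompact_singleton
  have hK'A : K' ⊆ A := union_subset hKA (by simpa using ha0)
  have hL'B : L' ⊆ B := union_subset hLB (by simpa using hb0)
  have hK'ne : K'.Nonempty := ⟨a0, by simp [hK']⟩
  have hL'ne : L'.Nonempty := ⟨b0, by simp [hL']⟩
  set a : ℝ := sSup K' with hadef
  set b : ℝ := sInf L' with hbdef
  have haK : a ∈ K' := hK'c.sSup_mem hK'ne
  have hbL : b ∈ L' := hL'c.sInf_mem hL'ne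
  -- the two disjoint pieces
  set X : Set ℝ := (fun x : ℝ => x + (-b)) ⁻¹' (K' ∩ Iio a) with hXdef
  set Y : Set ℝ := (fun x : ℝ => x + (-a)) ⁻¹' L' with hYdef
  have hXm : MeasurableSet X := ((hK'c.measurableSet).inter measurableSet_Iio).preimage
    (measurable_add_const _)
  have hYm : MeasurableSet Y := hL'c.measurableSet.preimage (measurable_add_const _)
  have hXsub : X ⊆ A + B := by
    intro x hx
    have hx1 : x - b ∈ K' ∩ Iio a := hx
    have : x = (x - b) + b := by ring
    rw [this]
    exact Set.add_mem_add (hK'A hx1.1) (hL'B hbL)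
  have hYsub : Y ⊆ A + B := by
    intro x hx
    have hx1 : x - a ∈ L' := hx
    have : x = a + (x - a) := by ring
    rw [this]
    exact Set.add_mem_add (hK'A haK) (hL'B hx1)
  have hdisj : Disjoint X Y := by
    refine Set.disjoint_left.2 fun x hx hy => ?_
    have hx1 : x - b < a := hx.2
    have hy1 : x - a ∈ L' := hy
    have : b ≤ x - a := csInf_le hL'c.bddBelow hy1
    linarith
  have hXvol : volume K' ≤ volume X := by
    have h1 : volume X = volume (K' ∩ Iio a) := measure_preimage_add_right volume (-b) _
    have h2 : K' ⊆ (K' ∩ Iio a) ∪ {a} := by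
      intro x hx
      rcases lt_or_ge x a with hlt | hge
      · exact Or.inl ⟨hx, hlt⟩
      · have : x ≤ a := le_csSup hK'c.bddAbove hx
        exact Or.inr (by simpa using le_antisymm this hge)
    calc volume K' ≤ volume ((K' ∩ Iio a) ∪ {a}) := measure_mono h2
      _ ≤ volume (K' ∩ Iio a) + volume ({a} : Set ℝ) := measure_union_le (μ := volume) (K' ∩ Iio a) {a}
      _ = volume X := by rw [h1, Real.volume_singleton, add_zero]
  have hYvol : volume L' = volume Y := (measure_preimage_add_right volume (-a) L').symm
  have hsum : volume X + volume Y = volume (X ∪ Y) :=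
    (measure_union hdisj hYm).symm
  have : volume A + volume B ≤ volume X + volume Y + ε := by
    have hA' : volume A ≤ volume X + ε / 2 := by
      calc volume A ≤ volume K + ε / 2 := hKm.le
        _ ≤ volume K' + ε / 2 := by
            gcongr
            exact fun x hx => (Or.inl hx : x ∈ K')
        _ ≤ volume X + ε / 2 := by gcongr
    have hB' : volume B ≤ volume Y + ε / 2 := by
      calc volume B ≤ volume L + ε / 2 := hLm.le
        _ ≤ volume L' + ε / 2 := by
            gcongr
            exact fun x hx => (Or.inl hx : x ∈ L')
        _ = volume Y + ε / 2 := by rw [hYvol]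
    calc volume A + volume B ≤ (volume X + ε / 2) + (volume Y + ε / 2) := by gcongr
      _ = volume X + volume Y + (ε / 2 + ε / 2) := by ring
      _ = volume X + volume Y + ε := by rw [ENNReal.add_halves]
  calc volume A + volume B ≤ volume X + volume Y + ε := this
    _ = volume (X ∪ Y) + ε := by rw [hsum]
    _ ≤ volume (A + B) + ε := by gcongr; exact union_subset hXsub hYsub


lemma vol_smul_half (s : Set ℝ) : volume ((2⁻¹ : ℝ) • s) = 2⁻¹ * volume s := by
  rw [Measure.addHaar_smul_of_nonneg volume (by norm_num : (0:ℝ) ≤ 2⁻¹) s,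
    Module.finrank_self]
  congr 1
  rw [pow_one, ENNReal.ofReal_inv_of_pos (by norm_num)]
  norm_num

lemma half_sumset_vol {A B : Set ℝ} (hA : MeasurableSet A) (hB : MeasurableSet B)
    (hAne : A.Nonempty) (hBne : B.Nonempty) :
    2⁻¹ * volume A + 2⁻¹ * volume B ≤ volume ((2⁻¹ : ℝ) • A + (2⁻¹ : ℝ) • B) := by
  have hA' : MeasurableSet ((2⁻¹ : ℝ) • A) := hA.const_smul₀ (2⁻¹ : ℝ)
  have hB' : MeasurableSet ((2⁻¹ : ℝ) • B) := hB.const_smul₀ (2⁻¹ : ℝ)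
  have := vol_add_vol_le_vol_sumset hA' hB' (hAne.smul_set) (hBne.smul_set)
  rwa [vol_smul_half, vol_smul_half] at this

lemma ennreal_mul_le_sq_half (u v : ℝ≥0∞) : u * v ≤ (2⁻¹ * (u + v)) ^ 2 := by
  rcases eq_or_ne u ∞ with rfl | hu
  · rcases eq_or_ne v 0 with rfl | hv
    · simp
    · have : (2⁻¹ : ℝ≥0∞) * (∞ + v) = ∞ := by
        simp [ENNReal.add_eq_top, ENNReal.mul_eq_top, hv]
      rw [this]
      simp [ENNReal.top_pow]
  rcases eq_or_ne v ∞ with rfl | hv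
  · rcases eq_or_ne u 0 with rfl | hu0
    · simp
    · have : (2⁻¹ : ℝ≥0∞) * (u + ∞) = ∞ := by
        simp [ENNReal.add_eq_top, ENNReal.mul_eq_top]
      rw [this]
      simp [ENNReal.top_pow]
  -- finite case
  lift u to ℝ≥0 using hu
  lift v to ℝ≥0 using hv
  have h2 : ((2:ℝ≥0∞))⁻¹ = ((2⁻¹ : ℝ≥0) : ℝ≥0∞) := by
    simp
  rw [h2, ← ENNReal.coe_mul, ← ENNReal.coe_add, ← ENNReal.coe_mul, ← ENNReal.coe_pow,
    ENNReal.coe_le_coe, ← NNReal.coe_le_coe]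
  push_cast
  nlinarith [u.coe_nonneg, v.coe_nonneg, sq_nonneg ((u:ℝ) - (v:ℝ))]

lemma ennreal_isup_min_nat (a : ℝ≥0∞) : ⨆ n : ℕ, min a n = a := by
  apply le_antisymm
  · exact iSup_le fun n => min_le_left _ _
  · rcases eq_or_ne a ∞ with rfl | ha
    · have : ∀ n : ℕ, min (∞:ℝ≥0∞) n = n := fun n => min_eq_right le_top
      calc (∞:ℝ≥0∞) = ⨆ n : ℕ, (n : ℝ≥0∞) := (ENNReal.iSup_natCast).symm
        _ ≤ ⨆ n : ℕ, min (∞:ℝ≥0∞) n := by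
            exact iSup_mono fun n => le_of_eq (this n).symm
    · obtain ⟨n, hn⟩ := ENNReal.exists_nat_gt ha
      calc a = min a n := (min_eq_left hn.le).symm
        _ ≤ ⨆ n : ℕ, min a n := le_iSup (fun n : ℕ => min a (n:ℝ≥0∞)) n
section OneDim

open Filter

/-- 1-D midpoint Prékopa–Leindler, bounded case. -/
lemma pl_one_dim_bounded {F G H : ℝ → ℝ≥0∞} (mF : Measurable F) (mG : Measurable G)
    (mH : Measurable H) {n : ℕ} (hFb : ∀ x, F x ≤ n) (hGb : ∀ x, G x ≤ n) (hHb : ∀ x, H x ≤ n)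
    (hyp : ∀ x y, F x * G y ≤ (H (2⁻¹ * (x + y))) ^ 2) :
    (∫⁻ x, F x) * (∫⁻ y, G y) ≤ (∫⁻ z, H z) ^ 2 := by
  set a := essSup F volume with ha
  set b := essSup G volume with hb
  have hane : a ≠ ∞ := by
    refine ne_top_of_le_ne_top (ENNReal.natCast_ne_top n) ?_
    exact essSup_le_of_ae_le _ (Filter.Eventually.of_forall hFb)
  have hbne : b ≠ ∞ := by
    refine ne_top_of_le_ne_top (ENNReal.natCast_ne_top n) ?_
    exact essSup_le_of_ae_le _ (Filter.Eventually.of_forall hGb)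
  rcases eq_or_ne a 0 with ha0 | ha0
  · have : ∫⁻ x, F x = 0 := by
      have hle : F ≤ᵐ[volume] fun _ => (0 : ℝ≥0∞) := by
        have h0 := ENNReal.ae_le_essSup (μ := volume) F
        rw [← ha, ha0] at h0
        exact h0
      calc ∫⁻ x, F x = ∫⁻ _, (0:ℝ≥0∞) := lintegral_congr_ae (hle.mono fun x hx => le_antisymm hx zero_le)
        _ = 0 := lintegral_zero
    simp [this]
  rcases eq_or_ne b 0 with hb0 | hb0
  · have : ∫⁻ y, G y = 0 := by
      have hle : G ≤ᵐ[volume] fun _ => (0 : ℝ≥0∞) := by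
        have h0 := ENNReal.ae_le_essSup (μ := volume) G
        rw [← hb, hb0] at h0
        exact h0
      calc ∫⁻ y, G y = ∫⁻ _, (0:ℝ≥0∞) := lintegral_congr_ae (hle.mono fun x hx => le_antisymm hx zero_le)
        _ = 0 := lintegral_zero
    simp [this]
  -- normalization constant
  set c : ℝ≥0∞ := (a * b⁻¹) ^ (2⁻¹ : ℝ) with hc
  have hab0 : a * b⁻¹ ≠ 0 := by
    simp [ha0, ENNReal.inv_ne_zero, hbne]
  have habt : a * b⁻¹ ≠ ∞ := by
    simp [ENNReal.mul_eq_top, hane, hb0]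
  have hc0 : c ≠ 0 := by
    simp [hc, ENNReal.rpow_eq_zero_iff, hab0, habt]
  have hct : c ≠ ∞ := by
    simp [hc, ENNReal.rpow_eq_top_iff, hab0, habt]
  have hcc : c * c = a * b⁻¹ := by
    rw [hc, ← ENNReal.rpow_add _ _ hab0 habt]
    norm_num
  set F' : ℝ → ℝ≥0∞ := fun x => c⁻¹ * F x with hF'
  set G' : ℝ → ℝ≥0∞ := fun y => c * G y with hG'
  have mF' : Measurable F' := mF.const_mul _
  have mG' : Measurable G' := mG.const_mul _
  set m : ℝ≥0∞ := c * b with hm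
  have hm0 : m ≠ 0 := by simp [hm, hc0, hb0]
  have hmt : m ≠ ∞ := ENNReal.mul_ne_top hct hbne
  have hesF : essSup F' volume = m := by
    rw [hF']
    rw [ENNReal.essSup_const_mul, ← ha]
    -- c⁻¹ * a = c * b
    have : a = c * (c * b) := by
      rw [← mul_assoc, hcc, mul_assoc, ENNReal.inv_mul_cancel hb0 hbne, mul_one]
    rw [this, ← mul_assoc, ENNReal.inv_mul_cancel hc0 hct, one_mul, hm]
  have hesG : essSup G' volume = m := by
    rw [hG', ENNReal.essSup_const_mul, ← hb, hm]
  -- finiteness of values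
  have hF't : ∀ x, F' x ≠ ∞ :=
    fun x => ENNReal.mul_ne_top (by simp [ENNReal.inv_ne_top, hc0]) (ne_top_of_le_ne_top (ENNReal.natCast_ne_top n) (hFb x))
  have hG't : ∀ y, G' y ≠ ∞ :=
    fun y => ENNReal.mul_ne_top hct (ne_top_of_le_ne_top (ENNReal.natCast_ne_top n) (hGb y))
  have hHt : ∀ z, H z ≠ ∞ := fun z => ne_top_of_le_ne_top (ENNReal.natCast_ne_top n) (hHb z)
  -- real-valued versions
  set fr : ℝ → ℝ := fun x => (F' x).toReal with hfr
  set gr : ℝ → ℝ := fun y => (G' y).toReal with hgr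
  set hr : ℝ → ℝ := fun z => (H z).toReal with hhr
  have mfr : Measurable fr := mF'.ennreal_toReal
  have mgr : Measurable gr := mG'.ennreal_toReal
  have mhr : Measurable hr := mH.ennreal_toReal
  have layerF : ∫⁻ x, F' x = ∫⁻ t in Set.Ioi (0:ℝ), volume {x | t < fr x} := by
    have : ∀ x, F' x = ENNReal.ofReal (fr x) := fun x => (ENNReal.ofReal_toReal (hF't x)).symm
    calc ∫⁻ x, F' x = ∫⁻ x, ENNReal.ofReal (fr x) := by simp_rw [← this]
      _ = _ := MeasureTheory.lintegral_eq_lintegral_meas_lt volume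
          (Eventually.of_forall fun x => ENNReal.toReal_nonneg) mfr.aemeasurable
  have layerG : ∫⁻ y, G' y = ∫⁻ t in Set.Ioi (0:ℝ), volume {y | t < gr y} := by
    have : ∀ y, G' y = ENNReal.ofReal (gr y) := fun y => (ENNReal.ofReal_toReal (hG't y)).symm
    calc ∫⁻ y, G' y = ∫⁻ y, ENNReal.ofReal (gr y) := by simp_rw [← this]
      _ = _ := MeasureTheory.lintegral_eq_lintegral_meas_lt volume
          (Eventually.of_forall fun x => ENNReal.toReal_nonneg) mgr.aemeasurable
  have layerH : ∫⁻ z, H z = ∫⁻ t in Set.Ioi (0:ℝ), volume {z | t < hr z} := by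
    have : ∀ z, H z = ENNReal.ofReal (hr z) := fun z => (ENNReal.ofReal_toReal (hHt z)).symm
    calc ∫⁻ z, H z = ∫⁻ z, ENNReal.ofReal (hr z) := by simp_rw [← this]
      _ = _ := MeasureTheory.lintegral_eq_lintegral_meas_lt volume
          (Eventually.of_forall fun x => ENNReal.toReal_nonneg) mhr.aemeasurable
  set mt : ℝ := m.toReal with hmtdef
  have hmtpos : 0 < mt := ENNReal.toReal_pos hm0 hmt
  -- level sets
  set Af : ℝ → Set ℝ := fun t => {x | t < fr x} with hAf
  set Bg : ℝ → Set ℝ := fun t => {y | t < gr y} with hBg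
  have hAfm : ∀ t, MeasurableSet (Af t) := fun t => measurableSet_lt measurable_const mfr
  have hBgm : ∀ t, MeasurableSet (Bg t) := fun t => measurableSet_lt measurable_const mgr
  -- vanishing beyond mt
  have hFvanish : ∀ t : ℝ, mt ≤ t → volume (Af t) = 0 := by
    intro t ht
    have h1 : m ≤ ENNReal.ofReal t := by
      rw [← ENNReal.ofReal_toReal hmt]
      exact ENNReal.ofReal_le_ofReal ht
    have h2 : ∀ᵐ x ∂(volume : Measure ℝ), F' x ≤ ENNReal.ofReal t :=
      (ENNReal.ae_le_essSup (μ := volume) F').mono fun x hx => hx.trans (hesF.le.trans h1)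
    have h3 : Af t ⊆ {x | ENNReal.ofReal t < F' x} := by
      intro x hx
      exact (ENNReal.ofReal_lt_iff_lt_toReal (hmtpos.le.trans ht) (hF't x)).2 hx
    refine measure_mono_null h3 ?_
    have h4 := ae_iff.1 h2
    simpa [not_le] using h4
  have hGvanish : ∀ t : ℝ, mt ≤ t → volume (Bg t) = 0 := by
    intro t ht
    have h1 : m ≤ ENNReal.ofReal t := by
      rw [← ENNReal.ofReal_toReal hmt]
      exact ENNReal.ofReal_le_ofReal ht
    have h2 : ∀ᵐ y ∂(volume : Measure ℝ), G' y ≤ ENNReal.ofReal t :=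
      (ENNReal.ae_le_essSup (μ := volume) G').mono fun y hy => hy.trans (hesG.le.trans h1)
    have h3 : Bg t ⊆ {y | ENNReal.ofReal t < G' y} := by
      intro y hy
      exact (ENNReal.ofReal_lt_iff_lt_toReal (hmtpos.le.trans ht) (hG't y)).2 hy
    refine measure_mono_null h3 ?_
    have h4 := ae_iff.1 h2
    simpa [not_le] using h4
  -- the key level-set estimate
  have hkey : ∀ t ∈ Set.Ioo 0 mt,
      2⁻¹ * volume (Af t) + 2⁻¹ * volume (Bg t) ≤ volume {z | t < hr z} := by
    intro t ht
    have htm : ENNReal.ofReal t < m := by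
      rw [← ENNReal.ofReal_toReal hmt]
      exact ENNReal.ofReal_lt_ofReal_iff hmtpos |>.2 ht.2
    -- nonemptiness
    have hAfne : (Af t).Nonempty := by
      by_contra hne
      rw [Set.not_nonempty_iff_eq_empty] at hne
      have : ∀ᵐ x ∂(volume : Measure ℝ), F' x ≤ ENNReal.ofReal t := by
        refine Eventually.of_forall fun x => ?_
        by_contra hlt
        have : x ∈ Af t := by
          rw [hAf]
          exact Set.mem_setOf.2 ((ENNReal.ofReal_lt_iff_lt_toReal ht.1.le (hF't x)).1 (not_le.1 hlt))
        simp [hne] at this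
      have := essSup_le_of_ae_le _ this
      rw [hesF] at this
      exact absurd (this.trans_lt htm) (lt_irrefl _)
    have hBgne : (Bg t).Nonempty := by
      by_contra hne
      rw [Set.not_nonempty_iff_eq_empty] at hne
      have : ∀ᵐ y ∂(volume : Measure ℝ), G' y ≤ ENNReal.ofReal t := by
        refine Eventually.of_forall fun y => ?_
        by_contra hlt
        have : y ∈ Bg t := by
          rw [hBg]
          exact Set.mem_setOf.2 ((ENNReal.ofReal_lt_iff_lt_toReal ht.1.le (hG't y)).1 (not_le.1 hlt))
        simp [hne] at this
      have := essSup_le_of_ae_le _ this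
      rw [hesG] at this
      exact absurd (this.trans_lt htm) (lt_irrefl _)
    -- inclusion
    have hincl : (2⁻¹ : ℝ) • Af t + (2⁻¹ : ℝ) • Bg t ⊆ {z | t < hr z} := by
      rintro z ⟨x', hx', y', hy', rfl⟩
      obtain ⟨x, hx, rfl⟩ := hx'
      obtain ⟨y, hy, rfl⟩ := hy'
      have hx2 : ENNReal.ofReal t < F' x :=
        (ENNReal.ofReal_lt_iff_lt_toReal ht.1.le (hF't x)).2 hx
      have hy2 : ENNReal.ofReal t < G' y :=
        (ENNReal.ofReal_lt_iff_lt_toReal ht.1.le (hG't y)).2 hy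
      have hmul : ENNReal.ofReal t ^ 2 < F' x * G' y := by
        rw [sq]
        exact ENNReal.mul_lt_mul hx2 hy2
      have hFG : F' x * G' y = F x * G y := by
        rw [hF', hG']
        calc c⁻¹ * F x * (c * G y) = (c⁻¹ * c) * (F x * G y) := by ring
          _ = F x * G y := by rw [ENNReal.inv_mul_cancel hc0 hct, one_mul]
      have hHz : ENNReal.ofReal t ^ 2 < (H (2⁻¹ * (x + y))) ^ 2 := by
        calc ENNReal.ofReal t ^ 2 < F' x * G' y := hmul
          _ = F x * G y := hFG
          _ ≤ _ := hyp x y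
      have hlt : ENNReal.ofReal t < H (2⁻¹ * (x + y)) := by
        by_contra hle
        push_neg at hle
        exact absurd hHz (not_lt.2 (pow_le_pow_left' hle 2))
      have hzeq : (2⁻¹ : ℝ) • x + (2⁻¹ : ℝ) • y = 2⁻¹ * (x + y) := by
        simp [smul_eq_mul]; ring
      show t < hr ((2⁻¹ : ℝ) • x + (2⁻¹ : ℝ) • y)
      rw [hzeq]
      exact (ENNReal.ofReal_lt_iff_lt_toReal ht.1.le (hHt _)).1 hlt
    calc 2⁻¹ * volume (Af t) + 2⁻¹ * volume (Bg t)
        ≤ volume ((2⁻¹ : ℝ) • Af t + (2⁻¹ : ℝ) • Bg t) :=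
          half_sumset_vol (hAfm t) (hBgm t) hAfne hBgne
      _ ≤ volume {z | t < hr z} := measure_mono hincl
  -- measurability of the level volumes
  have hvfm : Measurable fun t => volume (Af t) := by
    apply Antitone.measurable
    intro s t hst
    exact measure_mono fun x hx => lt_of_le_of_lt hst hx
  have hvgm : Measurable fun t => volume (Bg t) := by
    apply Antitone.measurable
    intro s t hst
    exact measure_mono fun x hx => lt_of_le_of_lt hst hx
  -- restrict to Ioo
  have hrestF : ∫⁻ t in Set.Ioi (0:ℝ), volume (Af t) = ∫⁻ t in Set.Ioo 0 mt, volume (Af t) := by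
    rw [← lintegral_indicator (measurableSet_Ioo (a := (0:ℝ)) (b := mt)),
      ← lintegral_indicator (measurableSet_Ioi (a := (0:ℝ)))]
    congr 1
    funext t
    rcases lt_or_ge t mt with hlt | hge
    · by_cases ht0 : 0 < t
      · simp [Set.indicator_of_mem, Set.mem_Ioo.2 ⟨ht0, hlt⟩, Set.mem_Ioi.2 ht0]
      · simp [Set.indicator_of_notMem, Set.mem_Ioo, Set.mem_Ioi, ht0]
    · have h0 : volume (Af t) = 0 := hFvanish t hge
      simp [Set.indicator_apply, Set.mem_Ioo, Set.mem_Ioi, h0, not_lt.2 hge]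
  have hrestG : ∫⁻ t in Set.Ioi (0:ℝ), volume (Bg t) = ∫⁻ t in Set.Ioo 0 mt, volume (Bg t) := by
    rw [← lintegral_indicator (measurableSet_Ioo (a := (0:ℝ)) (b := mt)),
      ← lintegral_indicator (measurableSet_Ioi (a := (0:ℝ)))]
    congr 1
    funext t
    rcases lt_or_ge t mt with hlt | hge
    · by_cases ht0 : 0 < t
      · simp [Set.indicator_of_mem, Set.mem_Ioo.2 ⟨ht0, hlt⟩, Set.mem_Ioi.2 ht0]
      · simp [Set.indicator_of_notMem, Set.mem_Ioo, Set.mem_Ioi, ht0]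
    · have h0 : volume (Bg t) = 0 := hGvanish t hge
      simp [Set.indicator_apply, Set.mem_Ioo, Set.mem_Ioi, h0, not_lt.2 hge]
  -- main estimate
  have hmain : 2⁻¹ * (∫⁻ x, F' x) + 2⁻¹ * (∫⁻ y, G' y) ≤ ∫⁻ z, H z := by
    rw [layerF, layerG, layerH, hrestF, hrestG]
    calc 2⁻¹ * (∫⁻ t in Set.Ioo 0 mt, volume (Af t)) + 2⁻¹ * (∫⁻ t in Set.Ioo 0 mt, volume (Bg t))
        = ∫⁻ t in Set.Ioo 0 mt, (2⁻¹ * volume (Af t) + 2⁻¹ * volume (Bg t)) := by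
          rw [lintegral_add_left (hvfm.const_mul _), lintegral_const_mul _ hvfm,
            lintegral_const_mul _ hvgm]
      _ ≤ ∫⁻ t in Set.Ioo 0 mt, volume {z | t < hr z} := by
          apply setLIntegral_mono' measurableSet_Ioo
          intro t ht
          exact hkey t ht
      _ ≤ ∫⁻ t in Set.Ioi (0:ℝ), volume {z | t < hr z} := by
          apply lintegral_mono_set
          exact fun t ht => ht.1
  -- conclude
  have hFint : ∫⁻ x, F' x = c⁻¹ * ∫⁻ x, F x := lintegral_const_mul _ mF
  have hGint : ∫⁻ y, G' y = c * ∫⁻ y, G y := lintegral_const_mul _ mG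
  calc (∫⁻ x, F x) * (∫⁻ y, G y)
      = (∫⁻ x, F' x) * (∫⁻ y, G' y) := by
        rw [hFint, hGint]
        calc (∫⁻ x, F x) * (∫⁻ y, G y)
            = (c⁻¹ * c) * ((∫⁻ x, F x) * (∫⁻ y, G y)) := by
              rw [ENNReal.inv_mul_cancel hc0 hct, one_mul]
          _ = c⁻¹ * (∫⁻ x, F x) * (c * (∫⁻ y, G y)) := by ring
    _ ≤ (2⁻¹ * ((∫⁻ x, F' x) + (∫⁻ y, G' y))) ^ 2 := ennreal_mul_le_sq_half _ _
    _ ≤ (∫⁻ z, H z) ^ 2 := by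
        apply pow_le_pow_left' _ 2
        rw [mul_add]
        exact hmain

end OneDim
section Truncation

open Filter

lemma min_mul_min_le_sq {u v w : ℝ≥0∞} (h : u * v ≤ w ^ 2) (n : ℝ≥0∞) :
    min u n * min v n ≤ (min w n) ^ 2 := by
  rcases le_total w n with hw | hw
  · rw [min_eq_left hw]
    calc min u n * min v n ≤ u * v := mul_le_mul' (min_le_left _ _) (min_le_left _ _)
      _ ≤ w ^ 2 := h
  · rw [min_eq_right hw, sq]
    exact mul_le_mul' (min_le_right _ _) (min_le_right _ _)

/-- 1-D midpoint Prékopa–Leindler. -/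
lemma pl_one_dim {F G H : ℝ → ℝ≥0∞} (mF : Measurable F) (mG : Measurable G)
    (mH : Measurable H)
    (hyp : ∀ x y, F x * G y ≤ (H (2⁻¹ * (x + y))) ^ 2) :
    (∫⁻ x, F x) * (∫⁻ y, G y) ≤ (∫⁻ z, H z) ^ 2 := by
  have key : ∀ n : ℕ, (∫⁻ x, min (F x) n) * (∫⁻ y, min (G y) n) ≤ (∫⁻ z, H z) ^ 2 := by
    intro n
    have h1 : (∫⁻ x, min (F x) n) * (∫⁻ y, min (G y) n) ≤ (∫⁻ z, min (H z) n) ^ 2 :=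
      pl_one_dim_bounded (mF.min measurable_const) (mG.min measurable_const)
        (mH.min measurable_const) (fun x => min_le_right _ _) (fun y => min_le_right _ _)
        (fun z => min_le_right _ _) (fun x y => min_mul_min_le_sq (hyp x y) n)
    refine h1.trans (pow_le_pow_left' (lintegral_mono fun z => min_le_left _ _) 2)
  have hmonoF : Monotone fun (n : ℕ) (x : ℝ) => min (F x) n := by
    intro i j hij x
    exact min_le_min le_rfl (Nat.cast_le.2 hij)
  have hmonoG : Monotone fun (n : ℕ) (y : ℝ) => min (G y) n := by
    intro i j hij y
    exact min_le_min le_rfl (Nat.cast_le.2 hij)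
  have hF : ∫⁻ x, F x = ⨆ n : ℕ, ∫⁻ x, min (F x) n := by
    rw [← lintegral_iSup (fun n => mF.min measurable_const) hmonoF]
    congr 1
    funext x
    exact (ennreal_isup_min_nat (F x)).symm
  have hG : ∫⁻ y, G y = ⨆ n : ℕ, ∫⁻ y, min (G y) n := by
    rw [← lintegral_iSup (fun n => mG.min measurable_const) hmonoG]
    congr 1
    funext y
    exact (ennreal_isup_min_nat (G y)).symm
  rw [hF, hG, ENNReal.iSup_mul]
  refine iSup_le fun i => ?_
  rw [ENNReal.mul_iSup]
  refine iSup_le fun j => ?_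
  calc (∫⁻ x, min (F x) i) * (∫⁻ y, min (G y) j)
      ≤ (∫⁻ x, min (F x) (max i j : ℕ)) * (∫⁻ y, min (G y) (max i j : ℕ)) := by
        exact mul_le_mul' (lintegral_mono fun x => hmonoF (le_max_left i j) x)
          (lintegral_mono fun y => hmonoG (le_max_right i j) y)
    _ ≤ (∫⁻ z, H z) ^ 2 := key _

end Truncation

section PiPL

open Filter

lemma insertNth_midpoint {n : ℕ} (i : Fin (n + 1)) (t s : ℝ) (x y : Fin n → ℝ) :
    (Fin.insertNth (α := fun _ => ℝ) i (2⁻¹ * (t + s)) ((2⁻¹ : ℝ) • (x + y)) : Fin (n + 1) → ℝ)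
      = (2⁻¹ : ℝ) • ((Fin.insertNth (α := fun _ => ℝ) i t x : Fin (n + 1) → ℝ)
          + (Fin.insertNth (α := fun _ => ℝ) i s y : Fin (n + 1) → ℝ)) := by
  funext j
  refine Fin.succAboveCases i ?_ ?_ j
  · simp [smul_eq_mul]
  · intro j'
    simp only [Fin.insertNth_apply_succAbove, Pi.smul_apply, Pi.add_apply, smul_eq_mul]

/-- Midpoint Prékopa–Leindler on `Fin n → ℝ`. -/
lemma pl_pi : ∀ (n : ℕ) (F G H : (Fin n → ℝ) → ℝ≥0∞), Measurable F → Measurable G →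
    Measurable H → (∀ x y, F x * G y ≤ (H ((2⁻¹ : ℝ) • (x + y))) ^ 2) →
    (∫⁻ x, F x) * (∫⁻ y, G y) ≤ (∫⁻ z, H z) ^ 2 := by
  intro n
  induction n with
  | zero =>
    intro F G H mF mG mH hyp
    have huniv : (volume : Measure (Fin 0 → ℝ)) Set.univ = 1 := by
      simp [MeasureTheory.volume_pi, Measure.pi_univ]
    have hint : ∀ (F : (Fin 0 → ℝ) → ℝ≥0∞), ∫⁻ x, F x = F default := by
      intro F
      rw [lintegral_unique, huniv, mul_one]
      exact congrArg F (Subsingleton.elim _ _)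
    have hd : (2⁻¹ : ℝ) • ((default : Fin 0 → ℝ) + default) = default := Subsingleton.elim _ _
    have h := hyp default default
    rw [hd] at h
    rw [hint F, hint G, hint H]
    exact h
  | succ n IH =>
    intro F G H mF mG mH hyp
    set e := MeasurableEquiv.piFinSuccAbove (fun _ : Fin (n + 1) => ℝ) 0 with he
    have hmp : MeasurePreserving e volume (volume.prod volume) :=
      volume_preserving_piFinSuccAbove (fun _ : Fin (n + 1) => ℝ) 0
    set F₂ : ℝ × (Fin n → ℝ) → ℝ≥0∞ := fun p => F (e.symm p) with hF₂
    set G₂ : ℝ × (Fin n → ℝ) → ℝ≥0∞ := fun p => G (e.symm p) with hG₂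
    set H₂ : ℝ × (Fin n → ℝ) → ℝ≥0∞ := fun p => H (e.symm p) with hH₂
    have mF₂ : Measurable F₂ := mF.comp e.symm.measurable
    have mG₂ : Measurable G₂ := mG.comp e.symm.measurable
    have mH₂ : Measurable H₂ := mH.comp e.symm.measurable
    have hsymm_apply : ∀ (t : ℝ) (x : Fin n → ℝ), e.symm (t, x) = Fin.insertNth 0 t x := by
      intro t x
      rfl
    -- marginals
    set F₁ : ℝ → ℝ≥0∞ := fun t => ∫⁻ x, F₂ (t, x) with hF₁
    set G₁ : ℝ → ℝ≥0∞ := fun s => ∫⁻ y, G₂ (s, y) with hG₁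
    set H₁ : ℝ → ℝ≥0∞ := fun u => ∫⁻ z, H₂ (u, z) with hH₁
    have mF₁ : Measurable F₁ := Measurable.lintegral_prod_right mF₂
    have mG₁ : Measurable G₁ := Measurable.lintegral_prod_right mG₂
    have mH₁ : Measurable H₁ := Measurable.lintegral_prod_right mH₂
    have hyp₁ : ∀ t s, F₁ t * G₁ s ≤ (H₁ (2⁻¹ * (t + s))) ^ 2 := by
      intro t s
      refine IH (fun x => F₂ (t, x)) (fun y => G₂ (s, y)) (fun z => H₂ (2⁻¹ * (t + s), z))
        (mF₂.comp measurable_prodMk_left) (mG₂.comp measurable_prodMk_left)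
        (mH₂.comp measurable_prodMk_left) ?_
      intro x y
      have h1 := hyp (e.symm (t, x)) (e.symm (s, y))
      have h2 : (2⁻¹ : ℝ) • (e.symm (t, x) + e.symm (s, y))
          = e.symm (2⁻¹ * (t + s), (2⁻¹ : ℝ) • (x + y)) := by
        rw [hsymm_apply, hsymm_apply, hsymm_apply, insertNth_midpoint]
      rw [h2] at h1
      exact h1
    have key := pl_one_dim mF₁ mG₁ mH₁ hyp₁
    have hFeq : ∫⁻ x, F x = ∫⁻ t, F₁ t := by
      rw [← (hmp.symm e).lintegral_comp mF]
      exact lintegral_prod _ mF₂.aemeasurable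
    have hGeq : ∫⁻ y, G y = ∫⁻ s, G₁ s := by
      rw [← (hmp.symm e).lintegral_comp mG]
      exact lintegral_prod _ mG₂.aemeasurable
    have hHeq : ∫⁻ z, H z = ∫⁻ u, H₁ u := by
      rw [← (hmp.symm e).lintegral_comp mH]
      exact lintegral_prod _ mH₂.aemeasurable
    rw [hFeq, hGeq, hHeq]
    exact key

end PiPL
section SliceLemma

/-- If all half-differences of points of a compact set `A` lie in a measurable set `S`,
then `vol A ≤ vol S`. (Difference-body inequality via Prékopa–Leindler.) -/
lemma vol_le_vol_of_midpoints {n : ℕ} {A S : Set (Fin n → ℝ)} (hA : IsCompact A)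
    (hS : MeasurableSet S) (hmid : ∀ x ∈ A, ∀ y ∈ A, (2⁻¹ : ℝ) • (x - y) ∈ S) :
    volume A ≤ volume S := by
  set B : Set (Fin n → ℝ) := -A with hB
  have hBm : MeasurableSet B := hA.neg.measurableSet
  set F : (Fin n → ℝ) → ℝ≥0∞ := A.indicator 1 with hF
  set G : (Fin n → ℝ) → ℝ≥0∞ := B.indicator 1 with hG
  set H : (Fin n → ℝ) → ℝ≥0∞ := S.indicator 1 with hH
  have mF : Measurable F := measurable_one.indicator hA.measurableSet
  have mG : Measurable G := measurable_one.indicator hBm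
  have mH : Measurable H := measurable_one.indicator hS
  have hyp : ∀ x y, F x * G y ≤ (H ((2⁻¹ : ℝ) • (x + y))) ^ 2 := by
    intro x y
    by_cases hx : x ∈ A
    · by_cases hy : y ∈ B
      · have hyA : -y ∈ A := by
          rw [hB] at hy
          simpa using hy
        have hz : (2⁻¹ : ℝ) • (x + y) ∈ S := by
          have := hmid x hx (-y) hyA
          simpa [sub_neg_eq_add] using this
        rw [hF, hG, hH, Set.indicator_of_mem hx, Set.indicator_of_mem hy,
          Set.indicator_of_mem hz]
        norm_num
      · rw [hG, Set.indicator_of_notMem hy]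
        simp
    · rw [hF, Set.indicator_of_notMem hx]
      simp
  have key := pl_pi n F G H mF mG mH hyp
  rw [hF, hG, hH] at key
  rw [lintegral_indicator_one hA.measurableSet, lintegral_indicator_one hBm,
    lintegral_indicator_one hS] at key
  have hnegvol : volume B = volume A := by
    rw [hB]
    exact Measure.measure_neg volume A
  rw [hnegvol] at key
  by_contra hlt
  push_neg at hlt
  have h2 : volume S * volume S < volume A * volume A := ENNReal.mul_lt_mul hlt hlt
  rw [sq] at key
  exact absurd (key.trans_lt h2) (lt_irrefl _)

end SliceLemma
section Main

open Filter

/-- Lemma 2: the volume of a convex 0-symmetric body is at most its thickness in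
direction e times the (k−1)-volume of its central section orthogonal to e. -/
theorem volume_le_thickness_mul_section (k : ℕ) (M : Set (EuclideanSpace ℝ (Fin k)))
    (hconv : Convex ℝ M) (hcomp : IsCompact M) (hint : (interior M).Nonempty)
    (hsymm : ∀ x ∈ M, -x ∈ M)
    (e : EuclideanSpace ℝ (Fin k)) (he : ‖e‖ = 1)
    (h : ℝ) (hh : IsLUB {r : ℝ | ∃ x ∈ M, r = 2 * (inner ℝ e x : ℝ)} h) :
    volume M ≤ ENNReal.ofReal h *
      μH[(k : ℝ) - 1] (M ∩ {x : EuclideanSpace ℝ (Fin k) | (inner ℝ e x : ℝ) = 0}) := by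
  -- k is positive
  rcases Nat.eq_zero_or_pos k with hk0 | hkpos
  · exfalso
    subst hk0
    have : e = 0 := Subsingleton.elim e 0
    rw [this, norm_zero] at he
    norm_num at he
  obtain ⟨n, rfl⟩ : ∃ n, k = n + 1 := ⟨k - 1, (Nat.succ_pred_eq_of_pos hkpos).symm⟩
  -- basic facts about M and h
  obtain ⟨x₀, hx₀⟩ := hint
  have hx₀M : x₀ ∈ M := interior_subset hx₀
  have h0M : (0 : EuclideanSpace ℝ (Fin (n + 1))) ∈ M := by
    have := hconv hx₀M (hsymm x₀ hx₀M) (by norm_num : (0:ℝ) ≤ 2⁻¹)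
      (by norm_num : (0:ℝ) ≤ 2⁻¹) (by norm_num)
    simpa using this
  have hh0 : 0 ≤ h := hh.1 ⟨0, h0M, by simp⟩
  have hub : ∀ x ∈ M, 2 * (inner ℝ e x : ℝ) ≤ h := fun x hx => hh.1 ⟨x, hx, rfl⟩
  -- orthonormal basis with b 0 = e
  have horth : Orthonormal ℝ (({0} : Set (Fin (n + 1))).restrict fun _ => e) := by
    constructor
    · intro i
      exact he
    · intro i j hij
      exact absurd (Subsingleton.elim i j) hij
  obtain ⟨b, hb⟩ := horth.exists_orthonormalBasis_extension_of_card_eq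
    (by simp [finrank_euclideanSpace_fin])
  have hb0 : b 0 = e := hb 0 rfl
  -- the coordinate map
  set T := b.repr with hT
  set meq := (MeasurableEquiv.toLp 2 (Fin (n + 1) → ℝ)).symm with hmeq
  set pfs := MeasurableEquiv.piFinSuccAbove (fun _ : Fin (n + 1) => ℝ) 0 with hpfs
  set Ψ : EuclideanSpace ℝ (Fin (n + 1)) ≃ᵐ ℝ × (Fin n → ℝ) :=
    (T.toHomeomorph.toMeasurableEquiv).trans (meq.trans pfs) with hΨdef
  have mpΨ : MeasurePreserving Ψ volume (volume.prod volume) := by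
    have h1 : MeasurePreserving T volume volume := b.measurePreserving_repr
    have h2 : MeasurePreserving meq volume volume :=
      EuclideanSpace.volume_preserving_symm_measurableEquiv_toLp (Fin (n + 1))
    have h3 : MeasurePreserving pfs volume (volume.prod volume) :=
      volume_preserving_piFinSuccAbove (fun _ : Fin (n + 1) => ℝ) 0
    exact (h3.comp (h2.comp h1))
  have hΨ_apply : ∀ x, Ψ x = (T x 0, fun j => T x ((0 : Fin (n + 1)).succAbove j)) :=
    fun x => rfl
  have hfst : ∀ x, (Ψ x).1 = (inner ℝ e x : ℝ) := by
    intro x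
    rw [hΨ_apply]
    simp only
    rw [hT, OrthonormalBasis.repr_apply_apply, hb0]
  have hΨcont : Continuous Ψ := by
    rw [hΨdef]
    simp only [MeasurableEquiv.coe_trans]
    apply Continuous.comp
    · apply Continuous.comp
      · apply continuous_prodMk.2
        constructor
        · exact continuous_apply _
        · exact continuous_pi fun j => continuous_apply _
      · rw [hmeq, MeasurableEquiv.coe_toLp_symm]
        exact PiLp.continuous_ofLp 2 _
    · exact T.continuous
  -- linearity of the second component on differences
  have hsnd : ∀ u v : EuclideanSpace ℝ (Fin (n + 1)),
      (Ψ ((2⁻¹ : ℝ) • (u - v))).2 = (2⁻¹ : ℝ) • ((Ψ u).2 - (Ψ v).2) := by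
    intro u v
    funext j
    rw [hΨ_apply, hΨ_apply, hΨ_apply]
    simp only [Pi.smul_apply, Pi.sub_apply, smul_eq_mul]
    rw [hT, _root_.map_smul, _root_.map_sub]
    simp [PiLp.smul_apply, PiLp.sub_apply, smul_eq_mul]
  -- the image body and slices
  set W : Set (ℝ × (Fin n → ℝ)) := Ψ '' M with hW
  have hWm : MeasurableSet W := Ψ.measurableSet_image.2 hcomp.measurableSet
  have hWcomp : IsCompact W := hcomp.image hΨcont
  have hvolM : volume M = (volume.prod volume) W := by
    rw [← mpΨ.measure_preimage hWm.nullMeasurableSet, hW,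
      Set.preimage_image_eq _ Ψ.injective]
  set A : ℝ → Set (Fin n → ℝ) := fun t => Prod.mk t ⁻¹' W with hA
  have hvol2 : (volume.prod volume) W = ∫⁻ t, volume (A t) := Measure.prod_apply hWm
  -- slice compactness
  have hAclosed : ∀ t, IsClosed (A t) := by
    intro t
    exact hWcomp.isClosed.preimage (Continuous.prodMk_right t)
  have hAcomp : ∀ t, IsCompact (A t) := by
    intro t
    apply IsCompact.of_isClosed_subset (hWcomp.image continuous_snd) (hAclosed t)
    intro y hy
    exact ⟨(t, y), hy, rfl⟩
  -- midpoint property of slices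
  have hmid : ∀ t, ∀ y₁ ∈ A t, ∀ y₂ ∈ A t, (2⁻¹ : ℝ) • (y₁ - y₂) ∈ A 0 := by
    intro t y₁ hy₁ y₂ hy₂
    obtain ⟨x₁, hx₁M, hx₁⟩ := hy₁
    obtain ⟨x₂, hx₂M, hx₂⟩ := hy₂
    set z := (2⁻¹ : ℝ) • (x₁ - x₂) with hz
    have hzM : z ∈ M := by
      have := hconv hx₁M (hsymm x₂ hx₂M) (by norm_num : (0:ℝ) ≤ 2⁻¹)
        (by norm_num : (0:ℝ) ≤ 2⁻¹) (by norm_num)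
      rw [hz]
      rw [smul_sub, sub_eq_add_neg, ← smul_neg]
      exact this
    have hΨz : Ψ z = (0, (2⁻¹ : ℝ) • (y₁ - y₂)) := by
      apply Prod.ext
      · rw [hfst]
        have e1 : (inner ℝ e x₁ : ℝ) = t := by rw [← hfst, hx₁]
        have e2 : (inner ℝ e x₂ : ℝ) = t := by rw [← hfst, hx₂]
        rw [hz, real_inner_smul_right, inner_sub_right, e1, e2]
        simp
      · rw [hz, hsnd]
        rw [hx₁, hx₂]
    exact ⟨z, hzM, hΨz⟩
  -- slice volume bound
  have hslice : ∀ t, volume (A t) ≤ volume (A 0) := by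
    intro t
    exact vol_le_vol_of_midpoints (hAcomp t) (hAcomp 0).measurableSet (hmid t)
  -- slices vanish outside [-h/2, h/2]
  have hrange : ∀ t, (A t).Nonempty → t ∈ Set.Icc (-(h/2)) (h/2) := by
    intro t ⟨y, hy⟩
    obtain ⟨x, hxM, hx⟩ := hy
    have e1 : (inner ℝ e x : ℝ) = t := by rw [← hfst, hx]
    constructor
    · have := hub (-x) (hsymm x hxM)
      rw [inner_neg_right, e1] at this
      linarith
    · have := hub x hxM
      rw [e1] at this
      linarith
  -- integrate
  have hbound : volume M ≤ ENNReal.ofReal h * volume (A 0) := by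
    rw [hvolM, hvol2]
    calc ∫⁻ t, volume (A t)
        ≤ ∫⁻ t, (Set.Icc (-(h/2)) (h/2)).indicator (fun _ => volume (A 0)) t := by
          apply lintegral_mono
          intro t
          rcases Set.eq_empty_or_nonempty (A t) with hemp | hne
          · simp [hemp]
          · rw [Set.indicator_of_mem (hrange t hne)]
            exact hslice t
      _ = volume (A 0) * volume (Set.Icc (-(h/2)) (h/2)) :=
          lintegral_indicator_const measurableSet_Icc _
      _ = ENNReal.ofReal h * volume (A 0) := by
          rw [Real.volume_Icc, show h/2 - -(h/2) = h by ring, mul_comm]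
  refine hbound.trans ?_
  gcongr
  -- Hausdorff measure comparison
  have hexp : ((n + 1 : ℕ) : ℝ) - 1 = (n : ℝ) := by push_cast; ring
  rw [hexp]
  set Csec := M ∩ {x : EuclideanSpace ℝ (Fin (n + 1)) | (inner ℝ e x : ℝ) = 0} with hCsec
  rcases Nat.eq_zero_or_pos n with hn0 | hnpos
  · -- 0-dimensional case
    subst hn0
    have h1 : volume (A 0) ≤ 1 := by
      have : volume (Set.univ : Set (Fin 0 → ℝ)) = 1 := by
        simp [MeasureTheory.volume_pi, Measure.pi_univ]
      rw [← this]
      exact measure_mono (Set.subset_univ _)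
    have h2 : (1 : ℝ≥0∞) ≤ μH[((0:ℕ) : ℝ)] Csec := by
      rw [Nat.cast_zero]
      apply MeasureTheory.Measure.one_le_hausdorffMeasure_zero_of_nonempty
      exact ⟨0, h0M, by simp⟩
    exact h1.trans h2
  -- positive-dimensional case
  have : Nonempty (Fin n) := Fin.pos_iff_nonempty.1 hnpos
  -- volume = Hausdorff measure on pi space
  have hpi : volume (A 0) = μH[(n : ℝ)] (A 0) := by
    rw [← MeasureTheory.hausdorffMeasure_pi_real (ι := Fin n)]
    congr
    simp [Fintype.card_fin]
  rw [hpi]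
  -- the 1-Lipschitz projection
  set r : EuclideanSpace ℝ (Fin (n + 1)) → (Fin n → ℝ) := fun x => (Ψ x).2 with hr
  have hcoord : ∀ (v : EuclideanSpace ℝ (Fin (n + 1))) (i : Fin (n + 1)), |T v i| ≤ ‖v‖ := by
    intro v i
    have h1 : ‖T v‖ = ‖v‖ := T.norm_map v
    rw [← h1, EuclideanSpace.norm_eq]
    have h2 : |T v i| = Real.sqrt (‖T v i‖ ^ 2) := by
      rw [Real.sqrt_sq_eq_abs]
      simp
    rw [h2]
    apply Real.sqrt_le_sqrt
    exact Finset.single_le_sum (f := fun i => ‖T v i‖ ^ 2)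
      (fun j _ => sq_nonneg _) (Finset.mem_univ i)
  have hrlip : LipschitzWith 1 r := by
    apply LipschitzWith.of_dist_le_mul
    intro x y
    rw [NNReal.coe_one, one_mul]
    rw [hr]
    have : ∀ j, dist ((Ψ x).2 j) ((Ψ y).2 j) ≤ dist x y := by
      intro j
      rw [hΨ_apply, hΨ_apply]
      simp only
      rw [Real.dist_eq, dist_eq_norm]
      have : T x ((0 : Fin (n+1)).succAbove j) - T y ((0 : Fin (n+1)).succAbove j)
          = T (x - y) ((0 : Fin (n+1)).succAbove j) := by
        rw [map_sub]; simp
      rw [this]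
      exact hcoord (x - y) _
    exact dist_pi_le_iff dist_nonneg |>.2 this
  -- A 0 is contained in the image of the section
  have hsub : A 0 ⊆ r '' Csec := by
    intro y hy
    obtain ⟨x, hxM, hx⟩ := hy
    refine ⟨x, ⟨hxM, ?_⟩, ?_⟩
    · show (inner ℝ e x : ℝ) = 0
      rw [← hfst x, hx]
    · show (Ψ x).2 = y
      rw [hx]
  calc μH[(n : ℝ)] (A 0) ≤ μH[(n : ℝ)] (r '' Csec) := measure_mono hsub
    _ ≤ (1 : ℝ≥0) ^ (n : ℝ) * μH[(n : ℝ)] Csec :=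
        hrlip.hausdorffMeasure_image_le (Nat.cast_nonneg n) Csec
    _ = μH[(n : ℝ)] Csec := by simp

end Main
end
end

section
/- Let m be a positive integer and Θ a real 1×m matrix. Then α(ᵗΘ) ≥ (α_×(Θ) − m) / ((m−1)·α_×(Θ) + m), where if α_×(Θ) = +∞ the right-hand side is interpreted as 1/(m−1) when m ≥ 2 and as +∞ when m = 1. -/
open MeasureTheory Filter Matrix

noncomputable section

/-- For every sufficiently large t there are x ∈ ℤ^m \ {0}, y ∈ ℤ^n with
Π'(x) ≤ t and Π(Θx − y) ≤ t^{−γ}. -/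
def UnifMultApprox (n m : ℕ) (Θ : Matrix (Fin n) (Fin m) ℝ) (γ : ℝ) : Prop :=
  ∀ᶠ t : ℝ in Filter.atTop, ∃ x : Fin m → ℤ, ∃ y : Fin n → ℤ, x ≠ 0 ∧
    Pigeo' (ivec x) ≤ t ∧ Pigeo (Θ.mulVec (ivec x) - ivec y) ≤ t ^ (-γ)

/-- The uniform multiplicative Diophantine exponent α_×(Θ), as an extended real. -/
def malpha (n m : ℕ) (Θ : Matrix (Fin n) (Fin m) ℝ) : EReal :=
  sSup {x : EReal | ∃ γ : ℝ, x = (γ : EReal) ∧ UnifMultApprox n m Θ γ}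

/-- For every sufficiently large t there are x ∈ ℤ^m \ {0}, y ∈ ℤ^n with
|x|_∞ ≤ t and |Θx − y|_∞ ≤ t^{−γ}. -/
def UnifOrdApprox (n m : ℕ) (Θ : Matrix (Fin n) (Fin m) ℝ) (γ : ℝ) : Prop :=
  ∀ᶠ t : ℝ in Filter.atTop, ∃ x : Fin m → ℤ, ∃ y : Fin n → ℤ, x ≠ 0 ∧
    ‖ivec x‖ ≤ t ∧ ‖Θ.mulVec (ivec x) - ivec y‖ ≤ t ^ (-γ)

/-- The uniform (ordinary) Diophantine exponent α(Θ), as an extended real. -/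
def oalpha (n m : ℕ) (Θ : Matrix (Fin n) (Fin m) ℝ) : EReal :=
  sSup {x : EReal | ∃ γ : ℝ, x = (γ : EReal) ∧ UnifOrdApprox n m Θ γ}

section HelpersX
open Submodule


lemma eventually_mul_rpow_lt (C : ℝ) {a b : ℝ} (h : a < b) :
    ∀ᶠ s : ℝ in atTop, C * s ^ a < s ^ b := by
  filter_upwards [eventually_ge_atTop (1:ℝ),
      (tendsto_rpow_atTop (by linarith : (0:ℝ) < b - a)).eventually_gt_atTop C] with s hs1 hsC
  have hs0 : (0:ℝ) < s := lt_of_lt_of_le one_pos hs1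
  have hb : s ^ b = s ^ (b - a) * s ^ a := by
    rw [← Real.rpow_add hs0]; ring_nf
  rw [hb]
  exact mul_lt_mul_of_pos_right hsC (Real.rpow_pos_of_pos hs0 a)

/-- Minkowski's theorem for a box pulled back by an invertible matrix. -/
lemma minkowski_box {n : ℕ} (M : Matrix (Fin n) (Fin n) ℝ) (hdet : M.det ≠ 0)
    (c : Fin n → ℝ) (hc : ∀ k, 0 < c k)
    (hvol : 2 ^ n * |M.det| < ∏ k, (2 * c k)) :
    ∃ z : Fin n → ℤ, z ≠ 0 ∧ ∀ k, |M.mulVec (fun i => (z i : ℝ)) k| ≤ c k := by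
  classical
  set b := Pi.basisFun ℝ (Fin n) with hb
  set L : AddSubgroup (Fin n → ℝ) := (span ℤ (Set.range ⇑b)).toAddSubgroup with hL
  have fund := ZSpan.isAddFundamentalDomain' b (volume : Measure (Fin n → ℝ))
  set s : Set (Fin n → ℝ) := (Matrix.toLin' M) ⁻¹' (Set.Icc (-c) c) with hs
  have hsymm : ∀ v ∈ s, -v ∈ s := by
    intro v hv
    simp only [hs, Set.mem_preimage, map_neg, Set.mem_Icc] at hv ⊢
    exact ⟨neg_le_neg hv.2, by simpa using neg_le_neg hv.1⟩
  have hconv : Convex ℝ s := (convex_Icc (-c) c).linear_preimage _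
  have hF : (volume : Measure (Fin n → ℝ)) (ZSpan.fundamentalDomain b) = 1 := by
    rw [hb, ZSpan.fundamentalDomain_pi_basisFun, volume_pi_pi]
    simp
  have hdet' : LinearMap.det (Matrix.toLin' M) ≠ 0 := by
    rwa [LinearMap.det_toLin']
  have hprodpos : (0:ℝ) < ∏ k, (2 * c k) :=
    Finset.prod_pos (fun k _ => by linarith [hc k])
  have hμs : (volume : Measure (Fin n → ℝ)) s
      = ENNReal.ofReal (|(M.det)⁻¹| * ∏ k, (2 * c k)) := by
    rw [hs, Measure.addHaar_preimage_linearMap _ hdet', LinearMap.det_toLin']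
    rw [ENNReal.ofReal_mul (by positivity)]
    congr 1
    rw [Real.volume_Icc_pi, ← ENNReal.ofReal_prod_of_nonneg
      (fun i _ => by simp only [Pi.neg_apply, sub_neg_eq_add]; linarith [hc i])]
    congr 1
    exact Finset.prod_congr rfl (fun i _ => by simp [Pi.neg_apply]; ring)
  have hlt : (volume : Measure (Fin n → ℝ)) (ZSpan.fundamentalDomain b) *
      2 ^ Module.finrank ℝ (Fin n → ℝ) < volume s := by
    rw [hF, one_mul, hμs, Module.finrank_pi, Fintype.card_fin]
    have h2 : (2:ENNReal) ^ n = ENNReal.ofReal ((2:ℝ) ^ n) := by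
      rw [ENNReal.ofReal_pow (by norm_num)]
      norm_num
    rw [h2, ENNReal.ofReal_lt_ofReal_iff (by positivity)]
    rw [abs_inv, ← div_eq_inv_mul]
    rw [lt_div_iff₀ (abs_pos.mpr hdet)]
    linarith [hvol]
  haveI : Countable ↥L := (inferInstance : Countable (span ℤ (Set.range ⇑b)))
  obtain ⟨ξ, hξ0, hξs⟩ :=
    exists_ne_zero_mem_lattice_of_measure_mul_two_pow_lt_measure (L := L) fund hsymm hconv hlt
  have hmem : (ξ : Fin n → ℝ) ∈ span ℤ (Set.range ⇑b) := ξ.2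
  have hz : ∀ i, ∃ zi : ℤ, (zi : ℝ) = (ξ : Fin n → ℝ) i := by
    intro i
    obtain ⟨zi, hzi⟩ := (b.mem_span_iff_repr_mem ℤ _).mp hmem i
    exact ⟨zi, by simpa [hb] using hzi⟩
  choose z hzeq using hz
  have hzv : (fun i => (z i : ℝ)) = (ξ : Fin n → ℝ) := funext hzeq
  refine ⟨z, ?_, ?_⟩
  · intro h
    apply hξ0
    have : (ξ : Fin n → ℝ) = 0 := by
      rw [← hzv, h]; funext i; simp
    exact Subtype.ext this
  · intro k
    have hmem2 : Matrix.toLin' M (ξ : Fin n → ℝ) ∈ Set.Icc (-c) c := hξs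
    rw [Set.mem_Icc] at hmem2
    rw [← hzv] at hmem2
    have h1 := hmem2.1 k
    have h2 := hmem2.2 k
    rw [Matrix.toLin'_apply] at h1 h2
    rw [abs_le]
    exact ⟨by simpa using h1, h2⟩


lemma Pigeo_fin_one (w : Fin 1 → ℝ) : Pigeo w = |w 0| := by
  unfold Pigeo
  rw [Fin.prod_univ_one]
  norm_num

set_option maxHeartbeats 1000000 in
lemma core_transfer (m : ℕ) (hm : 0 < m) (Θ : Matrix (Fin 1) (Fin m) ℝ)
    (γ β : ℝ) (hβ : 0 < β) (hγ : 0 < γ)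
    (hkey : (m:ℝ) * (1 + β) < γ * (1 - ((m:ℝ) - 1) * β))
    (happ : UnifMultApprox 1 m Θ γ) :
    UnifOrdApprox m 1 Θᵀ β := by
  classical
  have hm' : (0:ℝ) < m := by exact_mod_cast hm
  have hm1 : (1:ℝ) ≤ m := by exact_mod_cast hm
  -- choice of the auxiliary exponent τ
  set τ : ℝ := ((1+β)/γ + (1 - ((m:ℝ)-1)*β)/m) / 2 with hτdef
  have hdlt : (1+β)/γ < (1 - ((m:ℝ)-1)*β)/m := by
    rw [div_lt_div_iff₀ hγ hm']
    nlinarith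
  have hτ1 : (1+β)/γ < τ := by rw [hτdef]; linarith
  have hτ2 : τ < (1 - ((m:ℝ)-1)*β)/m := by rw [hτdef]; linarith
  have hτ0 : 0 < τ := lt_trans (div_pos (by linarith) hγ) hτ1
  have hA : τ * m < 1 - β * ((m:ℝ)-1) := by
    have := (lt_div_iff₀ hm').mp hτ2
    nlinarith
  have hB : 1 + β < τ * γ := by
    have := (div_lt_iff₀ hγ).mp hτ1
    nlinarith
  have hcast : ((m - 1 : ℕ) : ℝ) = (m:ℝ) - 1 := by
    rw [Nat.cast_sub hm]; simp
  -- the eventual statement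
  filter_upwards [(tendsto_rpow_atTop hτ0).eventually happ,
    eventually_ge_atTop (1:ℝ),
    eventually_mul_rpow_lt (2 * (2*(m:ℝ))^(m-1)) (show τ * m < 1 - β * ((m:ℝ)-1) from hA),
    eventually_mul_rpow_lt 2 (show 1 - τ*γ < -β by nlinarith)] with s hs hs1 hev4 hev5
  have hs0 : (0:ℝ) < s := lt_of_lt_of_le one_pos hs1
  set t : ℝ := s ^ τ with htdef
  have ht0 : 0 < t := Real.rpow_pos_of_pos hs0 τ
  obtain ⟨x, yv, hx0, hPx, hPe⟩ := hs
  set θ : Fin m → ℝ := fun i => Θ 0 i with hθdef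
  set y : ℤ := yv 0 with hydef
  set ε : ℝ := Θ.mulVec (ivec x) 0 - (y : ℝ) with hεdef
  have hψ : |ε| ≤ t ^ (-γ) := by
    have h := hPe
    rw [Pigeo_fin_one] at h
    simpa [hεdef, ivec, hydef] using h
  set X : Fin m → ℝ := fun i => max 1 |(x i : ℝ)| with hXdef
  have hX1 : ∀ i, 1 ≤ X i := fun i => le_max_left _ _
  have hX0 : ∀ i, 0 < X i := fun i => lt_of_lt_of_le one_pos (hX1 i)
  have hxabs : ∀ i, |(x i : ℝ)| ≤ X i := fun i => le_max_right _ _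
  set P : ℝ := ∏ i, X i with hPdef
  have hP0 : 0 < P := Finset.prod_pos (fun i _ => hX0 i)
  have hPt : P ≤ t ^ (m:ℕ) := by
    have h1 : Pigeo' (ivec x) = P ^ ((1:ℝ)/m) := rfl
    have h2 : (P ^ ((1:ℝ)/m)) ^ (m:ℕ) ≤ t ^ (m:ℕ) :=
      pow_le_pow_left₀ (Real.rpow_nonneg hP0.le _) (h1 ▸ hPx) m
    rwa [← Real.rpow_natCast (P ^ ((1:ℝ)/m)) m, ← Real.rpow_mul hP0.le,
      one_div, inv_mul_cancel₀ (by exact_mod_cast hm.ne'), Real.rpow_one] at h2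
  obtain ⟨i0, hi0⟩ : ∃ i, x i ≠ 0 := Function.ne_iff.mp hx0
  have hxi0 : (1:ℝ) ≤ |(x i0 : ℝ)| := by
    have : (1:ℤ) ≤ |x i0| := Int.one_le_abs hi0
    calc (1:ℝ) ≤ ((|x i0| : ℤ) : ℝ) := by exact_mod_cast this
      _ = |(x i0 : ℝ)| := by push_cast; ring
  have hXi0 : X i0 = |(x i0 : ℝ)| := max_eq_right hxi0
  set D : ℝ := s ^ (-β) / (2*m) with hDdef
  have hsβ0 : 0 < s ^ (-β) := Real.rpow_pos_of_pos hs0 _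
  have hD0 : 0 < D := div_pos hsβ0 (by linarith)
  have hsβ1 : s ^ (-β) ≤ 1 := Real.rpow_le_one_of_one_le_of_nonpos hs1 (by linarith)
  have hD1 : D < 1 := by
    rw [hDdef, div_lt_one (by linarith)]
    linarith
  -- the box bounds
  set c : Fin (m+1) → ℝ := Fin.cons s (fun j => if j = i0 then 1/2 else D / X j) with hcdef
  have hc : ∀ k, 0 < c k := by
    intro k
    refine Fin.cases ?_ ?_ k
    · rw [hcdef, Fin.cons_zero]; exact hs0
    · intro j
      rw [hcdef, Fin.cons_succ]
      split_ifs
      · norm_num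
      · exact div_pos hD0 (hX0 j)
  -- the matrices
  set S : Matrix (Fin (m+1)) (Fin (m+1)) ℝ := Matrix.of fun r c =>
    Fin.cases (Fin.cases (1:ℝ) (fun _ => 0) c)
      (fun i => Fin.cases (θ i) (fun j => if i = j then (-1:ℝ) else 0) c) r with hSdef
  set w : Fin (m+1) → ℝ :=
    (Fin.cons (-ε) (fun k => (x k : ℝ))) - Pi.single i0.succ 1 with hwdef
  set C : Matrix (Fin (m+1)) (Fin (m+1)) ℝ :=
    1 + Matrix.replicateCol Unit (Pi.single i0.succ (1:ℝ)) * Matrix.replicateRow Unit w with hCdef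
  set M : Matrix (Fin (m+1)) (Fin (m+1)) ℝ := C * S with hMdef
  have hdetS : S.det = (-1)^m := by
    rw [Matrix.det_of_lowerTriangular S ?_]
    · rw [Fin.prod_univ_succ]
      simp [hSdef]
    · intro i j hij
      have hij' : i < j := hij
      rcases Fin.eq_zero_or_eq_succ j with rfl | ⟨j', rfl⟩
      · exact absurd hij' (Fin.not_lt_zero i)
      · rcases Fin.eq_zero_or_eq_succ i with rfl | ⟨i', rfl⟩
        · simp [hSdef]
        · have hne : i' ≠ j' := ne_of_lt (Fin.succ_lt_succ_iff.mp hij')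
          simp [hSdef, hne]
  have hdetC : C.det = (x i0 : ℝ) := by
    rw [hCdef, Matrix.det_one_add_replicateCol_mul_replicateRow]
    rw [dotProduct_single]
    rw [hwdef]
    simp
  have hdetM : |M.det| = |(x i0 : ℝ)| := by
    rw [hMdef, Matrix.det_mul, hdetC, hdetS, abs_mul, abs_pow, abs_neg, abs_one,
      one_pow, mul_one]
  have hdM0 : M.det ≠ 0 := by
    intro h
    rw [h, abs_zero] at hdetM
    exact absurd hdetM.symm (abs_ne_zero.mpr (by exact_mod_cast hi0))
  -- mulVec formulas
  have hu0 : ∀ v : Fin (m+1) → ℝ, S.mulVec v 0 = v 0 := by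
    intro v
    simp [hSdef, Matrix.mulVec, dotProduct, Fin.sum_univ_succ]
  have husucc : ∀ (v : Fin (m+1) → ℝ) (i : Fin m),
      S.mulVec v i.succ = θ i * v 0 - v i.succ := by
    intro v i
    simp [hSdef, Matrix.mulVec, dotProduct, Fin.sum_univ_succ, ite_mul,
      Finset.sum_ite_eq, sub_eq_add_neg]
  have hCv : ∀ (u' : Fin (m+1) → ℝ) (r : Fin (m+1)),
      C.mulVec u' r = u' r + (Pi.single i0.succ (1:ℝ) : Fin (m+1) → ℝ) r * (w ⬝ᵥ u') := by
    intro u' r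
    rw [hCdef, Matrix.add_mulVec, Matrix.one_mulVec, Pi.add_apply]
    congr 1
    simp only [Matrix.mulVec, dotProduct, Matrix.mul_apply, Matrix.replicateCol_apply,
      Matrix.replicateRow_apply, Finset.univ_unique, Finset.sum_singleton]
    rw [Finset.mul_sum]
    exact Finset.sum_congr rfl (fun c _ => by ring)
  have hMv : ∀ v : Fin (m+1) → ℝ, M.mulVec v = C.mulVec (S.mulVec v) := by
    intro v
    rw [hMdef, ← Matrix.mulVec_mulVec]
  have hM0 : ∀ v : Fin (m+1) → ℝ, M.mulVec v 0 = v 0 := by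
    intro v
    rw [hMv, hCv, hu0, Pi.single_eq_of_ne (Ne.symm (Fin.succ_ne_zero i0)), zero_mul, add_zero]
  have hMsucc : ∀ (v : Fin (m+1) → ℝ) (j : Fin m), j ≠ i0 →
      M.mulVec v j.succ = θ j * v 0 - v j.succ := by
    intro v j hj
    rw [hMv, hCv, husucc, Pi.single_eq_of_ne (fun h => hj (Fin.succ_inj.mp h)), zero_mul, add_zero]
  have hΘsum : Θ.mulVec (ivec x) 0 = ∑ i, (x i : ℝ) * θ i := by
    simp [Matrix.mulVec, dotProduct, ivec, hθdef, mul_comm]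
  have hMi0 : ∀ v : Fin (m+1) → ℝ,
      M.mulVec v i0.succ = (y:ℝ) * v 0 - ∑ k, (x k : ℝ) * v k.succ := by
    intro v
    rw [hMv, hCv, Pi.single_eq_same, one_mul, hwdef, sub_dotProduct,
      single_dotProduct, one_mul, husucc]
    have hdc : (Fin.cons (-ε) (fun k => (x k : ℝ)) : Fin (m+1) → ℝ) ⬝ᵥ S.mulVec v
        = -ε * v 0 + ∑ i, (x i : ℝ) * (θ i * v 0 - v i.succ) := by
      rw [dotProduct, Fin.sum_univ_succ, Fin.cons_zero, hu0]
      congr 1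
      exact Finset.sum_congr rfl (fun i _ => by rw [Fin.cons_succ, husucc])
    rw [hdc]
    have hsplit : ∑ i, (x i : ℝ) * (θ i * v 0 - v i.succ)
        = (∑ i, (x i : ℝ) * θ i) * v 0 - ∑ i, (x i : ℝ) * v i.succ := by
      rw [Finset.sum_mul, ← Finset.sum_sub_distrib]
      exact Finset.sum_congr rfl (fun i _ => by ring)
    rw [hsplit]
    have hε' : ε = (∑ i, (x i : ℝ) * θ i) - (y:ℝ) := by rw [hεdef, hΘsum]
    rw [hε']
    ring
  -- volume condition
  have hK0 : (0:ℝ) < (2*(m:ℝ))^(m-1) := pow_pos (by linarith) _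
  have htm : t ^ (m:ℕ) = s ^ (τ * (m:ℝ)) := by
    rw [htdef, ← Real.rpow_natCast (s ^ τ) m, ← Real.rpow_mul hs0.le]
  have hE : s * (s ^ (-β)) ^ (m-1:ℕ) = s ^ (1 - β * ((m:ℝ)-1)) := by
    rw [← Real.rpow_natCast (s ^ (-β)) (m-1), ← Real.rpow_mul hs0.le, hcast]
    nth_rewrite 1 [← Real.rpow_one s]
    rw [← Real.rpow_add hs0]
    congr 1
    ring
  have hkey2 : 2 * P < s * D ^ (m-1:ℕ) := by
    have hsd : s * D ^ (m-1:ℕ) = s ^ (1 - β * ((m:ℝ)-1)) / (2*(m:ℝ))^(m-1:ℕ) := by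
      rw [hDdef, div_pow, ← hE]
      ring
    rw [hsd, lt_div_iff₀ hK0]
    calc 2 * P * (2*(m:ℝ))^(m-1:ℕ) = 2 * (2*(m:ℝ))^(m-1:ℕ) * P := by ring
      _ ≤ 2 * (2*(m:ℝ))^(m-1:ℕ) * (t ^ (m:ℕ)) :=
          mul_le_mul_of_nonneg_left hPt (by positivity)
      _ = 2 * (2*(m:ℝ))^(m-1:ℕ) * s ^ (τ * (m:ℝ)) := by rw [htm]
      _ < s ^ (1 - β * ((m:ℝ)-1)) := hev4
  set Pe : ℝ := ∏ j ∈ Finset.univ.erase i0, X j with hPedef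
  have hPe0 : 0 < Pe := Finset.prod_pos (fun j _ => hX0 j)
  have hPesplit : X i0 * Pe = P := Finset.mul_prod_erase _ _ (Finset.mem_univ i0)
  have hcard : (Finset.univ.erase i0).card = m - 1 := by
    rw [Finset.card_erase_of_mem (Finset.mem_univ i0), Finset.card_univ, Fintype.card_fin]
  have hvol : 2 ^ (m+1) * |M.det| < ∏ k, (2 * c k) := by
    have hprod : ∏ k, (2 * c k)
        = 2 * s * ((2*D)^(m-1:ℕ) / Pe) := by
      rw [Fin.prod_univ_succ]
      have h0 : 2 * c 0 = 2 * s := by rw [hcdef, Fin.cons_zero]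
      have h1 : ∀ j : Fin m, 2 * c j.succ = if j = i0 then 1 else 2*D / X j := by
        intro j
        rw [hcdef, Fin.cons_succ]
        split_ifs
        · norm_num
        · ring
      rw [h0, Finset.prod_congr rfl (fun j _ => h1 j)]
      rw [← Finset.mul_prod_erase _ _ (Finset.mem_univ i0), if_pos rfl, one_mul]
      rw [Finset.prod_congr rfl (fun j hj => if_neg (Finset.ne_of_mem_erase hj))]
      rw [Finset.prod_div_distrib, Finset.prod_const, hcard, ← hPedef]
    rw [hprod, hdetM, ← hXi0]
    rw [mul_div_assoc', lt_div_iff₀ hPe0]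
    have hXiPe : 2 ^ (m+1) * X i0 * Pe = 2 ^ (m+1) * P := by
      rw [mul_assoc, hPesplit]
    rw [hXiPe]
    have h2m : ((2:ℝ))^(m+1) * P = (2:ℝ)^(m-1:ℕ) * (4 * P) := by
      rw [show m + 1 = (m-1) + 2 by omega, pow_add]
      ring
    have h2rhs : 2 * s * (2*D)^(m-1:ℕ) = (2:ℝ)^(m-1:ℕ) * (2 * (s * D ^ (m-1:ℕ))) := by
      rw [mul_pow]
      ring
    rw [h2m, h2rhs]
    have h2pos : (0:ℝ) < (2:ℝ)^(m-1:ℕ) := by positivity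
    apply mul_lt_mul_of_pos_left _ h2pos
    linarith
  -- apply Minkowski
  obtain ⟨z, hz0, hzb⟩ := minkowski_box M hdM0 c hc hvol
  set v : Fin (m+1) → ℝ := fun i => (z i : ℝ) with hvdef
  have hb0 : |v 0| ≤ s := by
    have := hzb 0
    rwa [hM0, hcdef, Fin.cons_zero] at this
  have hbj : ∀ j : Fin m, j ≠ i0 → |θ j * v 0 - v j.succ| ≤ D / X j := by
    intro j hj
    have := hzb j.succ
    rwa [hMsucc _ _ hj, hcdef, Fin.cons_succ, if_neg hj] at this
  have hbi : |(y:ℝ) * v 0 - ∑ k, (x k : ℝ) * v k.succ| ≤ 1/2 := by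
    have := hzb i0.succ
    rwa [hMi0, hcdef, Fin.cons_succ, if_pos rfl] at this
  -- integrality of the last form
  have hYzero : (y:ℝ) * v 0 = ∑ k, (x k : ℝ) * v k.succ := by
    set Y : ℤ := y * z 0 - ∑ k, x k * z k.succ with hYdef
    have hYcast : (Y:ℝ) = (y:ℝ) * v 0 - ∑ k, (x k : ℝ) * v k.succ := by
      rw [hYdef]
      push_cast
      rfl
    have : |Y| < 1 := by
      have h1 : |(Y:ℝ)| < 1 := by rw [hYcast]; linarith [hbi, abs_nonneg ((y:ℝ) * v 0 - ∑ k, (x k : ℝ) * v k.succ)]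
      exact_mod_cast h1
    have hY0 : Y = 0 := Int.abs_lt_one_iff.mp this
    have := hYcast
    rw [hY0] at this
    simp only [Int.cast_zero] at this
    linarith [this.symm.le, this.symm.ge]
  have hvv : ∀ i, v i = (z i : ℝ) := fun i => rfl
  have hDXle : ∀ j : Fin m, D / X j ≤ D := by
    intro j
    rw [div_le_iff₀ (hX0 j)]
    exact le_mul_of_one_le_right hD0.le (hX1 j)
  -- the first coordinate is nonzero
  have hq0 : z 0 ≠ 0 := by
    intro hzz
    have hv00 : v 0 = 0 := by rw [hvv, hzz, Int.cast_zero]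
    have hzsucc : ∀ j : Fin m, j ≠ i0 → z j.succ = 0 := by
      intro j hj
      have h := hbj j hj
      rw [hv00, mul_zero, zero_sub, abs_neg] at h
      have h2 : |v j.succ| < 1 := lt_of_le_of_lt (h.trans (hDXle j)) hD1
      rw [hvv] at h2
      have h3 : |z j.succ| < 1 := by exact_mod_cast h2
      exact Int.abs_lt_one_iff.mp h3
    have hsum : ∑ k, (x k : ℝ) * v k.succ = (x i0 : ℝ) * v i0.succ := by
      rw [← Finset.add_sum_erase _ _ (Finset.mem_univ i0)]
      rw [Finset.sum_eq_zero, add_zero]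
      intro j hj
      rw [hvv, hzsucc j (Finset.ne_of_mem_erase hj), Int.cast_zero, mul_zero]
    have hz00 : (x i0 : ℝ) * v i0.succ = 0 := by
      rw [← hsum, ← hYzero, hv00, mul_zero]
    have hvi0 : v i0.succ = 0 := by
      rcases mul_eq_zero.mp hz00 with h | h
      · exact absurd h (by exact_mod_cast hi0)
      · exact h
    rw [hvv] at hvi0
    have hzi0 : z i0.succ = 0 := by exact_mod_cast hvi0
    apply hz0
    funext k
    refine Fin.cases ?_ ?_ k
    · exact hzz
    · intro j
      rcases eq_or_ne j i0 with rfl | hj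
      · exact hzi0
      · exact hzsucc j hj
  -- bound on the i0 coordinate
  have hε' : ε = (∑ i, (x i : ℝ) * θ i) - (y:ℝ) := by rw [hεdef, hΘsum]
  have hident : (x i0:ℝ) * (θ i0 * v 0 - v i0.succ)
      = ε * v 0 - ∑ j ∈ Finset.univ.erase i0, (x j:ℝ) * (θ j * v 0 - v j.succ) := by
    have hfull : ∑ j, (x j:ℝ) * (θ j * v 0 - v j.succ) = ε * v 0 := by
      have hsplit : ∑ j, (x j : ℝ) * (θ j * v 0 - v j.succ)
          = (∑ j, (x j : ℝ) * θ j) * v 0 - ∑ j, (x j : ℝ) * v j.succ := by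
        rw [Finset.sum_mul, ← Finset.sum_sub_distrib]
        exact Finset.sum_congr rfl (fun j _ => by ring)
      rw [hsplit, ← hYzero, hε']
      ring
    rw [← Finset.add_sum_erase _ _ (Finset.mem_univ i0)] at hfull
    linarith
  have hsumbound : ∑ j ∈ Finset.univ.erase i0, |(x j:ℝ) * (θ j * v 0 - v j.succ)|
      ≤ ((m:ℝ) - 1) * D := by
    have h1 : ∀ j ∈ Finset.univ.erase i0, |(x j:ℝ) * (θ j * v 0 - v j.succ)| ≤ D := by
      intro j hj
      rw [abs_mul]
      calc |(x j:ℝ)| * |θ j * v 0 - v j.succ| ≤ X j * (D / X j) := by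
            apply mul_le_mul (hxabs j) (hbj j (Finset.ne_of_mem_erase hj))
              (abs_nonneg _) (hX0 j).le
        _ = D := by field_simp [(hX0 j).ne']
    calc ∑ j ∈ Finset.univ.erase i0, |(x j:ℝ) * (θ j * v 0 - v j.succ)|
        ≤ ∑ _j ∈ Finset.univ.erase i0, D := Finset.sum_le_sum h1
      _ = ((m:ℝ) - 1) * D := by
          rw [Finset.sum_const, hcard, nsmul_eq_mul, hcast]
  have hi0bound : |θ i0 * v 0 - v i0.succ| ≤ ((m:ℝ)-1) * D + s * t^(-γ) := by
    have hxle : |θ i0 * v 0 - v i0.succ| ≤ |(x i0:ℝ)| * |θ i0 * v 0 - v i0.succ| :=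
      le_mul_of_one_le_left (abs_nonneg _) hxi0
    have habs : |(x i0:ℝ)| * |θ i0 * v 0 - v i0.succ|
        = |(x i0:ℝ) * (θ i0 * v 0 - v i0.succ)| := (abs_mul _ _).symm
    have h2 : |(x i0:ℝ) * (θ i0 * v 0 - v i0.succ)|
        ≤ |ε| * |v 0| + ∑ j ∈ Finset.univ.erase i0, |(x j:ℝ) * (θ j * v 0 - v j.succ)| := by
      rw [hident]
      calc |ε * v 0 - ∑ j ∈ Finset.univ.erase i0, (x j:ℝ) * (θ j * v 0 - v j.succ)|
          ≤ |ε * v 0| + |∑ j ∈ Finset.univ.erase i0, (x j:ℝ) * (θ j * v 0 - v j.succ)| :=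
            abs_sub _ _
        _ ≤ |ε| * |v 0| + ∑ j ∈ Finset.univ.erase i0, |(x j:ℝ) * (θ j * v 0 - v j.succ)| := by
            rw [abs_mul]
            exact add_le_add le_rfl (Finset.abs_sum_le_sum_abs _ _)
    have h3 : |ε| * |v 0| ≤ t^(-γ) * s :=
      mul_le_mul hψ hb0 (abs_nonneg _) (Real.rpow_pos_of_pos ht0 _).le
    calc |θ i0 * v 0 - v i0.succ| ≤ |ε| * |v 0| + ∑ j ∈ Finset.univ.erase i0,
          |(x j:ℝ) * (θ j * v 0 - v j.succ)| := le_trans hxle (habs ▸ h2)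
      _ ≤ t^(-γ) * s + ((m:ℝ)-1) * D := add_le_add h3 hsumbound
      _ = ((m:ℝ)-1) * D + s * t^(-γ) := by ring
  have hst : s * t^(-γ) = s ^ (1 - τ*γ) := by
    rw [htdef, ← Real.rpow_mul hs0.le]
    nth_rewrite 1 [← Real.rpow_one s]
    rw [← Real.rpow_add hs0]
    congr 1
    ring
  have hfinalb : ((m:ℝ)-1) * D + s * t^(-γ) ≤ s ^ (-β) := by
    have h5 : s ^ (1-τ*γ) ≤ s^(-β)/2 := by linarith [hev5]
    have hmD : ((m:ℝ)-1)*D ≤ s^(-β)/2 := by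
      have hfrac : ((m:ℝ)-1)/(2*m) ≤ 1/2 := by
        rw [div_le_div_iff₀ (by linarith) (by norm_num : (0:ℝ) < 2)]
        linarith
      calc ((m:ℝ)-1) * D = (((m:ℝ)-1)/(2*m)) * s^(-β) := by rw [hDdef]; ring
        _ ≤ (1/2) * s^(-β) := mul_le_mul_of_nonneg_right hfrac hsβ0.le
        _ = s^(-β)/2 := by ring
    rw [hst]
    linarith
  have hDle : D ≤ s ^ (-β) := by
    rw [hDdef]
    exact div_le_self hsβ0.le (by linarith)
  -- assemble the solution
  refine ⟨fun _ => z 0, fun i => z i.succ, ?_, ?_, ?_⟩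
  · intro h
    exact hq0 (congrFun h 0)
  · rw [pi_norm_le_iff_of_nonneg hs0.le]
    intro i
    simpa [ivec, Real.norm_eq_abs] using hb0
  · rw [pi_norm_le_iff_of_nonneg hsβ0.le]
    intro i
    have hcomp : (Θᵀ.mulVec (ivec (fun _ => z 0)) - ivec (fun i => z i.succ)) i
        = θ i * v 0 - v i.succ := by
      simp [Matrix.mulVec, dotProduct, ivec, Matrix.transpose_apply, hθdef,
        Fin.sum_univ_one, hvv]
    rw [hcomp, Real.norm_eq_abs]
    rcases eq_or_ne i i0 with rfl | hi
    · exact le_trans hi0bound hfinalb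
    · exact le_trans (le_trans (hbj i hi) (hDXle i)) hDle


lemma unifMult_mono {n m : ℕ} {Θ : Matrix (Fin n) (Fin m) ℝ} {γ γ' : ℝ}
    (h : UnifMultApprox n m Θ γ) (hle : γ' ≤ γ) : UnifMultApprox n m Θ γ' := by
  filter_upwards [h, eventually_ge_atTop (1:ℝ)] with t ht ht1
  obtain ⟨x, y, hx, h1, h2⟩ := ht
  exact ⟨x, y, hx, h1, h2.trans (Real.rpow_le_rpow_of_exponent_le ht1 (by linarith))⟩

lemma mem_of_lt_malpha {m : ℕ} {Θ : Matrix (Fin 1) (Fin m) ℝ} {γ : ℝ}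
    (h : (γ:EReal) < malpha 1 m Θ) : UnifMultApprox 1 m Θ γ := by
  unfold malpha at h
  obtain ⟨e, ⟨γ', rfl, hγ'⟩, hlt⟩ := lt_sSup_iff.mp h
  exact unifMult_mono hγ' (by exact_mod_cast hlt.le)

lemma le_oalpha_of_forall {m : ℕ} (T : Matrix (Fin m) (Fin 1) ℝ) (r : ℝ)
    (h : ∀ β : ℝ, β < r → UnifOrdApprox m 1 T β) : (r : EReal) ≤ oalpha m 1 T := by
  unfold oalpha
  by_contra hc
  push_neg at hc
  obtain ⟨β, h1, h2⟩ := EReal.exists_between_coe_real hc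
  have hmem : ((β:ℝ):EReal) ∈ {x : EReal | ∃ γ : ℝ, x = (γ:EReal) ∧ UnifOrdApprox m 1 T γ} :=
    ⟨β, rfl, h β (by exact_mod_cast h2)⟩
  exact absurd (le_sSup hmem) (not_le.mpr h1)

lemma oalpha_eq_top_of_forall {m : ℕ} (T : Matrix (Fin m) (Fin 1) ℝ)
    (h : ∀ β : ℝ, UnifOrdApprox m 1 T β) : oalpha m 1 T = ⊤ := by
  unfold oalpha
  refine le_antisymm le_top ?_
  by_contra hc
  push_neg at hc
  obtain ⟨β, h1, -⟩ := EReal.exists_between_coe_real hc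
  have hmem : ((β:ℝ):EReal) ∈ {x : EReal | ∃ γ : ℝ, x = (γ:EReal) ∧ UnifOrdApprox m 1 T γ} :=
    ⟨β, rfl, h β⟩
  exact absurd (le_sSup hmem) (not_le.mpr h1)

lemma unifMultApprox_zero (m : ℕ) (hm : 0 < m) (Θ : Matrix (Fin 1) (Fin m) ℝ) :
    UnifMultApprox 1 m Θ 0 := by
  classical
  filter_upwards [eventually_ge_atTop (1:ℝ)] with t ht
  set x : Fin m → ℤ := Pi.single ⟨0,hm⟩ 1 with hx
  refine ⟨x, fun _ => round (Θ.mulVec (ivec x) 0), ?_, ?_, ?_⟩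
  · intro h
    have := congrFun h ⟨0,hm⟩
    rw [hx] at this
    simp at this
  · have hall : ∀ i, max 1 |ivec x i| = 1 := by
      intro i
      rcases eq_or_ne i ⟨0,hm⟩ with rfl | h
      · rw [hx]; simp [ivec]
      · rw [hx]; simp [ivec, Pi.single_apply, h]
    unfold Pigeo'
    rw [Finset.prod_congr rfl (fun i _ => hall i), Finset.prod_const_one, Real.one_rpow]
    exact ht
  · rw [Pigeo_fin_one, neg_zero, Real.rpow_zero]
    have h := abs_sub_round (Θ.mulVec (ivec x) 0)
    have h2 : (Θ.mulVec (ivec x) - ivec (fun _ : Fin 1 => round (Θ.mulVec (ivec x) 0))) 0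
        = Θ.mulVec (ivec x) 0 - (round (Θ.mulVec (ivec x) 0) : ℝ) := by
      simp [ivec]
    rw [h2]
    linarith

lemma unifOrdApprox_nonpos (m : ℕ) (hm : 0 < m) (T : Matrix (Fin m) (Fin 1) ℝ) {β : ℝ}
    (hβ : β ≤ 0) : UnifOrdApprox m 1 T β := by
  filter_upwards [eventually_ge_atTop (1:ℝ)] with t ht
  refine ⟨fun _ => 1, fun i => round (T.mulVec (ivec (fun _ => 1)) i), ?_, ?_, ?_⟩
  · intro h
    have := congrFun h 0
    simp at this
  · rw [pi_norm_le_iff_of_nonneg (by linarith)]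
    intro i
    simp only [ivec, Int.cast_one, norm_one]
    exact ht
  · have h1 : (1:ℝ) ≤ t ^ (-β) := Real.one_le_rpow ht (by linarith)
    rw [pi_norm_le_iff_of_nonneg (by linarith)]
    intro i
    have h2 := abs_sub_round (T.mulVec (ivec fun _ => (1:ℤ)) i)
    have h3 : (T.mulVec (ivec (fun _ : Fin 1 => (1:ℤ))) - ivec (fun i : Fin m => round (T.mulVec (ivec (fun _ : Fin 1 => 1)) i))) i
        = T.mulVec (ivec fun _ => (1:ℤ)) i - (round (T.mulVec (ivec fun _ => (1:ℤ)) i) : ℝ) := by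
      simp [ivec]
    rw [h3, Real.norm_eq_abs]
    linarith

end HelpersX

/-- Corollary 8: for n = 1, α(ᵗΘ) ≥ (α_×(Θ) − m)/((m−1) α_×(Θ) + m), where for
α_×(Θ) = +∞ the right-hand side is read as 1/(m−1) if m ≥ 2, and as +∞ if m = 1. -/
theorem oalpha_transpose_ge_of_malpha (m : ℕ) (hm : 0 < m)
    (Θ : Matrix (Fin 1) (Fin m) ℝ) :
    (malpha 1 m Θ ≠ ⊤ →
      oalpha m 1 Θᵀ ≥ ((((malpha 1 m Θ).toReal - m) /
        (((m : ℝ) - 1) * (malpha 1 m Θ).toReal + m) : ℝ) : EReal)) ∧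
    (malpha 1 m Θ = ⊤ → m = 1 → oalpha m 1 Θᵀ = ⊤) ∧
    (malpha 1 m Θ = ⊤ → 2 ≤ m → oalpha m 1 Θᵀ ≥ (((1 : ℝ) / ((m : ℝ) - 1) : ℝ) : EReal)) := by
  have hm' : (0:ℝ) < m := by exact_mod_cast hm
  have hmal0 : (0:EReal) ≤ malpha 1 m Θ := by
    have h0 : ((0:ℝ):EReal) ∈ {x : EReal | ∃ γ:ℝ, x = (γ:EReal) ∧ UnifMultApprox 1 m Θ γ} :=
      ⟨0, rfl, unifMultApprox_zero m hm Θ⟩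
    simpa [malpha] using le_sSup h0
  have hnebot : malpha 1 m Θ ≠ ⊥ := fun h => by simp [h] at hmal0
  refine ⟨?_, ?_, ?_⟩
  · intro htop
    set a : ℝ := (malpha 1 m Θ).toReal with hadef
    have hacoe : ((a:ℝ):EReal) = malpha 1 m Θ := EReal.coe_toReal htop hnebot
    have ha0 : 0 ≤ a := by
      have : ((0:ℝ):EReal) ≤ ((a:ℝ):EReal) := by rw [hacoe]; simpa using hmal0
      exact_mod_cast this
    apply le_oalpha_of_forall
    intro β hβr
    rcases le_or_gt β 0 with hβ | hβ
    · exact unifOrdApprox_nonpos m hm Θᵀ hβ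
    · have hm1 : (1:ℝ) ≤ m := by exact_mod_cast hm
      have hden : 0 < ((m:ℝ)-1)*a + m := by
        nlinarith [mul_nonneg (by linarith : (0:ℝ) ≤ (m:ℝ)-1) ha0]
      have hβr' : β * (((m:ℝ)-1)*a + m) < a - m := (lt_div_iff₀ hden).mp hβr
      have hma : (m:ℝ)*(1+β) < a*(1 - ((m:ℝ)-1)*β) := by nlinarith [hβr']
      have h1mb : 0 < 1 - ((m:ℝ)-1)*β := by
        by_contra hcon
        push_neg at hcon
        nlinarith [mul_nonpos_of_nonneg_of_nonpos ha0 hcon, hma, mul_pos hm' hβ]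
      set γ0 : ℝ := (m:ℝ)*(1+β)/(1 - ((m:ℝ)-1)*β) with hγ0def
      have hγ0pos : 0 < γ0 := div_pos (by nlinarith [mul_pos hm' hβ]) h1mb
      have hγ0a : γ0 < a := by
        rw [hγ0def, div_lt_iff₀ h1mb]
        exact hma
      set γ : ℝ := (γ0 + a)/2 with hγdef
      have hγpos : 0 < γ := by rw [hγdef]; linarith
      have hγa : γ < a := by rw [hγdef]; linarith
      have hγ0γ : γ0 < γ := by rw [hγdef]; linarith
      have hkey : (m:ℝ)*(1+β) < γ*(1 - ((m:ℝ)-1)*β) := by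
        calc (m:ℝ)*(1+β) = γ0 * (1 - ((m:ℝ)-1)*β) := (div_mul_cancel₀ _ h1mb.ne').symm
          _ < γ * (1 - ((m:ℝ)-1)*β) := mul_lt_mul_of_pos_right hγ0γ h1mb
      have happ : UnifMultApprox 1 m Θ γ := by
        apply mem_of_lt_malpha
        rw [← hacoe]
        exact_mod_cast hγa
      exact core_transfer m hm Θ γ β hβ hγpos hkey happ
  · intro htop hm1
    subst hm1
    apply oalpha_eq_top_of_forall
    intro β
    rcases le_or_gt β 0 with hβ | hβ
    · exact unifOrdApprox_nonpos 1 Nat.one_pos Θᵀ hβ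
    · have hkey : ((1:ℕ):ℝ)*(1+β) < (β+2)*(1 - (((1:ℕ):ℝ)-1)*β) := by
        push_cast
        nlinarith
      have happ : UnifMultApprox 1 1 Θ (β+2) := by
        apply mem_of_lt_malpha
        rw [htop]
        exact EReal.coe_lt_top _
      exact core_transfer 1 Nat.one_pos Θ (β+2) β hβ (by linarith) hkey happ
  · intro htop hm2
    apply le_oalpha_of_forall
    intro β hβr
    rcases le_or_gt β 0 with hβ | hβ
    · exact unifOrdApprox_nonpos m hm Θᵀ hβ
    · have hm2' : (2:ℝ) ≤ m := by exact_mod_cast hm2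
      have h1mb : 0 < 1 - ((m:ℝ)-1)*β := by
        have h := (lt_div_iff₀ (by linarith : (0:ℝ) < (m:ℝ)-1)).mp hβr
        linarith
      set γ0 : ℝ := (m:ℝ)*(1+β)/(1 - ((m:ℝ)-1)*β) with hγ0def
      have hγ0pos : 0 < γ0 := div_pos (by nlinarith [mul_pos hm' hβ]) h1mb
      have hkey : (m:ℝ)*(1+β) < (γ0+1)*(1 - ((m:ℝ)-1)*β) := by
        calc (m:ℝ)*(1+β) = γ0 * (1 - ((m:ℝ)-1)*β) := (div_mul_cancel₀ _ h1mb.ne').symm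
          _ < (γ0+1) * (1 - ((m:ℝ)-1)*β) := mul_lt_mul_of_pos_right (by linarith) h1mb
      have happ : UnifMultApprox 1 m Θ (γ0+1) := by
        apply mem_of_lt_malpha
        rw [htop]
        exact EReal.coe_lt_top _
      exact core_transfer m hm Θ (γ0+1) β hβ (by linarith) hkey happ
end
end

section
/- Let n be a positive integer and Θ a real n×1 matrix. Then α_×(Θ) ≥ α(Θ) ≥ (n·α_×(Θ) − 1) / (n(n−1)·α_×(Θ) + n² − n + 1), where if α_×(Θ) = +∞ the lower bound is interpreted as 1/(n(n−1)) when n ≥ 2 and as +∞ when n = 1. -/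
open MeasureTheory Filter Matrix

noncomputable section

lemma pigeon (N : ℕ) (hN : 0 < N) {n : ℕ} (S : Finset (Fin n)) (β : Fin n → ℝ) :
    ∃ k : ℕ, 0 < k ∧ k ≤ N ^ S.card ∧ ∀ i ∈ S, ∃ Y : ℤ, |k * β i - Y| ≤ 1 / N := by
  have hNR : (0:ℝ) < N := by exact_mod_cast hN
  have hbox : ∀ (j : ℕ) (i : Fin n), (⌊(N:ℝ) * Int.fract (j * β i)⌋).toNat < N := by
    intro j i
    have h1 : (N:ℝ) * Int.fract (j * β i) < N := by
      nlinarith [Int.fract_lt_one ((j:ℝ) * β i)]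
    have : ⌊(N:ℝ) * Int.fract (j * β i)⌋ < (N:ℤ) :=
      Int.floor_lt.2 (by exact_mod_cast h1)
    omega
  set F : Fin (N ^ S.card + 1) → (S → Fin N) :=
    fun j i => ⟨(⌊(N:ℝ) * Int.fract ((j:ℕ) * β i)⌋).toNat, hbox j i⟩ with hF
  have hcard : Fintype.card (S → Fin N) < Fintype.card (Fin (N ^ S.card + 1)) := by
    simp [Fintype.card_fun]
  obtain ⟨j₁, j₂, hne, heq⟩ := Fintype.exists_ne_map_eq_of_card_lt F hcard
  -- wlog j₁ < j₂
  have main : ∀ j₁ j₂ : Fin (N ^ S.card + 1), j₁ < j₂ → F j₁ = F j₂ →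
      ∃ k : ℕ, 0 < k ∧ k ≤ N ^ S.card ∧ ∀ i ∈ S, ∃ Y : ℤ, |k * β i - Y| ≤ 1 / N := by
    clear hne heq j₁ j₂
    intro j₁ j₂ hlt heq
    refine ⟨(j₂:ℕ) - (j₁:ℕ), by omega, ?_, ?_⟩
    · have := j₂.isLt; omega
    · intro i hi
      have hfi : ((⌊(N:ℝ) * Int.fract ((j₁:ℕ) * β i)⌋)) = ⌊(N:ℝ) * Int.fract ((j₂:ℕ) * β i)⌋ := by
        have := congrFun heq ⟨i, hi⟩
        have h1 : (0:ℝ) ≤ (N:ℝ) * Int.fract ((j₁:ℕ) * β i) :=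
          mul_nonneg hNR.le (Int.fract_nonneg _)
        have h2 : (0:ℝ) ≤ (N:ℝ) * Int.fract ((j₂:ℕ) * β i) :=
          mul_nonneg hNR.le (Int.fract_nonneg _)
        have e1 := Int.floor_nonneg.2 h1
        have e2 := Int.floor_nonneg.2 h2
        have := congrArg (Fin.val) this
        simp only [hF] at this
        omega
      set u := Int.fract ((j₁:ℕ) * β i) with hu
      set v := Int.fract ((j₂:ℕ) * β i) with hv
      have huv : |v - u| ≤ 1 / N := by
        have l1 : (⌊(N:ℝ) * u⌋ : ℝ) ≤ N * u := Int.floor_le _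
        have l2 : (N:ℝ) * u < ⌊(N:ℝ) * u⌋ + 1 := Int.lt_floor_add_one _
        have l3 : (⌊(N:ℝ) * v⌋ : ℝ) ≤ N * v := Int.floor_le _
        have l4 : (N:ℝ) * v < ⌊(N:ℝ) * v⌋ + 1 := Int.lt_floor_add_one _
        rw [← hfi] at l3 l4
        have h7 : |(N:ℝ) * (v - u)| ≤ 1 := abs_le.2 ⟨by nlinarith, by nlinarith⟩
        calc |v - u| = |(N:ℝ) * (v - u)| / N := by
              rw [abs_mul, abs_of_nonneg hNR.le]; field_simp
          _ ≤ 1 / N := by gcongr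
      refine ⟨⌊((j₂:ℕ):ℝ) * β i⌋ - ⌊((j₁:ℕ):ℝ) * β i⌋, ?_⟩
      have hcast : (((j₂:ℕ) - (j₁:ℕ) : ℕ) : ℝ) = ((j₂:ℕ):ℝ) - ((j₁:ℕ):ℝ) := by
        have : (j₁:ℕ) ≤ (j₂:ℕ) := le_of_lt hlt
        push_cast [this]; ring
      have hfr1 : ((j₁:ℕ):ℝ) * β i = ⌊((j₁:ℕ):ℝ) * β i⌋ + u := by rw [hu]; exact (Int.floor_add_fract _).symm
      have hfr2 : ((j₂:ℕ):ℝ) * β i = ⌊((j₂:ℕ):ℝ) * β i⌋ + v := by rw [hv]; exact (Int.floor_add_fract _).symm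
      have : (((j₂:ℕ) - (j₁:ℕ) : ℕ) : ℝ) * β i -
          ((⌊((j₂:ℕ):ℝ) * β i⌋ - ⌊((j₁:ℕ):ℝ) * β i⌋ : ℤ) : ℝ) = v - u := by
        rw [hcast]; push_cast; nlinarith [hfr1, hfr2]
      rw [this]; exact huv
  rcases lt_or_gt_of_ne hne with hlt | hlt
  · exact main j₁ j₂ hlt heq
  · exact main j₂ j₁ hlt heq.symm

variable {n m : ℕ} {Θ : Matrix (Fin n) (Fin m) ℝ}

lemma mult_mono {γ γ' : ℝ} (h : γ ≤ γ') (H : UnifMultApprox n m Θ γ') :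
    UnifMultApprox n m Θ γ := by
  filter_upwards [H, eventually_ge_atTop (1:ℝ)] with t ht ht1
  obtain ⟨x, y, h0, h1, h2⟩ := ht
  exact ⟨x, y, h0, h1, h2.trans (Real.rpow_le_rpow_of_exponent_le ht1 (by linarith))⟩

lemma ord_mono {γ γ' : ℝ} (h : γ ≤ γ') (H : UnifOrdApprox n m Θ γ') :
    UnifOrdApprox n m Θ γ := by
  filter_upwards [H, eventually_ge_atTop (1:ℝ)] with t ht ht1
  obtain ⟨x, y, h0, h1, h2⟩ := ht
  exact ⟨x, y, h0, h1, h2.trans (Real.rpow_le_rpow_of_exponent_le ht1 (by linarith))⟩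

lemma ord_zero (hn : 0 < n) (Θ : Matrix (Fin n) (Fin 1) ℝ) : UnifOrdApprox n 1 Θ 0 := by
  filter_upwards [eventually_ge_atTop (1:ℝ)] with t ht1
  refine ⟨fun _ => 1, fun i => round (Θ i 0), ?_, ?_, ?_⟩
  · intro h; simpa using congrFun h 0
  · have : ‖ivec (fun _ => (1:ℤ) : Fin 1 → ℤ)‖ ≤ 1 := by
      refine (pi_norm_le_iff_of_nonneg zero_le_one).2 fun i => ?_
      simp [ivec]
    linarith
  · rw [neg_zero, Real.rpow_zero]
    refine (pi_norm_le_iff_of_nonneg zero_le_one).2 fun i => ?_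
    have : (Θ.mulVec (ivec fun _ => 1) - ivec fun i => round (Θ i 0)) i
        = Θ i 0 - round (Θ i 0) := by
      simp [Matrix.mulVec, ivec, dotProduct]
    rw [this]
    have := abs_sub_round (Θ i 0)
    rw [Real.norm_eq_abs]; linarith

lemma mult_zero (hn : 0 < n) (Θ : Matrix (Fin n) (Fin 1) ℝ) : UnifMultApprox n 1 Θ 0 := by
  filter_upwards [eventually_ge_atTop (1:ℝ)] with t ht1
  refine ⟨fun _ => 1, fun i => round (Θ i 0), ?_, ?_, ?_⟩
  · intro h; simpa using congrFun h 0
  · have : Pigeo' (ivec (fun _ => (1:ℤ) : Fin 1 → ℤ)) = 1 := by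
      simp [Pigeo', ivec]
    linarith
  · rw [neg_zero, Real.rpow_zero, Pigeo]
    have hle : ∏ i, |(Θ.mulVec (ivec fun _ => 1) - ivec fun i => round (Θ i 0)) i| ≤ 1 := by
      apply Finset.prod_le_one (fun i _ => abs_nonneg _)
      intro i _
      have : (Θ.mulVec (ivec fun _ => 1) - ivec fun i => round (Θ i 0)) i
          = Θ i 0 - round (Θ i 0) := by
        simp [Matrix.mulVec, ivec, dotProduct]
      rw [this]
      have := abs_sub_round (Θ i 0)
      linarith
    calc (∏ i, |(Θ.mulVec (ivec fun _ => 1) - ivec fun i => round (Θ i 0)) i|) ^ ((1:ℝ)/n)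
        ≤ 1 ^ ((1:ℝ)/n) := Real.rpow_le_rpow (Finset.prod_nonneg fun i _ => abs_nonneg _) hle (by positivity)
      _ = 1 := Real.one_rpow _

lemma transfer_s15 (n : ℕ) (hn : 0 < n) (Θ : Matrix (Fin n) (Fin 1) ℝ) (γ : ℝ) (hγ : 0 < γ)
    (H : UnifMultApprox n 1 Θ γ) (δ : ℝ) (hδ0 : 0 < δ)
    (hδ : δ < γ / (n + (n - 1) * γ)) : UnifOrdApprox n 1 Θ δ := by
  have hn1 : (1:ℝ) ≤ n := by exact_mod_cast hn
  have hnR : (0:ℝ) < n := by linarith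
  have hd : (0:ℝ) < n + ((n:ℝ) - 1) * γ := by nlinarith
  set c : ℝ := n / (n + ((n:ℝ) - 1) * γ) with hc
  have hc0 : 0 < c := div_pos hnR hd
  have hcg : c * γ / n = γ / (n + ((n:ℝ) - 1) * γ) := by
    rw [hc]; field_simp
  set e : ℝ := c * γ / n - δ with he
  have he0 : 0 < e := by rw [he, hcg]; linarith
  obtain ⟨t₀, ht₀⟩ := eventually_atTop.1 H
  have Ec : ∀ᶠ T : ℝ in atTop, max t₀ 1 ≤ T ^ c :=
    (tendsto_rpow_atTop hc0).eventually_ge_atTop (max t₀ 1)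
  have Ee : ∀ᶠ T : ℝ in atTop, (2:ℝ) ≤ T ^ e :=
    (tendsto_rpow_atTop he0).eventually_ge_atTop 2
  filter_upwards [eventually_ge_atTop (1:ℝ), Ec, Ee] with T hT1 hTc hTe
  have hT0 : (0:ℝ) < T := by linarith
  set t : ℝ := T ^ c with htdef
  have ht1 : (1:ℝ) ≤ t := le_trans (le_max_right _ _) hTc
  have ht0 : (0:ℝ) < t := by linarith
  obtain ⟨x, y, hx0, hPx, hPz⟩ := ht₀ t (le_trans (le_max_left _ _) hTc)
  set ξ : ℤ := x 0 with hξ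
  have hξ0 : ξ ≠ 0 := by
    intro h
    apply hx0
    funext i
    rw [Subsingleton.elim i 0]
    exact h
  have habsξ : (1:ℝ) ≤ |(ξ:ℝ)| := by
    rw [← Int.cast_abs]
    exact_mod_cast Int.one_le_abs hξ0
  have hξt : |(ξ:ℝ)| ≤ t := by
    have hP : Pigeo' (ivec x) = max 1 |(ξ:ℝ)| := by
      simp [Pigeo', ivec, hξ]
    rw [hP] at hPx
    exact le_trans (le_max_right _ _) hPx
  set β : Fin n → ℝ := Θ.mulVec (ivec x) with hβ
  set z : Fin n → ℝ := fun i => |β i - (y i : ℝ)| with hz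
  have hz0 : ∀ i, 0 ≤ z i := fun i => abs_nonneg _
  -- product bound
  have hprodz : ∏ i, z i ≤ t ^ (-γ * n) := by
    have h0 : (0:ℝ) ≤ ∏ i, z i := Finset.prod_nonneg fun i _ => hz0 i
    have hP : (∏ i, z i) ^ ((1:ℝ)/n) ≤ t ^ (-γ) := by
      have : Pigeo (Θ.mulVec (ivec x) - ivec y) = (∏ i, z i) ^ ((1:ℝ)/n) := by
        unfold Pigeo
        congr 1
      rw [this] at hPz
      exact hPz
    have h2 := Real.rpow_le_rpow (Real.rpow_nonneg h0 _) hP (le_of_lt hnR)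
    rw [← Real.rpow_mul h0, one_div, inv_mul_cancel₀ (ne_of_gt hnR), Real.rpow_one,
      ← Real.rpow_mul ht0.le] at h2
    exact h2
  -- choose N
  set N : ℕ := ⌊t ^ (γ/n)⌋₊ with hNdef
  have hu1 : (1:ℝ) ≤ t ^ (γ/n) := by
    have := Real.rpow_le_rpow_of_exponent_le ht1 (by positivity : (0:ℝ) ≤ γ/n)
    rwa [Real.rpow_zero] at this
  have hN1 : 1 ≤ N := Nat.le_floor (by exact_mod_cast hu1)
  have hN0R : (0:ℝ) < N := by exact_mod_cast hN1
  have hNle : (N:ℝ) ≤ t ^ (γ/n) := Nat.floor_le (by positivity)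
  have hN2 : t ^ (γ/n) < 2 * N := by
    have := Nat.lt_floor_add_one (t ^ (γ/n))
    have h2 : (1:ℝ) ≤ (N:ℝ) := by exact_mod_cast hN1
    rw [← hNdef] at this
    linarith
  set K : ℕ := N ^ (n - 1) with hK
  have hK1 : 1 ≤ K := Nat.one_le_pow _ _ hN1
  have hK0R : (0:ℝ) < K := by exact_mod_cast hK1
  set S : Finset (Fin n) := Finset.univ.filter (fun i => 1/(N:ℝ) < (K:ℝ) * z i) with hS
  have hScard : S.card < n := by
    by_contra hcon
    push_neg at hcon
    have hcard : S.card = n := le_antisymm (by simpa using S.card_le_univ) hcon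
    have hSuniv : S = Finset.univ := Finset.eq_univ_of_card S (by simpa using hcard)
    have hall : ∀ i : Fin n, ((N:ℝ)^n)⁻¹ < z i := by
      intro i
      have hi : i ∈ S := hSuniv ▸ Finset.mem_univ i
      rw [hS, Finset.mem_filter] at hi
      have h3 : (N:ℝ) * K = (N:ℝ)^n := by
        rw [hK]
        push_cast
        rw [← pow_succ']
        congr 1
        omega
      have := hi.2
      rw [div_lt_iff₀ hN0R] at this
      calc ((N:ℝ)^n)⁻¹ = 1 / ((N:ℝ) * K) := by rw [h3, one_div]
        _ < z i := by
            rw [div_lt_iff₀ (by positivity)]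
            nlinarith
    have hstrict : (((N:ℝ)^n)⁻¹)^n < ∏ i, z i := by
      have := Finset.prod_lt_prod_of_nonempty
        (f := fun _ : Fin n => ((N:ℝ)^n)⁻¹) (g := z)
        (fun i _ => by positivity) (fun i _ => hall i)
        (Finset.univ_nonempty_iff.2 ⟨⟨0, hn⟩⟩)
      simpa [Finset.prod_const, Finset.card_univ] using this
    have hupper : t ^ (-γ * n) ≤ (((N:ℝ)^n)⁻¹)^n := by
      have hNn : ((N:ℝ)^n)^n ≤ t ^ (γ * n) := by
        have h1 : (N:ℝ)^n ≤ t ^ γ := by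
          calc (N:ℝ)^n ≤ (t ^ (γ/n))^n := pow_le_pow_left₀ (by positivity) hNle n
            _ = t ^ γ := by
                rw [← Real.rpow_natCast (t ^ (γ/n)) n, ← Real.rpow_mul ht0.le]
                congr 1
                field_simp
        calc ((N:ℝ)^n)^n ≤ (t ^ γ)^n := pow_le_pow_left₀ (by positivity) h1 n
          _ = t ^ (γ * n) := by
              rw [← Real.rpow_natCast (t ^ γ) n, ← Real.rpow_mul ht0.le]
      have hpos : (0:ℝ) < t ^ (γ * n) := Real.rpow_pos_of_pos ht0 _
      rw [neg_mul, Real.rpow_neg ht0.le, inv_pow]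
      exact inv_anti₀ (by positivity) hNn
    exact absurd (lt_of_lt_of_le hstrict (le_trans hprodz hupper)) (lt_irrefl _)
  -- pigeonhole
  obtain ⟨k, hk0, hkcard, hkY⟩ := pigeon N hN1 S β
  have hkK : k ≤ K := le_trans hkcard (Nat.pow_le_pow_right hN1 (by omega))
  have hkKR : (k:ℝ) ≤ K := by exact_mod_cast hkK
  have hk0R : (0:ℝ) < k := by exact_mod_cast hk0
  refine ⟨fun _ => (k:ℤ) * ξ, fun i => if h : i ∈ S then Classical.choose (hkY i h)
    else (k:ℤ) * y i, ?_, ?_, ?_⟩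
  · intro h
    have := congrFun h 0
    simp only [Pi.zero_apply] at this
    exact absurd this (mul_ne_zero (by exact_mod_cast hk0.ne') hξ0)
  · -- size bound
    refine (pi_norm_le_iff_of_nonneg (by linarith)).2 fun i => ?_
    have : ‖ivec (fun _ => (k:ℤ) * ξ : Fin 1 → ℤ) i‖ = (k:ℝ) * |(ξ:ℝ)| := by
      simp [ivec, abs_mul]
    rw [this]
    have step1 : (k:ℝ) * |(ξ:ℝ)| ≤ (K:ℝ) * t :=
      mul_le_mul hkKR hξt (by linarith) (by positivity)
    have hKle : (K:ℝ) ≤ (t ^ (γ/n)) ^ (n-1 : ℕ) := by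
      rw [hK]
      push_cast
      exact pow_le_pow_left₀ (by positivity) hNle _
    have step2 : (K:ℝ) * t ≤ (t ^ (γ/n)) ^ (n-1 : ℕ) * t :=
      mul_le_mul_of_nonneg_right hKle ht0.le
    have step3 : (t ^ (γ/n)) ^ (n-1 : ℕ) * t = T := by
      rw [← Real.rpow_natCast (t ^ (γ/n)) (n-1), ← Real.rpow_mul ht0.le]
      nth_rewrite 2 [← Real.rpow_one t]
      rw [← Real.rpow_add ht0, htdef, ← Real.rpow_mul hT0.le]
      have hcast : ((n-1:ℕ):ℝ) = (n:ℝ) - 1 := by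
        rw [Nat.cast_sub hn]; simp
      have hexp : c * (γ/n * ((n-1:ℕ):ℝ) + 1) = 1 := by
        rw [hcast, hc]; field_simp; ring
      rw [hexp, Real.rpow_one]
    linarith [step1, step2, step3.le, step3.ge]
  · -- error bound
    have key : ∀ i : Fin n, Θ.mulVec (ivec (fun _ => (k:ℤ) * ξ : Fin 1 → ℤ)) i = k * β i := by
      intro i
      rw [hβ]
      simp [Matrix.mulVec, dotProduct, ivec, Fin.sum_univ_one, hξ]
      push_cast
      ring
    have hbound : ∀ i : Fin n,
        |(Θ.mulVec (ivec (fun _ => (k:ℤ) * ξ : Fin 1 → ℤ)) -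
          ivec (fun i => if h : i ∈ S then Classical.choose (hkY i h) else (k:ℤ) * y i)) i|
          ≤ 1/(N:ℝ) := by
      intro i
      rw [Pi.sub_apply, key i]
      by_cases hi : i ∈ S
      · rw [show (ivec (fun i => if h : i ∈ S then Classical.choose (hkY i h)
            else (k:ℤ) * y i) i) = ((Classical.choose (hkY i hi) : ℤ) : ℝ) by
            simp [ivec, dif_pos hi]]
        exact Classical.choose_spec (hkY i hi)
      · rw [show (ivec (fun i => if h : i ∈ S then Classical.choose (hkY i h)
            else (k:ℤ) * y i) i) = (k:ℝ) * (y i : ℝ) by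
            simp [ivec, dif_neg hi]]
        have : (k:ℝ) * β i - (k:ℝ) * (y i) = k * (β i - y i) := by ring
        rw [this, abs_mul, abs_of_nonneg (le_of_lt hk0R)]
        have hzi : (K:ℝ) * z i ≤ 1/N := by
          rw [hS] at hi
          simp only [Finset.mem_filter, Finset.mem_univ, true_and, not_lt] at hi
          exact hi
        calc (k:ℝ) * |β i - y i| = (k:ℝ) * z i := by rw [hz]
          _ ≤ (K:ℝ) * z i := mul_le_mul_of_nonneg_right hkKR (hz0 i)
          _ ≤ 1/N := hzi
    refine le_trans ((pi_norm_le_iff_of_nonneg (by positivity)).2 fun i => hbound i) ?_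
    -- 1/N ≤ T^(-δ)
    have h1N : 1/(N:ℝ) ≤ 2 * t ^ (-(γ/n)) := by
      have hpos : (0:ℝ) < t ^ (γ/n) := Real.rpow_pos_of_pos ht0 _
      have h5 : 1/(N:ℝ) ≤ 2 / t ^ (γ/n) := by
        rw [div_le_div_iff₀ hN0R hpos]; linarith
      calc 1/(N:ℝ) ≤ 2 / t ^ (γ/n) := h5
        _ = 2 * t ^ (-(γ/n)) := by rw [Real.rpow_neg ht0.le, div_eq_mul_inv]
    have hfin : 2 * t ^ (-(γ/n)) ≤ T ^ (-δ) := by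
      have h1 : t ^ (-(γ/n)) = T ^ (-(c * γ / n)) := by
        rw [htdef, ← Real.rpow_mul hT0.le]
        congr 1
        ring
      have h2 : T ^ (-δ) = T ^ (-(c*γ/n)) * T ^ e := by
        rw [← Real.rpow_add hT0]
        congr 1
        rw [he]; ring
      rw [h1, h2, mul_comm ((T:ℝ) ^ (-(c*γ/n))) (T ^ e)]
      exact mul_le_mul_of_nonneg_right hTe (Real.rpow_pos_of_pos hT0 _).le
    exact le_trans h1N hfin

section Glue
variable {n m : ℕ} {Θ : Matrix (Fin n) (Fin m) ℝ}

lemma ord_to_mult_s15 (hn : 0 < n) (Θ : Matrix (Fin n) (Fin 1) ℝ) {γ : ℝ}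
    (H : UnifOrdApprox n 1 Θ γ) : UnifMultApprox n 1 Θ γ := by
  have hnR : (0:ℝ) < n := by exact_mod_cast hn
  filter_upwards [H, eventually_ge_atTop (1:ℝ)] with t ht ht1
  obtain ⟨x, y, h0, h1, h2⟩ := ht
  refine ⟨x, y, h0, ?_, ?_⟩
  · have hle : |((x 0 : ℤ):ℝ)| ≤ t := by
      have := norm_le_pi_norm (ivec x) 0
      rw [Real.norm_eq_abs] at this
      exact le_trans this h1
    have : Pigeo' (ivec x) = max 1 |((x 0 : ℤ):ℝ)| := by
      simp [Pigeo', ivec]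
    rw [this]
    exact max_le ht1 hle
  · set w := Θ.mulVec (ivec x) - ivec y with hw
    have hwn : (0:ℝ) ≤ ‖w‖ := norm_nonneg _
    have hprod : ∏ i, |w i| ≤ ‖w‖ ^ (n : ℕ) := by
      have : ∏ i, |w i| ≤ ∏ _i : Fin n, ‖w‖ := by
        apply Finset.prod_le_prod (fun i _ => abs_nonneg _)
        intro i _
        have := norm_le_pi_norm w i
        rwa [Real.norm_eq_abs] at this
      simpa [Finset.prod_const, Finset.card_univ] using this
    have : Pigeo w ≤ ‖w‖ := by
      unfold Pigeo
      calc (∏ i, |w i|) ^ ((1:ℝ)/n) ≤ (‖w‖ ^ (n:ℕ)) ^ ((1:ℝ)/n) :=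
            Real.rpow_le_rpow (Finset.prod_nonneg fun i _ => abs_nonneg _) hprod
              (by positivity)
        _ = ‖w‖ := by
            rw [← Real.rpow_natCast ‖w‖ n, ← Real.rpow_mul hwn]
            rw [show (n:ℝ) * ((1:ℝ)/n) = 1 by field_simp, Real.rpow_one]
    exact le_trans this h2

lemma malpha_lt {γ : ℝ} (h : (γ : EReal) < malpha n m Θ) : UnifMultApprox n m Θ γ := by
  rw [malpha, lt_sSup_iff] at h
  obtain ⟨b, hb, hlt⟩ := h
  obtain ⟨γ', rfl, hγ'⟩ := hb
  exact mult_mono (by exact_mod_cast hlt.le) hγ'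

lemma oalpha_ge {c : ℝ} (h : ∀ δ : ℝ, δ < c → UnifOrdApprox n m Θ δ) :
    (c : EReal) ≤ oalpha n m Θ := by
  by_contra hlt
  push_neg at hlt
  obtain ⟨r, hr1, hr2⟩ := EReal.exists_between_coe_real hlt
  have : (r : EReal) ≤ oalpha n m Θ :=
    le_sSup ⟨r, rfl, h r (by exact_mod_cast hr2)⟩
  exact absurd (lt_of_le_of_lt this hr1) (lt_irrefl _)

end Glue

/-- Corollary 9: for m = 1, α_×(Θ) ≥ α(Θ) ≥ (n α_×(Θ) − 1)/(n(n−1) α_×(Θ) + n² − n + 1),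
where for α_×(Θ) = +∞ the lower bound is read as 1/(n(n−1)) if n ≥ 2, and as +∞ if n = 1. -/
theorem oalpha_between_malpha (n : ℕ) (hn : 0 < n)
    (Θ : Matrix (Fin n) (Fin 1) ℝ) :
    malpha n 1 Θ ≥ oalpha n 1 Θ ∧
    (malpha n 1 Θ ≠ ⊤ →
      oalpha n 1 Θ ≥ ((((n : ℝ) * (malpha n 1 Θ).toReal - 1) /
        ((n : ℝ) * ((n : ℝ) - 1) * (malpha n 1 Θ).toReal + (n : ℝ)^2 - n + 1) : ℝ) : EReal)) ∧
    (malpha n 1 Θ = ⊤ → n = 1 → oalpha n 1 Θ = ⊤) ∧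
    (malpha n 1 Θ = ⊤ → 2 ≤ n →
      oalpha n 1 Θ ≥ (((1 : ℝ) / ((n : ℝ) * ((n : ℝ) - 1)) : ℝ) : EReal)) := by
  have hn1 : (1:ℝ) ≤ n := by exact_mod_cast hn
  have hnR : (0:ℝ) < n := by linarith
  have hOzero : ((0:ℝ) : EReal) ≤ oalpha n 1 Θ :=
    le_sSup ⟨0, rfl, ord_zero hn Θ⟩
  have hMzero : ((0:ℝ) : EReal) ≤ malpha n 1 Θ :=
    le_sSup ⟨0, rfl, mult_zero hn Θ⟩
  refine ⟨?_, ?_, ?_, ?_⟩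
  · -- malpha ≥ oalpha
    apply sSup_le_sSup
    rintro e ⟨γ, rfl, hγ⟩
    exact ⟨γ, rfl, ord_to_mult_s15 hn Θ hγ⟩
  · -- finite case
    intro htop
    set a : ℝ := (malpha n 1 Θ).toReal with ha
    have hbot : malpha n 1 Θ ≠ ⊥ := by
      intro h
      rw [h] at hMzero
      exact absurd hMzero (by simp)
    have hma : malpha n 1 Θ = (a : EReal) := (EReal.coe_toReal htop hbot).symm
    have ha0 : 0 ≤ a := by
      rw [hma] at hMzero
      exact_mod_cast hMzero
    set D : ℝ := (n : ℝ) * ((n : ℝ) - 1) * a + (n : ℝ)^2 - n + 1 with hD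
    have hD0 : 0 < D := by
      nlinarith [mul_nonneg (mul_nonneg hnR.le (sub_nonneg.2 hn1)) ha0,
        mul_nonneg hnR.le (sub_nonneg.2 hn1)]
    rcases le_or_gt ((n:ℝ) * a) 1 with hle | hgt
    · -- f ≤ 0
      have hf : ((n : ℝ) * a - 1) / D ≤ 0 :=
        div_nonpos_iff.2 (Or.inr ⟨by linarith, hD0.le⟩)
      refine le_trans ?_ hOzero
      exact_mod_cast hf
    · -- main transference case
      set γ : ℝ := a - 1/(2*(n:ℝ)) with hγdef
      have hγ0 : 0 < γ := by
        rw [hγdef, sub_pos, div_lt_iff₀ (by positivity : (0:ℝ) < 2*(n:ℝ))]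
        nlinarith
      have hγa : γ < a := by
        rw [hγdef]
        have : 0 < 1/(2*(n:ℝ)) := by positivity
        linarith
      have hmult : UnifMultApprox n 1 Θ γ :=
        malpha_lt (by rw [hma]; exact_mod_cast hγa)
      set g : ℝ := γ / ((n:ℝ) + ((n:ℝ) - 1) * γ) with hg
      have hdγ : 0 < (n:ℝ) + ((n:ℝ) - 1) * γ := by
        nlinarith [mul_nonneg (sub_nonneg.2 hn1) hγ0.le]
      have hOg : (g : EReal) ≤ oalpha n 1 Θ := by
        apply oalpha_ge
        intro δ hδ
        rcases le_or_gt δ 0 with h0 | h0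
        · exact ord_mono h0 (ord_zero hn Θ)
        · exact transfer_s15 n hn Θ γ hγ0 hmult δ h0 (by rw [← hg]; exact hδ)
      have hfg : ((n : ℝ) * a - 1) / D ≤ g := by
        rw [hg, div_le_div_iff₀ hD0 hdγ]
        have key : γ * D = ((n:ℝ)*a - 1) * ((n:ℝ) + ((n:ℝ)-1)*γ) + (n:ℝ)/2 := by
          rw [hD, hγdef]; field_simp; ring
        clear_value D γ g
        linarith
      refine le_trans ?_ hOg
      exact_mod_cast hfg
  · -- n = 1, top case
    intro htop hone
    subst hone
    have hall : ∀ r : ℝ, (r : EReal) ≤ oalpha 1 1 Θ := by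
      intro r
      set γ : ℝ := max r 1 with hγdef
      have hγ0 : (0:ℝ) < γ := lt_of_lt_of_le one_pos (le_max_right _ _)
      have hmult : UnifMultApprox 1 1 Θ γ := malpha_lt (htop ▸ EReal.coe_lt_top γ)
      have : (γ : EReal) ≤ oalpha 1 1 Θ := by
        apply oalpha_ge
        intro δ hδ
        rcases le_or_gt δ 0 with h0 | h0
        · exact ord_mono h0 (ord_zero one_pos Θ)
        · refine transfer_s15 1 one_pos Θ γ hγ0 hmult δ h0 ?_
          convert hδ using 1
          norm_num
      refine le_trans ?_ this
      exact_mod_cast le_max_left r 1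
    by_contra hne
    have hbot : oalpha 1 1 Θ ≠ ⊥ := by
      intro h
      rw [h] at hOzero
      exact absurd hOzero (by simp)
    have heq : oalpha 1 1 Θ = ((oalpha 1 1 Θ).toReal : EReal) :=
      (EReal.coe_toReal hne hbot).symm
    have := hall ((oalpha 1 1 Θ).toReal + 1)
    rw [heq] at this
    have : (oalpha 1 1 Θ).toReal + 1 ≤ (oalpha 1 1 Θ).toReal := by exact_mod_cast this
    linarith
  · -- n ≥ 2, top case
    intro htop hn2
    have hn2R : (2:ℝ) ≤ n := by exact_mod_cast hn2
    set γ : ℝ := (n : ℝ) with hγdef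
    have hγ0 : (0:ℝ) < γ := hnR
    have hmult : UnifMultApprox n 1 Θ γ := malpha_lt (htop ▸ EReal.coe_lt_top γ)
    have hdγ : 0 < (n:ℝ) + ((n:ℝ) - 1) * γ := by nlinarith
    have hcg : (1:ℝ) / ((n:ℝ) * ((n:ℝ) - 1)) ≤ γ / ((n:ℝ) + ((n:ℝ) - 1) * γ) := by
      rw [div_le_div_iff₀ (by nlinarith) hdγ]
      rw [hγdef]
      nlinarith
    have : ((((1:ℝ) / ((n:ℝ) * ((n:ℝ) - 1))) : ℝ) : EReal) ≤ oalpha n 1 Θ := by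
      apply oalpha_ge
      intro δ hδ
      rcases le_or_gt δ 0 with h0 | h0
      · exact ord_mono h0 (ord_zero hn Θ)
      · exact transfer_s15 n hn Θ γ hγ0 hmult δ h0 (lt_of_lt_of_le hδ hcg)
    exact this
end
end
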